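/- arXiv:1201.3500 — 7 statements merged into one kernel-verified Lean document; each statement's English description precedes it below -/
import Mathlib

section
/- The operator Φ_t has a unique fixed point f_t = (f_{t,1}, f_{t,2}) in B(I, ℝ²); moreover f_t is continuous on I and satisfies f_t(x_i) = (y_i, z_i) for every i = 0, 1, …, N. -/
open Set

/-- The affine contractive homeomorphism `L n` mapping `I = [x 0, x N]` onto the
`n`-th subinterval `[x n, x (n+1)]`: `L n u = a_n u + b_n`. -/
noncomputable def LMap {N : ℕ} (x : Fin (N + 1) → ℝ) (n : Fin N) (u : ℝ) : ℝ :=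
  ((x n.succ - x n.castSucc) / (x (Fin.last N) - x 0)) * u +
    (x (Fin.last N) * x n.castSucc - x 0 * x n.succ) / (x (Fin.last N) - x 0)

noncomputable def LInv {N : ℕ} (x : Fin (N + 1) → ℝ) (n : Fin N) (v : ℝ) : ℝ :=
  (x (Fin.last N) - x 0) * (v - x n.castSucc) / (x n.succ - x n.castSucc) + x 0

variable {N : ℕ}

lemma hab (hN : 1 ≤ N) {x : Fin (N + 1) → ℝ} (hx : StrictMono x) : x 0 < x (Fin.last N) :=
  hx (by rw [Fin.lt_def]; simp [Fin.last]; omega)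

lemma hdn {x : Fin (N + 1) → ℝ} (hx : StrictMono x) (n : Fin N) :
    x n.castSucc < x n.succ := hx Fin.castSucc_lt_succ

lemma LMap_left (hN : 1 ≤ N) {x : Fin (N + 1) → ℝ} (hx : StrictMono x) (n : Fin N) :
    LMap x n (x 0) = x n.castSucc := by
  have h1 : x (Fin.last N) - x 0 ≠ 0 := sub_ne_zero.2 (hab hN hx).ne'
  unfold LMap; field_simp; ring

lemma LMap_right (hN : 1 ≤ N) {x : Fin (N + 1) → ℝ} (hx : StrictMono x) (n : Fin N) :
    LMap x n (x (Fin.last N)) = x n.succ := by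
  have h1 : x (Fin.last N) - x 0 ≠ 0 := sub_ne_zero.2 (hab hN hx).ne'
  unfold LMap; field_simp; ring

lemma LMap_smono (hN : 1 ≤ N) {x : Fin (N + 1) → ℝ} (hx : StrictMono x) (n : Fin N) :
    StrictMono (LMap x n) := by
  intro u v huv
  have h1 : (0:ℝ) < (x n.succ - x n.castSucc) / (x (Fin.last N) - x 0) :=
    div_pos (sub_pos.2 (hdn hx n)) (sub_pos.2 (hab hN hx))
  unfold LMap
  have := mul_lt_mul_of_pos_left huv h1
  linarith

lemma LMap_mem (hN : 1 ≤ N) {x : Fin (N + 1) → ℝ} (hx : StrictMono x) (n : Fin N)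
    {u : ℝ} (hu : u ∈ Icc (x 0) (x (Fin.last N))) :
    LMap x n u ∈ Icc (x n.castSucc) (x n.succ) := by
  constructor
  · rw [← LMap_left hN hx n]; exact (LMap_smono hN hx n).monotone hu.1
  · rw [← LMap_right hN hx n]; exact (LMap_smono hN hx n).monotone hu.2

lemma LInv_LMap (hN : 1 ≤ N) {x : Fin (N + 1) → ℝ} (hx : StrictMono x) (n : Fin N) (u : ℝ) :
    LInv x n (LMap x n u) = u := by
  have h1 : x (Fin.last N) - x 0 ≠ 0 := sub_ne_zero.2 (hab hN hx).ne'
  have h2 : x n.succ - x n.castSucc ≠ 0 := sub_ne_zero.2 (hdn hx n).ne'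
  unfold LInv LMap; field_simp; ring

lemma LMap_LInv (hN : 1 ≤ N) {x : Fin (N + 1) → ℝ} (hx : StrictMono x) (n : Fin N) (v : ℝ) :
    LMap x n (LInv x n v) = v := by
  have h1 : x (Fin.last N) - x 0 ≠ 0 := sub_ne_zero.2 (hab hN hx).ne'
  have h2 : x n.succ - x n.castSucc ≠ 0 := sub_ne_zero.2 (hdn hx n).ne'
  unfold LInv LMap; field_simp; ring

lemma LInv_left {x : Fin (N + 1) → ℝ} (hx : StrictMono x) (n : Fin N) :
    LInv x n (x n.castSucc) = x 0 := by
  have h2 : x n.succ - x n.castSucc ≠ 0 := sub_ne_zero.2 (hdn hx n).ne'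
  unfold LInv; field_simp; ring

lemma LInv_right {x : Fin (N + 1) → ℝ} (hx : StrictMono x) (n : Fin N) :
    LInv x n (x n.succ) = x (Fin.last N) := by
  have h2 : x n.succ - x n.castSucc ≠ 0 := sub_ne_zero.2 (hdn hx n).ne'
  unfold LInv; field_simp; ring

lemma LInv_mono (hN : 1 ≤ N) {x : Fin (N + 1) → ℝ} (hx : StrictMono x) (n : Fin N) :
    Monotone (LInv x n) := by
  intro u v huv
  by_contra h
  push_neg at h
  have := LMap_smono hN hx n h
  rw [LMap_LInv hN hx, LMap_LInv hN hx] at this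
  exact absurd huv (not_le.2 this)

lemma LInv_mem (hN : 1 ≤ N) {x : Fin (N + 1) → ℝ} (hx : StrictMono x) (n : Fin N)
    {v : ℝ} (hv : v ∈ Icc (x n.castSucc) (x n.succ)) :
    LInv x n v ∈ Icc (x 0) (x (Fin.last N)) := by
  constructor
  · rw [← LInv_left hx n]; exact LInv_mono hN hx n hv.1
  · rw [← LInv_right hx n]; exact LInv_mono hN hx n hv.2

lemma LInv_cont {x : Fin (N + 1) → ℝ} (n : Fin N) : Continuous (LInv x n) := by
  unfold LInv; fun_prop

lemma exists_piece (hN : 1 ≤ N) {x : Fin (N + 1) → ℝ} (hx : StrictMono x)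
    {v : ℝ} (hv : v ∈ Icc (x 0) (x (Fin.last N))) :
    ∃ n : Fin N, v ∈ Icc (x n.castSucc) (x n.succ) := by
  classical
  have hSne : (Finset.univ.filter (fun i : Fin (N+1) => x i ≤ v)).Nonempty :=
    ⟨0, by simp [hv.1]⟩
  obtain ⟨i, himem, himax⟩ := Finset.exists_max_image
    (Finset.univ.filter (fun i : Fin (N+1) => x i ≤ v)) (fun i : Fin (N+1) => (i : ℕ)) hSne
  rw [Finset.mem_filter] at himem
  have hxi : x i ≤ v := himem.2
  by_cases hiN : (i : ℕ) < N
  · refine ⟨⟨i, hiN⟩, ?_, ?_⟩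
    · have hc : (⟨(i:ℕ), hiN⟩ : Fin N).castSucc = i := by ext; simp
      rw [hc]; exact hxi
    · by_contra h
      push_neg at h
      have hmem : ((⟨(i:ℕ), hiN⟩ : Fin N).succ) ∈
          Finset.univ.filter (fun i : Fin (N+1) => x i ≤ v) := by
        rw [Finset.mem_filter]; exact ⟨Finset.mem_univ _, h.le⟩
      have := himax _ hmem
      simp [Fin.succ] at this
  · have hilast : i = Fin.last N := by ext; simp [Fin.last]; have := i.isLt; omega
    have hvlast : v = x (Fin.last N) := le_antisymm hv.2 (hilast ▸ hxi)
    refine ⟨⟨N-1, by omega⟩, ?_, ?_⟩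
    · rw [hvlast]; exact hx.monotone (by rw [Fin.le_def]; simp [Fin.last])
    · rw [hvlast]; exact le_of_eq (by congr 1; ext; simp [Fin.last]; omega)

lemma continuousOn_union_closed {f : ℝ → ℝ} {s t : Set ℝ}
    (hs : IsClosed s) (ht : IsClosed t) (hfs : ContinuousOn f s) (hft : ContinuousOn f t) :
    ContinuousOn f (s ∪ t) := by
  intro w hw
  have h1 : ContinuousWithinAt f s w := by
    by_cases h : w ∈ s
    · exact hfs w h
    · exact continuousWithinAt_of_notMem_closure (by rwa [hs.closure_eq])
  have h2 : ContinuousWithinAt f t w := by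
    by_cases h : w ∈ t
    · exact hft w h
    · exact continuousWithinAt_of_notMem_closure (by rwa [ht.closure_eq])
  exact h1.union h2

lemma continuousOn_finset_biUnion {ι : Type*} (s : Finset ι) (t : ι → Set ℝ)
    (f : ℝ → ℝ) (hcl : ∀ i, IsClosed (t i)) (hf : ∀ i, ContinuousOn f (t i)) :
    ContinuousOn f (⋃ i ∈ s, t i) := by
  classical
  refine Finset.induction_on s (by simp) ?_
  intro a s' ha ih
  rw [Finset.set_biUnion_insert]
  exact continuousOn_union_closed (hcl a)
    (Set.Finite.isClosed_biUnion s'.finite_toSet fun i _ => hcl i) (hf a) ih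

variable {x : Fin (N + 1) → ℝ}

/-- the candidate value of `Φ g` on the `n`-th subinterval -/
noncomputable def piece (hle : x 0 ≤ x (Fin.last N)) (c : Fin N → ℝ) (r : Fin N → ℝ → ℝ)
    (g : C(↥(Icc (x 0) (x (Fin.last N))), ℝ)) (n : Fin N) (v : ℝ) : ℝ :=
  c n * g (projIcc _ _ hle (LInv x n v)) +
    (Icc (x 0) (x (Fin.last N))).restrict (r n) (projIcc _ _ hle (LInv x n v))

lemma piece_cont (hle : x 0 ≤ x (Fin.last N)) (c : Fin N → ℝ) (r : Fin N → ℝ → ℝ)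
    (hr : ∀ n, ContinuousOn (r n) (Icc (x 0) (x (Fin.last N))))
    (g : C(↥(Icc (x 0) (x (Fin.last N))), ℝ)) (n : Fin N) :
    Continuous (piece hle c r g n) := by
  have hq : Continuous fun v => projIcc (x 0) (x (Fin.last N)) hle (LInv x n v) :=
    continuous_projIcc.comp (LInv_cont n)
  exact (continuous_const.mul (g.continuous.comp hq)).add ((hr n).restrict.comp hq)

lemma piece_knot0 (hN : 1 ≤ N) (hx : StrictMono x) (c : Fin N → ℝ) (r : Fin N → ℝ → ℝ)
    (w : Fin (N+1) → ℝ)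
    (h0 : ∀ n : Fin N, c n * w 0 + r n (x 0) = w n.castSucc)
    (g : C(↥(Icc (x 0) (x (Fin.last N))), ℝ))
    (hg0 : g ⟨x 0, le_refl _, (hab hN hx).le⟩ = w 0) (n : Fin N) :
    piece (hab hN hx).le c r g n (x n.castSucc) = w n.castSucc := by
  have h1 : LInv x n (x n.castSucc) = x 0 := LInv_left hx n
  have h2 : projIcc (x 0) (x (Fin.last N)) (hab hN hx).le (x 0) =
      ⟨x 0, le_refl _, (hab hN hx).le⟩ := projIcc_of_mem _ _
  rw [piece, h1, h2, hg0]
  show c n * w 0 + r n (x 0) = w n.castSucc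
  exact h0 n

lemma piece_knotN (hN : 1 ≤ N) (hx : StrictMono x) (c : Fin N → ℝ) (r : Fin N → ℝ → ℝ)
    (w : Fin (N+1) → ℝ)
    (hNn : ∀ n : Fin N, c n * w (Fin.last N) + r n (x (Fin.last N)) = w n.succ)
    (g : C(↥(Icc (x 0) (x (Fin.last N))), ℝ))
    (hgb : g ⟨x (Fin.last N), (hab hN hx).le, le_refl _⟩ = w (Fin.last N)) (n : Fin N) :
    piece (hab hN hx).le c r g n (x n.succ) = w n.succ := by
  have h1 : LInv x n (x n.succ) = x (Fin.last N) := LInv_right hx n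
  have h2 : projIcc (x 0) (x (Fin.last N)) (hab hN hx).le (x (Fin.last N)) =
      ⟨x (Fin.last N), (hab hN hx).le, le_refl _⟩ := projIcc_of_mem _ _
  rw [piece, h1, h2, hgb]
  show c n * w (Fin.last N) + r n (x (Fin.last N)) = w n.succ
  exact hNn n

lemma piece_wd (hN : 1 ≤ N) (hx : StrictMono x) (c : Fin N → ℝ) (r : Fin N → ℝ → ℝ)
    (w : Fin (N+1) → ℝ)
    (h0 : ∀ n : Fin N, c n * w 0 + r n (x 0) = w n.castSucc)
    (hNn : ∀ n : Fin N, c n * w (Fin.last N) + r n (x (Fin.last N)) = w n.succ)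
    (g : C(↥(Icc (x 0) (x (Fin.last N))), ℝ))
    (hg0 : g ⟨x 0, le_refl _, (hab hN hx).le⟩ = w 0)
    (hgb : g ⟨x (Fin.last N), (hab hN hx).le, le_refl _⟩ = w (Fin.last N))
    {n m : Fin N} {v : ℝ} (hvn : v ∈ Icc (x n.castSucc) (x n.succ))
    (hvm : v ∈ Icc (x m.castSucc) (x m.succ)) :
    piece (hab hN hx).le c r g n v = piece (hab hN hx).le c r g m v := by
  rcases Nat.lt_trichotomy (n : ℕ) (m : ℕ) with h | h | h
  · -- n < m : v = x n.succ = x m.castSucc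
    have hle : (n.succ : Fin (N+1)) ≤ m.castSucc := by
      rw [Fin.le_def]; simp; omega
    have hv1 : v = x n.succ :=
      le_antisymm hvn.2 (le_trans (le_trans (hx.monotone hle) hvm.1) (le_refl v))
    have hv2 : v = x m.castSucc :=
      le_antisymm (hv1 ▸ (hx.monotone hle)) hvm.1
    have hidx : n.succ = m.castSucc := hx.injective (by rw [← hv1, ← hv2])
    rw [hv1, piece_knotN hN hx c r w hNn g hgb n, show x n.succ = x m.castSucc from
      congrArg x hidx, piece_knot0 hN hx c r w h0 g hg0 m, ← hidx]
  · have : n = m := Fin.ext h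
    rw [this]
  · have hle : (m.succ : Fin (N+1)) ≤ n.castSucc := by
      rw [Fin.le_def]; simp; omega
    have hv1 : v = x m.succ :=
      le_antisymm hvm.2 (le_trans (le_trans (hx.monotone hle) hvn.1) (le_refl v))
    have hv2 : v = x n.castSucc :=
      le_antisymm (hv1 ▸ (hx.monotone hle)) hvn.1
    have hidx : m.succ = n.castSucc := hx.injective (by rw [← hv1, ← hv2])
    rw [hv1, piece_knotN hN hx c r w hNn g hgb m, show x m.succ = x n.castSucc from
      congrArg x hidx, piece_knot0 hN hx c r w h0 g hg0 n, ← hidx]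

/-- the raw operator -/
noncomputable def PhiRaw (hle : x 0 ≤ x (Fin.last N)) (c : Fin N → ℝ) (r : Fin N → ℝ → ℝ)
    (w : Fin (N+1) → ℝ) (g : C(↥(Icc (x 0) (x (Fin.last N))), ℝ)) (v : ℝ) : ℝ :=
  if h : ∃ n : Fin N, v ∈ Icc (x n.castSucc) (x n.succ) then piece hle c r g h.choose v
  else w 0

lemma PhiRaw_eq (hN : 1 ≤ N) (hx : StrictMono x) (c : Fin N → ℝ) (r : Fin N → ℝ → ℝ)
    (w : Fin (N+1) → ℝ)
    (h0 : ∀ n : Fin N, c n * w 0 + r n (x 0) = w n.castSucc)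
    (hNn : ∀ n : Fin N, c n * w (Fin.last N) + r n (x (Fin.last N)) = w n.succ)
    (g : C(↥(Icc (x 0) (x (Fin.last N))), ℝ))
    (hg0 : g ⟨x 0, le_refl _, (hab hN hx).le⟩ = w 0)
    (hgb : g ⟨x (Fin.last N), (hab hN hx).le, le_refl _⟩ = w (Fin.last N))
    {n : Fin N} {v : ℝ} (hvn : v ∈ Icc (x n.castSucc) (x n.succ)) :
    PhiRaw (hab hN hx).le c r w g v = piece (hab hN hx).le c r g n v := by
  have hex : ∃ n : Fin N, v ∈ Icc (x n.castSucc) (x n.succ) := ⟨n, hvn⟩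
  rw [PhiRaw, dif_pos hex]
  exact piece_wd hN hx c r w h0 hNn g hg0 hgb hex.choose_spec hvn

lemma PhiRaw_contOn (hN : 1 ≤ N) (hx : StrictMono x) (c : Fin N → ℝ) (r : Fin N → ℝ → ℝ)
    (hr : ∀ n, ContinuousOn (r n) (Icc (x 0) (x (Fin.last N))))
    (w : Fin (N+1) → ℝ)
    (h0 : ∀ n : Fin N, c n * w 0 + r n (x 0) = w n.castSucc)
    (hNn : ∀ n : Fin N, c n * w (Fin.last N) + r n (x (Fin.last N)) = w n.succ)
    (g : C(↥(Icc (x 0) (x (Fin.last N))), ℝ))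
    (hg0 : g ⟨x 0, le_refl _, (hab hN hx).le⟩ = w 0)
    (hgb : g ⟨x (Fin.last N), (hab hN hx).le, le_refl _⟩ = w (Fin.last N)) :
    ContinuousOn (PhiRaw (hab hN hx).le c r w g) (Icc (x 0) (x (Fin.last N))) := by
  have hsub : Icc (x 0) (x (Fin.last N)) ⊆
      ⋃ n ∈ (Finset.univ : Finset (Fin N)), Icc (x n.castSucc) (x n.succ) := by
    intro v hv
    obtain ⟨n, hn⟩ := exists_piece hN hx hv
    exact Set.mem_biUnion (Finset.mem_univ n) hn
  refine ContinuousOn.mono ?_ hsub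
  refine continuousOn_finset_biUnion _ _ _ (fun n => isClosed_Icc) (fun n => ?_)
  exact ((piece_cont (hab hN hx).le c r hr g n).continuousOn).congr
    (fun v hv => PhiRaw_eq hN hx c r w h0 hNn g hg0 hgb hv)

set_option maxHeartbeats 2000000 in
lemma key (hN : 1 ≤ N) (hx : StrictMono x)
    (c : Fin N → ℝ) (hc : ∀ n, |c n| < 1)
    (r : Fin N → ℝ → ℝ) (hr : ∀ n, ContinuousOn (r n) (Icc (x 0) (x (Fin.last N))))
    (w : Fin (N+1) → ℝ)
    (h0 : ∀ n : Fin N, c n * w 0 + r n (x 0) = w n.castSucc)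
    (hNn : ∀ n : Fin N, c n * w (Fin.last N) + r n (x (Fin.last N)) = w n.succ) :
    ∃ f : ℝ → ℝ,
      ContinuousOn f (Icc (x 0) (x (Fin.last N))) ∧
      (∀ i, f (x i) = w i) ∧
      (∀ n : Fin N, ∀ u ∈ Icc (x 0) (x (Fin.last N)), f (LMap x n u) = c n * f u + r n u) ∧
      (∀ g : ℝ → ℝ, (∃ M, ∀ u ∈ Icc (x 0) (x (Fin.last N)), |g u| ≤ M) →
        (∀ n : Fin N, ∀ u ∈ Icc (x 0) (x (Fin.last N)), g (LMap x n u) = c n * g u + r n u) →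
        EqOn g f (Icc (x 0) (x (Fin.last N)))) := by
  classical
  have hlt : x 0 < x (Fin.last N) := hab hN hx
  have hle : x 0 ≤ x (Fin.last N) := hlt.le
  set ea : ↥(Icc (x 0) (x (Fin.last N))) := ⟨x 0, le_refl _, hle⟩ with hea
  set eb : ↥(Icc (x 0) (x (Fin.last N))) := ⟨x (Fin.last N), hle, le_refl _⟩ with heb
  set X : Set C(↥(Icc (x 0) (x (Fin.last N))), ℝ) :=
    {g | g ea = w 0 ∧ g eb = w (Fin.last N)} with hXdef
  -- X is closed and nonempty
  have hXclosed : IsClosed X := by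
    have : X = (fun g : C(↥(Icc (x 0) (x (Fin.last N))), ℝ) => g ea) ⁻¹' {w 0} ∩
        (fun g : C(↥(Icc (x 0) (x (Fin.last N))), ℝ) => g eb) ⁻¹' {w (Fin.last N)} := by
      ext g; simp [hXdef]
    rw [this]
    exact (isClosed_singleton.preimage (continuous_eval_const ea)).inter
      (isClosed_singleton.preimage (continuous_eval_const eb))
  have hline : Continuous fun q : ↥(Icc (x 0) (x (Fin.last N))) =>
      w 0 + (w (Fin.last N) - w 0) * ((q : ℝ) - x 0) / (x (Fin.last N) - x 0) := by
    fun_prop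
  haveI hXne : Nonempty ↥X := by
    refine ⟨⟨⟨_, hline⟩, ?_, ?_⟩⟩
    · show w 0 + (w (Fin.last N) - w 0) * ((ea : ℝ) - x 0) / (x (Fin.last N) - x 0) = w 0
      rw [hea]; simp
    · show w 0 + (w (Fin.last N) - w 0) * ((eb : ℝ) - x 0) / (x (Fin.last N) - x 0) =
        w (Fin.last N)
      rw [heb]
      have hne : x (Fin.last N) - x 0 ≠ 0 := sub_ne_zero.2 hlt.ne'
      field_simp
      ring
  haveI : CompleteSpace ↥X := hXclosed.completeSpace_coe
  -- the contraction operator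
  have hsub : ∀ n : Fin N, Icc (x n.castSucc) (x n.succ) ⊆ Icc (x 0) (x (Fin.last N)) :=
    fun n => Icc_subset_Icc (hx.monotone (Fin.zero_le _)) (hx.monotone (Fin.le_last _))
  have n0mem : x 0 ∈ Icc (x (⟨0, hN⟩ : Fin N).castSucc) (x (⟨0, hN⟩ : Fin N).succ) := by
    have hc0 : (⟨0, hN⟩ : Fin N).castSucc = 0 := by ext; simp
    rw [hc0]
    exact ⟨le_refl _, (hx.monotone (Fin.zero_le _))⟩
  have nlsucc : (⟨N - 1, by omega⟩ : Fin N).succ = Fin.last N := by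
    ext; simp [Fin.last]; omega
  have nbmem : x (Fin.last N) ∈
      Icc (x (⟨N - 1, by omega⟩ : Fin N).castSucc) (x (⟨N - 1, by omega⟩ : Fin N).succ) := by
    rw [nlsucc]
    exact ⟨hx.monotone (Fin.le_last _), le_refl _⟩
  set Phi : ↥X → ↥X := fun g =>
    ⟨⟨(Icc (x 0) (x (Fin.last N))).restrict (PhiRaw hle c r w g.1),
      (PhiRaw_contOn hN hx c r hr w h0 hNn g.1 g.2.1 g.2.2).restrict⟩, by
        constructor
        · show PhiRaw hle c r w g.1 (x 0) = w 0
          rw [PhiRaw_eq hN hx c r w h0 hNn g.1 g.2.1 g.2.2 n0mem]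
          have hc0 : (⟨0, hN⟩ : Fin N).castSucc = 0 := by ext; simp
          calc piece hle c r g.1 (⟨0, hN⟩ : Fin N) (x 0)
              = piece hle c r g.1 (⟨0, hN⟩ : Fin N) (x (⟨0, hN⟩ : Fin N).castSucc) := by
                rw [hc0]
            _ = w (⟨0, hN⟩ : Fin N).castSucc := piece_knot0 hN hx c r w h0 g.1 g.2.1 _
            _ = w 0 := by rw [hc0]
        · show PhiRaw hle c r w g.1 (x (Fin.last N)) = w (Fin.last N)
          rw [PhiRaw_eq hN hx c r w h0 hNn g.1 g.2.1 g.2.2 nbmem]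
          calc piece hle c r g.1 (⟨N - 1, by omega⟩ : Fin N) (x (Fin.last N))
              = piece hle c r g.1 (⟨N - 1, by omega⟩ : Fin N)
                  (x (⟨N - 1, by omega⟩ : Fin N).succ) := by rw [nlsucc]
            _ = w (⟨N - 1, by omega⟩ : Fin N).succ := piece_knotN hN hx c r w hNn g.1 g.2.2 _
            _ = w (Fin.last N) := by rw [nlsucc]⟩ with hPhi
  -- the contraction constant
  haveI : Nonempty (Fin N) := ⟨⟨0, hN⟩⟩
  set Kr : ℝ := Finset.univ.sup' Finset.univ_nonempty (fun n : Fin N => |c n|) with hKr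
  have hKrn : ∀ n : Fin N, |c n| ≤ Kr := fun n => Finset.le_sup' (fun n : Fin N => |c n|) (Finset.mem_univ n)
  have hKr0 : 0 ≤ Kr := le_trans (abs_nonneg _) (hKrn ⟨0, hN⟩)
  have hKr1 : Kr < 1 := by
    rw [hKr, Finset.sup'_lt_iff]
    exact fun n _ => hc n
  set K : NNReal := ⟨Kr, hKr0⟩ with hK
  have hdistp : ∀ (g g' : ↥X) (q : ↥(Icc (x 0) (x (Fin.last N)))),
      dist (((Phi g).1 : C(_, ℝ)) q) (((Phi g').1 : C(_, ℝ)) q) ≤ Kr * dist g g' := by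
    intro g g' q
    obtain ⟨n, hn⟩ := exists_piece hN hx q.2
    show dist (PhiRaw hle c r w g.1 q) (PhiRaw hle c r w g'.1 q) ≤ Kr * dist g g'
    rw [PhiRaw_eq hN hx c r w h0 hNn g.1 g.2.1 g.2.2 hn,
      PhiRaw_eq hN hx c r w h0 hNn g'.1 g'.2.1 g'.2.2 hn]
    rw [piece, piece, Real.dist_eq]
    have heq : c n * g.1 (projIcc _ _ hle (LInv x n q)) +
        (Icc (x 0) (x (Fin.last N))).restrict (r n) (projIcc _ _ hle (LInv x n q)) -
        (c n * g'.1 (projIcc _ _ hle (LInv x n q)) +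
        (Icc (x 0) (x (Fin.last N))).restrict (r n) (projIcc _ _ hle (LInv x n q))) =
        c n * (g.1 (projIcc _ _ hle (LInv x n q)) - g'.1 (projIcc _ _ hle (LInv x n q))) := by
      ring
    rw [heq, abs_mul]
    have h1 : |g.1 (projIcc _ _ hle (LInv x n q)) - g'.1 (projIcc _ _ hle (LInv x n q))| ≤
        dist g g' := by
      rw [← Real.dist_eq]
      calc dist (g.1 (projIcc _ _ hle (LInv x n q))) (g'.1 (projIcc _ _ hle (LInv x n q)))
          ≤ dist g.1 g'.1 := ContinuousMap.dist_apply_le_dist _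
        _ = dist g g' := (Subtype.dist_eq g g').symm
    exact mul_le_mul (hKrn n) h1 (abs_nonneg _) hKr0
  have hlip : LipschitzWith K Phi := by
    apply LipschitzWith.of_dist_le_mul
    intro g g'
    have hKco : (K : ℝ) = Kr := rfl
    rw [hKco, Subtype.dist_eq]
    exact (ContinuousMap.dist_le (mul_nonneg hKr0 dist_nonneg)).mpr (hdistp g g')
  have hcontr : ContractingWith K Phi := by
    constructor
    · show (K : NNReal) < 1
      rw [← NNReal.coe_lt_coe]
      exact hKr1
    · exact hlip
  -- the fixed point
  set fS : ↥X := ContractingWith.fixedPoint Phi hcontr with hfS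
  have hfix : Phi fS = fS := hcontr.fixedPoint_isFixedPt
  set F : C(↥(Icc (x 0) (x (Fin.last N))), ℝ) := fS.1 with hFdef
  have hF0 : F ea = w 0 := fS.2.1
  have hFb : F eb = w (Fin.last N) := fS.2.2
  have hFeq : ∀ v, v ∈ Icc (x 0) (x (Fin.last N)) → PhiRaw hle c r w F v = F (projIcc _ _ hle v) := by
    intro v hv
    have h1 : ((Phi fS).1 : C(_, ℝ)) (projIcc _ _ hle v) = F (projIcc _ _ hle v) := by
      rw [hfix]
    calc PhiRaw hle c r w F v
        = PhiRaw hle c r w F ((projIcc _ _ hle v : ℝ)) := by rw [projIcc_of_mem hle hv]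
      _ = ((Phi fS).1 : C(_, ℝ)) (projIcc _ _ hle v) := rfl
      _ = F (projIcc _ _ hle v) := h1
  set f : ℝ → ℝ := fun v => F (projIcc _ _ hle v) with hf
  have hfmem : ∀ v (hv : v ∈ Icc (x 0) (x (Fin.last N))), f v = F ⟨v, hv⟩ := by
    intro v hv
    rw [hf]
    simp only [projIcc_of_mem hle hv]
  -- the functional equation
  have hfunc : ∀ n : Fin N, ∀ u ∈ Icc (x 0) (x (Fin.last N)),
      f (LMap x n u) = c n * f u + r n u := by
    intro n u hu
    have hvn : LMap x n u ∈ Icc (x n.castSucc) (x n.succ) := LMap_mem hN hx n hu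
    have hvI : LMap x n u ∈ Icc (x 0) (x (Fin.last N)) := hsub n hvn
    calc f (LMap x n u) = F (projIcc _ _ hle (LMap x n u)) := rfl
      _ = PhiRaw hle c r w F (LMap x n u) := (hFeq _ hvI).symm
      _ = piece hle c r F n (LMap x n u) := PhiRaw_eq hN hx c r w h0 hNn F hF0 hFb hvn
      _ = c n * F (projIcc _ _ hle u) +
          (Icc (x 0) (x (Fin.last N))).restrict (r n) (projIcc _ _ hle u) := by
            rw [piece, LInv_LMap hN hx]
      _ = c n * f u + r n u := by
            rw [projIcc_of_mem hle hu, hfmem u hu]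
            rfl
  -- values at the knots
  have hknots : ∀ i, f (x i) = w i := by
    intro i
    induction i using Fin.cases with
    | zero =>
        have : f (x 0) = F ea := hfmem (x 0) ⟨le_refl _, hle⟩
        rw [this, hF0]
    | succ j =>
        have hb : x (Fin.last N) ∈ Icc (x 0) (x (Fin.last N)) := ⟨hle, le_refl _⟩
        have h1 : f (x j.succ) = c j * f (x (Fin.last N)) + r j (x (Fin.last N)) := by
          rw [← LMap_right hN hx j]
          exact hfunc j _ hb
        have h2 : f (x (Fin.last N)) = w (Fin.last N) := by
          have : f (x (Fin.last N)) = F eb := hfmem _ hb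
          rw [this, hFb]
        rw [h1, h2, hNn j]
  refine ⟨f, F.continuous.comp continuous_projIcc |>.continuousOn, hknots, hfunc, ?_⟩
  -- uniqueness
  intro g hgbdd hgfix
  obtain ⟨M, hM⟩ := hgbdd
  obtain ⟨C, hC⟩ := (isCompact_Icc).exists_bound_of_continuousOn
    (F.continuous.comp continuous_projIcc |>.continuousOn :
      ContinuousOn f (Icc (x 0) (x (Fin.last N))))
  set S : Set ℝ := (fun v => |g v - f v|) '' Icc (x 0) (x (Fin.last N)) with hS
  have hSne : S.Nonempty := ⟨|g (x 0) - f (x 0)|, ⟨x 0, ⟨le_refl _, hle⟩, rfl⟩⟩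
  have hSbdd : BddAbove S := by
    refine ⟨M + C, ?_⟩
    rintro s ⟨v, hv, rfl⟩
    have := hM v hv
    have h2 := hC v hv
    rw [Real.norm_eq_abs] at h2
    calc |g v - f v| ≤ |g v| + |f v| := abs_sub _ _
      _ ≤ M + C := add_le_add (hM v hv) h2
  set d : ℝ := sSup S with hd
  have hd0 : 0 ≤ d := le_csSup_of_le hSbdd ⟨x 0, ⟨le_refl _, hle⟩, rfl⟩ (abs_nonneg _)
  have hdle : ∀ v ∈ Icc (x 0) (x (Fin.last N)), |g v - f v| ≤ d :=
    fun v hv => le_csSup hSbdd ⟨v, hv, rfl⟩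
  have hstep : ∀ v ∈ Icc (x 0) (x (Fin.last N)), |g v - f v| ≤ Kr * d := by
    intro v hv
    obtain ⟨n, hn⟩ := exists_piece hN hx hv
    have huI : LInv x n v ∈ Icc (x 0) (x (Fin.last N)) := LInv_mem hN hx n hn
    have hvu : v = LMap x n (LInv x n v) := (LMap_LInv hN hx n v).symm
    have hg1 : g v = c n * g (LInv x n v) + r n (LInv x n v) := by
      nth_rewrite 1 [hvu]; exact hgfix n _ huI
    have hf1 : f v = c n * f (LInv x n v) + r n (LInv x n v) := by
      nth_rewrite 1 [hvu]; exact hfunc n _ huI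
    rw [hg1, hf1]
    have heq : c n * g (LInv x n v) + r n (LInv x n v) -
        (c n * f (LInv x n v) + r n (LInv x n v)) =
        c n * (g (LInv x n v) - f (LInv x n v)) := by ring
    rw [heq, abs_mul]
    exact mul_le_mul (hKrn n) (hdle _ huI) (abs_nonneg _) hKr0
  have hdK : d ≤ Kr * d := by
    apply csSup_le hSne
    rintro s ⟨v, hv, rfl⟩
    exact hstep v hv
  have hdz : d ≤ 0 := by nlinarith
  intro v hv
  have := hdle v hv
  have habs : |g v - f v| ≤ 0 := le_trans this hdz
  have : g v - f v = 0 := abs_nonpos_iff.mp habs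
  linarith

/-- `f` is a fixed point of the operator `Φ_t`, i.e. for every `n` and every
`u ∈ I`, `f (L_n u) = F_n (u, f u)`, where
`F_n (u, y, z) = (α_n y + β_n z + p_n u, γ_n z + q_n u)` and the linear polynomials
`p_n u = (t n).1.1 * u + (t n).1.2`, `q_n u = (t n).2.1 * u + (t n).2.2`. -/
def FixEq {N : ℕ} (x : Fin (N + 1) → ℝ) (α β γ : Fin N → ℝ)
    (t : Fin N → (ℝ × ℝ) × (ℝ × ℝ)) (f : ℝ → ℝ × ℝ) : Prop :=
  ∀ n : Fin N, ∀ u ∈ Icc (x 0) (x (Fin.last N)),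
    f (LMap x n u) =
      (α n * (f u).1 + β n * (f u).2 + ((t n).1.1 * u + (t n).1.2),
       γ n * (f u).2 + ((t n).2.1 * u + (t n).2.2))

/-- `f` belongs to `B(I, ℝ²)`, the set of bounded functions on `I = [x 0, x N]`. -/
def BddOnI {N : ℕ} (x : Fin (N + 1) → ℝ) (f : ℝ → ℝ × ℝ) : Prop :=
  ∃ M : ℝ, ∀ u ∈ Icc (x 0) (x (Fin.last N)), ‖f u‖ ≤ M

/-- The operator `Φ_t` has a unique fixed point `f_t` in `B(I, ℝ²)`; moreover `f_t`
is continuous on `I` and satisfies `f_t (x i) = (y i, z i)` for every `i`. -/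
theorem stmt0 {N : ℕ} (hN : 1 ≤ N) (x : Fin (N + 1) → ℝ) (hx : StrictMono x)
    (α β γ : Fin N → ℝ) (hα : ∀ n, |α n| < 1) (hγ : ∀ n, |γ n| < 1)
    (hβγ : ∀ n, |β n| + |γ n| < 1)
    (y z : Fin (N + 1) → ℝ) (t : Fin N → (ℝ × ℝ) × (ℝ × ℝ))
    (hjoin0 : ∀ n : Fin N,
      α n * y 0 + β n * z 0 + ((t n).1.1 * x 0 + (t n).1.2) = y n.castSucc ∧
      γ n * z 0 + ((t n).2.1 * x 0 + (t n).2.2) = z n.castSucc)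
    (hjoinN : ∀ n : Fin N,
      α n * y (Fin.last N) + β n * z (Fin.last N) +
          ((t n).1.1 * x (Fin.last N) + (t n).1.2) = y n.succ ∧
      γ n * z (Fin.last N) + ((t n).2.1 * x (Fin.last N) + (t n).2.2) = z n.succ) :
    ∃ f : ℝ → ℝ × ℝ,
      BddOnI x f ∧ FixEq x α β γ t f ∧
      ContinuousOn f (Icc (x 0) (x (Fin.last N))) ∧
      (∀ i, f (x i) = (y i, z i)) ∧
      (∀ g : ℝ → ℝ × ℝ, BddOnI x g → FixEq x α β γ t g →
        EqOn g f (Icc (x 0) (x (Fin.last N)))) := by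
  classical
  -- second component
  obtain ⟨f2, hf2cont, hf2knots, hf2eq, hf2uniq⟩ := key hN hx γ hγ
    (fun n u => (t n).2.1 * u + (t n).2.2) (fun n => by fun_prop) z
    (fun n => (hjoin0 n).2) (fun n => (hjoinN n).2)
  -- first component
  obtain ⟨f1, hf1cont, hf1knots, hf1eq, hf1uniq⟩ := key hN hx α hα
    (fun n u => β n * f2 u + ((t n).1.1 * u + (t n).1.2))
    (fun n => (continuousOn_const.mul hf2cont).add (by fun_prop)) y
    (fun n => by
      have h2 := hf2knots 0
      show α n * y 0 + (β n * f2 (x 0) + ((t n).1.1 * x 0 + (t n).1.2)) = y n.castSucc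
      rw [h2]
      linarith [(hjoin0 n).1])
    (fun n => by
      have h2 := hf2knots (Fin.last N)
      show α n * y (Fin.last N) +
        (β n * f2 (x (Fin.last N)) + ((t n).1.1 * x (Fin.last N) + (t n).1.2)) = y n.succ
      rw [h2]
      linarith [(hjoinN n).1])
  refine ⟨fun u => (f1 u, f2 u), ?_, ?_, hf1cont.prodMk hf2cont, ?_, ?_⟩
  · -- bounded
    obtain ⟨C1, hC1⟩ := isCompact_Icc.exists_bound_of_continuousOn hf1cont
    obtain ⟨C2, hC2⟩ := isCompact_Icc.exists_bound_of_continuousOn hf2cont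
    refine ⟨max C1 C2, fun u hu => ?_⟩
    rw [Prod.norm_def]
    exact max_le_max (hC1 u hu) (hC2 u hu)
  · -- fixed-point equation
    intro n u hu
    have h1 : f1 (LMap x n u) = α n * f1 u + (β n * f2 u + ((t n).1.1 * u + (t n).1.2)) :=
      hf1eq n u hu
    have h2 : f2 (LMap x n u) = γ n * f2 u + ((t n).2.1 * u + (t n).2.2) := hf2eq n u hu
    refine Prod.ext ?_ ?_
    · show f1 (LMap x n u) = α n * f1 u + β n * f2 u + ((t n).1.1 * u + (t n).1.2)
      rw [h1]; ring
    · exact h2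
  · -- knots
    intro i
    show (f1 (x i), f2 (x i)) = (y i, z i)
    rw [hf1knots i, hf2knots i]
  · -- uniqueness
    intro g hgbdd hgfix
    obtain ⟨M, hM⟩ := hgbdd
    have hg2 : ∀ n : Fin N, ∀ u ∈ Icc (x 0) (x (Fin.last N)),
        (g (LMap x n u)).2 = γ n * (g u).2 + ((t n).2.1 * u + (t n).2.2) :=
      fun n u hu => congrArg Prod.snd (hgfix n u hu)
    have E2 : EqOn (fun u => (g u).2) f2 (Icc (x 0) (x (Fin.last N))) := by
      apply hf2uniq
      · exact ⟨M, fun u hu => by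
          calc |(g u).2| = ‖(g u).2‖ := (Real.norm_eq_abs _).symm
            _ ≤ ‖g u‖ := norm_snd_le _
            _ ≤ M := hM u hu⟩
      · exact hg2
    have hg1 : ∀ n : Fin N, ∀ u ∈ Icc (x 0) (x (Fin.last N)),
        (g (LMap x n u)).1 = α n * (g u).1 + (β n * f2 u + ((t n).1.1 * u + (t n).1.2)) := by
      intro n u hu
      have h1 : (g (LMap x n u)).1 =
          α n * (g u).1 + β n * (g u).2 + ((t n).1.1 * u + (t n).1.2) :=
        congrArg Prod.fst (hgfix n u hu)
      have h2' : (g u).2 = f2 u := E2 hu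
      rw [h1, h2']
      show α n * (g u).1 + β n * f2 u + _ = _
      ring
    have E1 : EqOn (fun u => (g u).1) f1 (Icc (x 0) (x (Fin.last N))) := by
      apply hf1uniq
      · exact ⟨M, fun u hu => by
          calc |(g u).1| = ‖(g u).1‖ := (Real.norm_eq_abs _).symm
            _ ≤ ‖g u‖ := norm_fst_le _
            _ ≤ M := hM u hu⟩
      · exact hg1
    intro v hv
    exact Prod.ext (E1 hv) (E2 hv)
end

section
/- For every a ∈ ℝ and all t, s ∈ T, the function a f_t + f_s is the unique fixed point of Φ_{a t + s}; that is, f_{a t + s} = a f_t + f_s. Consequently the map Θ : T → B(I, ℝ²) defined by Θ(t) = f_t is linear. -/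
open Set

lemma cover_lemma {N : ℕ} (hN : 1 ≤ N) (x : Fin (N + 1) → ℝ) (hx : StrictMono x)
    {v : ℝ} (hv : v ∈ Icc (x 0) (x (Fin.last N))) :
    ∃ n : Fin N, ∃ u ∈ Icc (x 0) (x (Fin.last N)), LMap x n u = v := by
  classical
  have h0last : (0 : Fin (N + 1)) < Fin.last N := by
    rw [Fin.lt_def]; simp [Fin.last]; omega
  have hlen : 0 < x (Fin.last N) - x 0 := sub_pos.mpr (hx h0last)
  -- find the subinterval containing v
  set P : ℕ → Prop := fun i => ∃ h : i < N, x ⟨i, Nat.lt_succ_of_lt h⟩ ≤ v with hP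
  have hP0 : P 0 := by
    refine ⟨hN, ?_⟩
    have : (⟨0, Nat.lt_succ_of_lt hN⟩ : Fin (N + 1)) = 0 := rfl
    rw [this]; exact hv.1
  set k := Nat.findGreatest P N with hk
  have hPk : P k := Nat.findGreatest_spec (Nat.zero_le N) hP0
  obtain ⟨hkN, hxk⟩ := hPk
  set n : Fin N := ⟨k, hkN⟩ with hn
  have hcast : (n.castSucc : Fin (N + 1)) = ⟨k, Nat.lt_succ_of_lt hkN⟩ := rfl
  have hxc : x n.castSucc ≤ v := by rw [hcast]; exact hxk
  have hxs : v ≤ x n.succ := by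
    by_cases hkN' : k + 1 < N
    · have hng : ¬ P (k + 1) :=
        Nat.findGreatest_is_greatest (Nat.lt_succ_self k) (le_of_lt hkN')
      have hsucc : (n.succ : Fin (N + 1)) = ⟨k + 1, Nat.lt_succ_of_lt hkN'⟩ := rfl
      rw [hsucc]
      by_contra hlt
      push_neg at hlt
      exact hng ⟨hkN', le_of_lt hlt⟩
    · have hkeq : k + 1 = N := by omega
      have hsucc : (n.succ : Fin (N + 1)) = Fin.last N := by
        ext; simp [Fin.last, hn, hkeq]
      rw [hsucc]; exact hv.2
  have hsub : 0 < x n.succ - x n.castSucc := by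
    have : n.castSucc < n.succ := Fin.castSucc_lt_succ
    exact sub_pos.mpr (hx this)
  set u : ℝ := x 0 + (v - x n.castSucc) / (x n.succ - x n.castSucc) * (x (Fin.last N) - x 0)
    with hu
  have hratio0 : 0 ≤ (v - x n.castSucc) / (x n.succ - x n.castSucc) :=
    div_nonneg (by linarith) (le_of_lt hsub)
  have hratio1 : (v - x n.castSucc) / (x n.succ - x n.castSucc) ≤ 1 := by
    rw [div_le_one hsub]; linarith
  refine ⟨n, u, ⟨?_, ?_⟩, ?_⟩
  · have := mul_nonneg hratio0 (le_of_lt hlen)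
    rw [hu]; linarith
  · have := mul_le_mul_of_nonneg_right hratio1 (le_of_lt hlen)
    rw [hu]; linarith
  · rw [LMap, hu]
    field_simp
    ring
 
lemma uniq_lemma {N : ℕ} (hN : 1 ≤ N) (x : Fin (N + 1) → ℝ) (hx : StrictMono x)
    (α β γ : Fin N → ℝ) (hα : ∀ n, |α n| < 1) (hγ : ∀ n, |γ n| < 1)
    (hβγ : ∀ n, |β n| + |γ n| < 1)
    (t : Fin N → (ℝ × ℝ) × (ℝ × ℝ)) (g h : ℝ → ℝ × ℝ)
    (hgb : BddOnI x g) (hg : FixEq x α β γ t g)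
    (hhb : BddOnI x h) (hh : FixEq x α β γ t h) :
    EqOn g h (Icc (x 0) (x (Fin.last N))) := by
  classical
  obtain ⟨Mg, hMg⟩ := hgb
  obtain ⟨Mh, hMh⟩ := hhb
  set E : ℝ → ℝ := fun u => |(g u).1 - (h u).1| + |(g u).2 - (h u).2| with hE
  set M : ℝ := 2 * Mg + 2 * Mh with hM
  have hne : (Finset.univ : Finset (Fin N)).Nonempty := ⟨⟨0, hN⟩, Finset.mem_univ _⟩
  set c : ℝ := Finset.univ.sup' hne (fun n => max |α n| (|β n| + |γ n|)) with hc
  have hc1 : c < 1 := by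
    rw [hc, Finset.sup'_lt_iff]
    intro n _
    exact max_lt (hα n) (hβγ n)
  have hcα : ∀ n : Fin N, |α n| ≤ c := fun n =>
    le_trans (le_max_left _ _)
      (Finset.le_sup' (fun m => max |α m| (|β m| + |γ m|)) (Finset.mem_univ n))
  have hcβγ : ∀ n : Fin N, |β n| + |γ n| ≤ c := fun n =>
    le_trans (le_max_right _ _)
      (Finset.le_sup' (fun m => max |α m| (|β m| + |γ m|)) (Finset.mem_univ n))
  have hc0 : 0 ≤ c := le_trans (abs_nonneg _) (hcα ⟨0, hN⟩)
  have hEM : ∀ u ∈ Icc (x 0) (x (Fin.last N)), E u ≤ M := by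
    intro u hu
    have h1 : |(g u).1| ≤ Mg := le_trans (le_trans (Real.norm_eq_abs _ ▸ norm_fst_le (g u)) le_rfl) (hMg u hu)
    have h2 : |(g u).2| ≤ Mg := le_trans (le_trans (Real.norm_eq_abs _ ▸ norm_snd_le (g u)) le_rfl) (hMg u hu)
    have h3 : |(h u).1| ≤ Mh := le_trans (le_trans (Real.norm_eq_abs _ ▸ norm_fst_le (h u)) le_rfl) (hMh u hu)
    have h4 : |(h u).2| ≤ Mh := le_trans (le_trans (Real.norm_eq_abs _ ▸ norm_snd_le (h u)) le_rfl) (hMh u hu)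
    have := abs_sub ((g u).1) ((h u).1)
    have e1 : |(g u).1 - (h u).1| ≤ |(g u).1| + |(h u).1| := abs_sub _ _
    have e2 : |(g u).2 - (h u).2| ≤ |(g u).2| + |(h u).2| := abs_sub _ _
    rw [hE, hM]; dsimp only; linarith
  have key : ∀ k : ℕ, ∀ v ∈ Icc (x 0) (x (Fin.last N)), E v ≤ c ^ k * M := by
    intro k
    induction k with
    | zero => intro v hv; simpa using hEM v hv
    | succ k ih =>
      intro v hv
      obtain ⟨n, u, hu, hLu⟩ := cover_lemma hN x hx hv
      have eg := hg n u hu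
      have eh := hh n u hu
      have eg1 := congrArg Prod.fst eg
      have eg2 := congrArg Prod.snd eg
      have eh1 := congrArg Prod.fst eh
      have eh2 := congrArg Prod.snd eh
      dsimp only at eg1 eg2 eh1 eh2
      have d1 : (g v).1 - (h v).1 = α n * ((g u).1 - (h u).1) + β n * ((g u).2 - (h u).2) := by
        rw [← hLu, eg1, eh1]; ring
      have d2 : (g v).2 - (h v).2 = γ n * ((g u).2 - (h u).2) := by
        rw [← hLu, eg2, eh2]; ring
      have b1 : |(g v).1 - (h v).1| ≤ |α n| * |(g u).1 - (h u).1| + |β n| * |(g u).2 - (h u).2| := by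
        rw [d1]
        refine le_trans (abs_add_le _ _) ?_
        rw [abs_mul, abs_mul]
      have b2 : |(g v).2 - (h v).2| ≤ |γ n| * |(g u).2 - (h u).2| := by
        rw [d2, abs_mul]
      have hEu : E u ≤ c ^ k * M := ih u hu
      have habs1 : 0 ≤ |(g u).1 - (h u).1| := abs_nonneg _
      have habs2 : 0 ≤ |(g u).2 - (h u).2| := abs_nonneg _
      have hb : E v ≤ c * E u := by
        rw [hE]; dsimp only
        have hα' := hcα n
        have hβγ' := hcβγ n
        nlinarith [abs_nonneg (β n), abs_nonneg (γ n)]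
      calc E v ≤ c * E u := hb
        _ ≤ c * (c ^ k * M) := mul_le_mul_of_nonneg_left hEu hc0
        _ = c ^ (k + 1) * M := by ring
  intro v hv
  have hE0 : E v ≤ 0 := by
    have htend : Filter.Tendsto (fun k : ℕ => c ^ k * M) Filter.atTop (nhds 0) := by
      have := (tendsto_pow_atTop_nhds_zero_of_lt_one hc0 hc1).mul_const M
      simpa using this
    exact ge_of_tendsto' htend (fun k => key k v hv)
  have habs1 : 0 ≤ |(g v).1 - (h v).1| := abs_nonneg _
  have habs2 : 0 ≤ |(g v).2 - (h v).2| := abs_nonneg _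
  have e1 : |(g v).1 - (h v).1| = 0 := by rw [hE] at hE0; dsimp only at hE0; linarith
  have e2 : |(g v).2 - (h v).2| = 0 := by rw [hE] at hE0; dsimp only at hE0; linarith
  have e1' : (g v).1 = (h v).1 := by have := abs_eq_zero.mp e1; linarith
  have e2' : (g v).2 = (h v).2 := by have := abs_eq_zero.mp e2; linarith
  exact Prod.ext e1' e2'

/-- For every `a ∈ ℝ` and `t, s ∈ T`, the function `a • f_t + f_s` is the unique
fixed point of `Φ_{a • t + s}` (in `B(I, ℝ²)`), i.e. `f_{a • t + s} = a • f_t + f_s`;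
consequently `Θ : t ↦ f_t` is linear. -/
theorem stmt1 {N : ℕ} (hN : 1 ≤ N) (x : Fin (N + 1) → ℝ) (hx : StrictMono x)
    (α β γ : Fin N → ℝ) (hα : ∀ n, |α n| < 1) (hγ : ∀ n, |γ n| < 1)
    (hβγ : ∀ n, |β n| + |γ n| < 1)
    (a : ℝ) (t s : Fin N → (ℝ × ℝ) × (ℝ × ℝ)) (ft fs : ℝ → ℝ × ℝ)
    (hftb : BddOnI x ft) (hft : FixEq x α β γ t ft)
    (hfsb : BddOnI x fs) (hfs : FixEq x α β γ s fs) :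
    BddOnI x (a • ft + fs) ∧
    FixEq x α β γ (a • t + s) (a • ft + fs) ∧
    (∀ g : ℝ → ℝ × ℝ, BddOnI x g → FixEq x α β γ (a • t + s) g →
      EqOn g (a • ft + fs) (Icc (x 0) (x (Fin.last N)))) := by
  obtain ⟨Mt, hMt⟩ := hftb
  obtain ⟨Ms, hMs⟩ := hfsb
  have hbdd : BddOnI x (a • ft + fs) := by
    refine ⟨|a| * Mt + Ms, fun u hu => ?_⟩
    have : ‖(a • ft + fs) u‖ = ‖a • ft u + fs u‖ := rfl
    rw [this]
    calc ‖a • ft u + fs u‖ ≤ ‖a • ft u‖ + ‖fs u‖ := norm_add_le _ _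
      _ = |a| * ‖ft u‖ + ‖fs u‖ := by rw [norm_smul, Real.norm_eq_abs]
      _ ≤ |a| * Mt + Ms :=
        add_le_add (mul_le_mul_of_nonneg_left (hMt u hu) (abs_nonneg a)) (hMs u hu)
  have hfix : FixEq x α β γ (a • t + s) (a • ft + fs) := by
    intro n u hu
    have e1 := hft n u hu
    have e2 := hfs n u hu
    have e11 := congrArg Prod.fst e1
    have e12 := congrArg Prod.snd e1
    have e21 := congrArg Prod.fst e2
    have e22 := congrArg Prod.snd e2
    dsimp only at e11 e12 e21 e22
    have happ : ∀ w : ℝ, (a • ft + fs) w = (a * (ft w).1 + (fs w).1, a * (ft w).2 + (fs w).2) := by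
      intro w
      show a • ft w + fs w = _
      rw [Prod.ext_iff]
      constructor <;> simp [Prod.smul_fst, Prod.smul_snd, smul_eq_mul]
    have hts : ∀ m : Fin N, (a • t + s) m = a • t m + s m := fun m => rfl
    rw [happ, happ, hts]
    rw [Prod.ext_iff]
    constructor
    · show a * (ft (LMap x n u)).1 + (fs (LMap x n u)).1 = _
      rw [e11, e21]
      simp only [Prod.fst_add, Prod.snd_add, Prod.smul_fst, Prod.smul_snd, smul_eq_mul]
      ring
    · show a * (ft (LMap x n u)).2 + (fs (LMap x n u)).2 = _
      rw [e12, e22]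
      simp only [Prod.fst_add, Prod.snd_add, Prod.smul_fst, Prod.smul_snd, smul_eq_mul]
      ring
  exact ⟨hbdd, hfix, fun g hgb hg =>
    uniq_lemma hN x hx α β γ hα hγ hβγ (a • t + s) g (a • ft + fs) hgb hg hbdd hfix⟩
end

section
/- If the fixed point f_t is identically (0, 0) on I, then t = (0, …, 0), i.e., every p_n and q_n is the zero polynomial. Consequently the linear map Θ : T → B(I, ℝ²), Θ(t) = f_t, is injective. -/
open Set

/-- If the fixed point `f_t` is identically `(0,0)` on `I`, then `t = 0` (every
`p_n` and `q_n` is the zero polynomial); consequently the linear map `Θ : t ↦ f_t`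
is injective. -/
theorem stmt2 {N : ℕ} (hN : 1 ≤ N) (x : Fin (N + 1) → ℝ) (hx : StrictMono x)
    (α β γ : Fin N → ℝ) (hα : ∀ n, |α n| < 1) (hγ : ∀ n, |γ n| < 1)
    (hβγ : ∀ n, |β n| + |γ n| < 1)
    (t : Fin N → (ℝ × ℝ) × (ℝ × ℝ)) (ft : ℝ → ℝ × ℝ)
    (hftb : BddOnI x ft) (hft : FixEq x α β γ t ft)
    (hzero : ∀ u ∈ Icc (x 0) (x (Fin.last N)), ft u = 0) :
    t = 0 ∧
    (∀ (t' s' : Fin N → (ℝ × ℝ) × (ℝ × ℝ)) (ft' fs' : ℝ → ℝ × ℝ),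
      BddOnI x ft' → FixEq x α β γ t' ft' →
      BddOnI x fs' → FixEq x α β γ s' fs' →
      EqOn ft' fs' (Icc (x 0) (x (Fin.last N))) → t' = s') := by

  have hxx : x 0 < x (Fin.last N) := by
    apply hx
    simp only [Fin.lt_iff_val_lt_val, Fin.val_last, Fin.val_zero]
    omega
  have hne : x (Fin.last N) - x 0 ≠ 0 := sub_ne_zero.mpr hxx.ne'
  have key : ∀ (t' s' : Fin N → (ℝ × ℝ) × (ℝ × ℝ)) (f g : ℝ → ℝ × ℝ),
      FixEq x α β γ t' f → FixEq x α β γ s' g →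
      EqOn f g (Icc (x 0) (x (Fin.last N))) → t' = s' := by
    intro t' s' f g hf hg heq
    funext n
    have h0I : x 0 ∈ Icc (x 0) (x (Fin.last N)) := ⟨le_refl _, hxx.le⟩
    have hNI : x (Fin.last N) ∈ Icc (x 0) (x (Fin.last N)) := ⟨hxx.le, le_refl _⟩
    have hL0 : LMap x n (x 0) = x n.castSucc := by
      unfold LMap; field_simp; ring
    have hLN : LMap x n (x (Fin.last N)) = x n.succ := by
      unfold LMap; field_simp; ring
    have hcI : x n.castSucc ∈ Icc (x 0) (x (Fin.last N)) :=
      ⟨hx.monotone (Fin.zero_le _), hx.monotone (Fin.le_last _)⟩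
    have hsI : x n.succ ∈ Icc (x 0) (x (Fin.last N)) :=
      ⟨hx.monotone (Fin.zero_le _), hx.monotone (Fin.le_last _)⟩
    have e1 := hf n (x 0) h0I
    have e2 := hg n (x 0) h0I
    have e3 := hf n (x (Fin.last N)) hNI
    have e4 := hg n (x (Fin.last N)) hNI
    rw [hL0] at e1 e2
    rw [hLN] at e3 e4
    rw [heq hcI, heq h0I] at e1
    rw [heq hsI, heq hNI] at e3
    have A := e1.symm.trans e2
    have B := e3.symm.trans e4
    have A1 := congrArg Prod.fst A
    have A2 := congrArg Prod.snd A
    have B1 := congrArg Prod.fst B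
    have B2 := congrArg Prod.snd B
    simp only [Prod.fst, Prod.snd] at A1 A2 B1 B2
    have P0 : (t' n).1.1 * x 0 + (t' n).1.2 = (s' n).1.1 * x 0 + (s' n).1.2 := by
      linarith
    have PN : (t' n).1.1 * x (Fin.last N) + (t' n).1.2
        = (s' n).1.1 * x (Fin.last N) + (s' n).1.2 := by linarith
    have Q0 : (t' n).2.1 * x 0 + (t' n).2.2 = (s' n).2.1 * x 0 + (s' n).2.2 := by
      linarith
    have QN : (t' n).2.1 * x (Fin.last N) + (t' n).2.2
        = (s' n).2.1 * x (Fin.last N) + (s' n).2.2 := by linarith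
    have hp1 : (t' n).1.1 = (s' n).1.1 := by
      have h : ((t' n).1.1 - (s' n).1.1) * (x (Fin.last N) - x 0) = 0 := by
        linear_combination PN - P0
      rcases mul_eq_zero.mp h with h | h
      · linarith [sub_eq_zero.mp h]
      · exact absurd h hne
    have hq1 : (t' n).2.1 = (s' n).2.1 := by
      have h : ((t' n).2.1 - (s' n).2.1) * (x (Fin.last N) - x 0) = 0 := by
        linear_combination QN - Q0
      rcases mul_eq_zero.mp h with h | h
      · linarith [sub_eq_zero.mp h]
      · exact absurd h hne
    have hp2 : (t' n).1.2 = (s' n).1.2 := by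
      have := P0; rw [hp1] at this; linarith
    have hq2 : (t' n).2.2 = (s' n).2.2 := by
      have := Q0; rw [hq1] at this; linarith
    exact Prod.ext (Prod.ext hp1 hp2) (Prod.ext hq1 hq2)
  have hzeroFix : FixEq x α β γ 0 (fun _ => (0 : ℝ × ℝ)) := by
    intro n u hu
    simp [Prod.ext_iff]
  constructor
  · exact key t 0 ft (fun _ => 0) hft hzeroFix (fun u hu => hzero u hu)
  · intro t' s' ft' fs' _ hft' _ hfs' heq
    exact key t' s' ft' fs' hft' hfs' heq
end

section
/- Let f = (f_1, f_2) : I → ℝ² be continuous and suppose that for each i = 1,…,N the functions p_i(f) := f_1∘L_i − α_i f_1 − β_i f_2 and q_i(f) := f_2∘L_i − γ_i f_2 are linear polynomials on I. Then t(f) := ((p_1(f), q_1(f)), …, (p_N(f), q_N(f))) belongs to T and f_{t(f)} = f; in other words, every such continuous f is in the image of the map Θ : T → B(I, ℝ²), Θ(t) = f_t. -/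
open Set Filter Topology

/-- Let `f = (f₁, f₂)` be continuous on `I` and suppose that for each `n` the
functions `p_n(f) = f₁ ∘ L_n − α_n f₁ − β_n f₂` and `q_n(f) = f₂ ∘ L_n − γ_n f₂`
are linear polynomials on `I`.  Then `t(f) ∈ T` and `f_{t(f)} = f`; in particular
`f` is in the image of `Θ : t ↦ f_t`. -/
theorem stmt3 {N : ℕ} (hN : 1 ≤ N) (x : Fin (N + 1) → ℝ) (hx : StrictMono x)
    (α β γ : Fin N → ℝ) (hα : ∀ n, |α n| < 1) (hγ : ∀ n, |γ n| < 1)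
    (hβγ : ∀ n, |β n| + |γ n| < 1)
    (f₁ f₂ : ℝ → ℝ)
    (hc₁ : ContinuousOn f₁ (Icc (x 0) (x (Fin.last N))))
    (hc₂ : ContinuousOn f₂ (Icc (x 0) (x (Fin.last N))))
    (hp : ∀ n : Fin N, ∃ c d : ℝ, ∀ u ∈ Icc (x 0) (x (Fin.last N)),
      f₁ (LMap x n u) - α n * f₁ u - β n * f₂ u = c * u + d)
    (hq : ∀ n : Fin N, ∃ e h : ℝ, ∀ u ∈ Icc (x 0) (x (Fin.last N)),
      f₂ (LMap x n u) - γ n * f₂ u = e * u + h) :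
    ∃ t : Fin N → (ℝ × ℝ) × (ℝ × ℝ),
      FixEq x α β γ t (fun u => (f₁ u, f₂ u)) ∧
      (∀ g : ℝ → ℝ × ℝ, BddOnI x g → FixEq x α β γ t g →
        EqOn g (fun u => (f₁ u, f₂ u)) (Icc (x 0) (x (Fin.last N)))) := by
  classical
  have hab : x 0 < x (Fin.last N) := hx (by simp [Fin.lt_def, Fin.last]; omega)
  choose c d hcd using hp
  choose e h' hh using hq
  set t : Fin N → (ℝ × ℝ) × (ℝ × ℝ) := fun n => ((c n, d n), (e n, h' n)) with ht
  have hfix : FixEq x α β γ t (fun u => (f₁ u, f₂ u)) := by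
    intro n u hu
    show (f₁ (LMap x n u), f₂ (LMap x n u)) = _
    simp only [ht, Prod.mk.injEq]
    exact ⟨by linarith [hcd n u hu], by linarith [hh n u hu]⟩
  refine ⟨t, hfix, ?_⟩
  intro g hg hgfix
  -- surjectivity of the L maps onto I
  have hsurj : ∀ v ∈ Icc (x 0) (x (Fin.last N)),
      ∃ n : Fin N, ∃ u ∈ Icc (x 0) (x (Fin.last N)), LMap x n u = v := by
    intro v hv
    obtain ⟨n, hn1, hn2⟩ : ∃ n : Fin N, x n.castSucc ≤ v ∧ v ≤ x n.succ := by
      by_contra hcon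
      push_neg at hcon
      have key : ∀ k : Fin (N + 1), x k ≤ v := by
        intro k
        induction k using Fin.induction with
        | zero => exact hv.1
        | succ i ih => exact le_of_lt (hcon i ih)
      have hn : Fin.succ (⟨N - 1, by omega⟩ : Fin N) = Fin.last N := by
        ext; simp [Fin.last]; omega
      have := hcon ⟨N - 1, by omega⟩ (key _)
      rw [hn] at this
      exact absurd hv.2 (not_le.mpr this)
    have hlt : x n.castSucc < x n.succ := hx (Fin.castSucc_lt_succ : n.castSucc < n.succ)
    have hd1 : (0:ℝ) < x (Fin.last N) - x 0 := by linarith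
    have hd2 : (0:ℝ) < x n.succ - x n.castSucc := by linarith
    set r : ℝ := (v - x n.castSucc) / (x n.succ - x n.castSucc) with hr
    have hr0 : 0 ≤ r := div_nonneg (by linarith) (by linarith)
    have hr1 : r ≤ 1 := by rw [hr, div_le_one hd2]; linarith
    refine ⟨n, x 0 + r * (x (Fin.last N) - x 0), ⟨by nlinarith, by nlinarith⟩, ?_⟩
    have hrv : r * (x n.succ - x n.castSucc) = v - x n.castSucc := by
      rw [hr]; field_simp
    unfold LMap
    field_simp
    nlinarith [hrv]
  -- boundedness of the difference
  obtain ⟨Mg, hMg⟩ := hg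
  have hcf : ContinuousOn (fun u => (f₁ u, f₂ u)) (Icc (x 0) (x (Fin.last N))) :=
    hc₁.prodMk hc₂
  obtain ⟨Mf, hMf⟩ := (isCompact_Icc).exists_bound_of_continuousOn hcf
  set M := Mg + Mf with hM
  have hbound : ∀ v ∈ Icc (x 0) (x (Fin.last N)),
      |(g v).1 - f₁ v| ≤ M ∧ |(g v).2 - f₂ v| ≤ M := by
    intro v hv
    have h1 := hMg v hv
    have h2 := hMf v hv
    have n1 : |(g v).1| ≤ ‖g v‖ := by
      simpa [Real.norm_eq_abs] using norm_fst_le (g v)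
    have n2 : |(g v).2| ≤ ‖g v‖ := by
      simpa [Real.norm_eq_abs] using norm_snd_le (g v)
    have m1 : |f₁ v| ≤ ‖((f₁ v, f₂ v) : ℝ × ℝ)‖ := by
      simpa [Real.norm_eq_abs] using norm_fst_le ((f₁ v, f₂ v) : ℝ × ℝ)
    have m2 : |f₂ v| ≤ ‖((f₁ v, f₂ v) : ℝ × ℝ)‖ := by
      simpa [Real.norm_eq_abs] using norm_snd_le ((f₁ v, f₂ v) : ℝ × ℝ)
    constructor
    · calc |(g v).1 - f₁ v| ≤ |(g v).1| + |f₁ v| := abs_sub _ _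
        _ ≤ M := by rw [hM]; linarith
    · calc |(g v).2 - f₂ v| ≤ |(g v).2| + |f₂ v| := abs_sub _ _
        _ ≤ M := by rw [hM]; linarith
  have hne : (Finset.univ : Finset (Fin N)).Nonempty := ⟨⟨0, hN⟩, Finset.mem_univ _⟩
  -- generic pointwise contraction lemma
  have generic : ∀ (c₀ : ℝ), 0 ≤ c₀ → c₀ < 1 → ∀ (Δ : ℝ → ℝ),
      (∀ v ∈ Icc (x 0) (x (Fin.last N)), |Δ v| ≤ M) →
      (∀ n : Fin N, ∀ u ∈ Icc (x 0) (x (Fin.last N)), |Δ (LMap x n u)| ≤ c₀ * |Δ u|) →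
      ∀ v ∈ Icc (x 0) (x (Fin.last N)), Δ v = 0 := by
    intro c₀ hc0 hc1 Δ hΔM hΔc v hv
    have key : ∀ k : ℕ, ∀ v ∈ Icc (x 0) (x (Fin.last N)), |Δ v| ≤ c₀ ^ k * M := by
      intro k
      induction k with
      | zero => intro v hv; simpa using hΔM v hv
      | succ k ih =>
        intro v hv
        obtain ⟨n, u, hu, huv⟩ := hsurj v hv
        calc |Δ v| = |Δ (LMap x n u)| := by rw [huv]
          _ ≤ c₀ * |Δ u| := hΔc n u hu
          _ ≤ c₀ * (c₀ ^ k * M) := by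
              exact mul_le_mul_of_nonneg_left (ih u hu) hc0
          _ = c₀ ^ (k + 1) * M := by ring
    have htend : Tendsto (fun k : ℕ => c₀ ^ k * M) atTop (𝓝 0) := by
      have := tendsto_pow_atTop_nhds_zero_of_lt_one hc0 hc1
      simpa using this.mul_const M
    have hle : |Δ v| ≤ 0 :=
      ge_of_tendsto htend (Filter.Eventually.of_forall (fun k => key k v hv))
    have := abs_nonneg (Δ v)
    have : |Δ v| = 0 := le_antisymm hle (abs_nonneg _)
    exact abs_eq_zero.mp this
  -- second component
  set cγ : ℝ := Finset.univ.sup' hne (fun n => |γ n|) with hcγ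
  have hcγle : ∀ n, |γ n| ≤ cγ := fun n => Finset.le_sup' (fun n => |γ n|) (Finset.mem_univ n)
  have hcγ0 : 0 ≤ cγ := (abs_nonneg _).trans (hcγle ⟨0, hN⟩)
  have hcγ1 : cγ < 1 := (Finset.sup'_lt_iff hne).mpr (fun n _ => hγ n)
  have hzero2 : ∀ v ∈ Icc (x 0) (x (Fin.last N)), (g v).2 - f₂ v = 0 := by
    apply generic cγ hcγ0 hcγ1
    · intro v hv; exact (hbound v hv).2
    · intro n u hu
      have h1 := hgfix n u hu
      have h2 := hfix n u hu
      have e2g : (g (LMap x n u)).2 = γ n * (g u).2 + (e n * u + h' n) := by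
        rw [h1]
      have e2f : f₂ (LMap x n u) = γ n * f₂ u + (e n * u + h' n) := by
        have := congrArg Prod.snd h2; simpa [ht] using this
      have : (g (LMap x n u)).2 - f₂ (LMap x n u) = γ n * ((g u).2 - f₂ u) := by
        rw [e2g, e2f]; ring
      rw [this, abs_mul]
      exact mul_le_mul_of_nonneg_right (hcγle n) (abs_nonneg _)
  -- first component
  set cα : ℝ := Finset.univ.sup' hne (fun n => |α n|) with hcα
  have hcαle : ∀ n, |α n| ≤ cα := fun n => Finset.le_sup' (fun n => |α n|) (Finset.mem_univ n)
  have hcα0 : 0 ≤ cα := (abs_nonneg _).trans (hcαle ⟨0, hN⟩)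
  have hcα1 : cα < 1 := (Finset.sup'_lt_iff hne).mpr (fun n _ => hα n)
  have hzero1 : ∀ v ∈ Icc (x 0) (x (Fin.last N)), (g v).1 - f₁ v = 0 := by
    apply generic cα hcα0 hcα1
    · intro v hv; exact (hbound v hv).1
    · intro n u hu
      have h1 := hgfix n u hu
      have h2 := hfix n u hu
      have e1g : (g (LMap x n u)).1 = α n * (g u).1 + β n * (g u).2 + (c n * u + d n) := by
        rw [h1]
      have e1f : f₁ (LMap x n u) = α n * f₁ u + β n * f₂ u + (c n * u + d n) := by
        have := congrArg Prod.fst h2; simpa [ht] using this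
      have hz := hzero2 u hu
      have : (g (LMap x n u)).1 - f₁ (LMap x n u) = α n * ((g u).1 - f₁ u) := by
        rw [e1g, e1f]; linear_combination β n * hz
      rw [this, abs_mul]
      exact mul_le_mul_of_nonneg_right (hcαle n) (abs_nonneg _)
  intro v hv
  have z1 := hzero1 v hv
  have z2 := hzero2 v hv
  show g v = (f₁ v, f₂ v)
  ext
  · simp only []; linarith
  · simp only []; linarith
end

section
/- The map θ : ℝ^{N+1} × ℝ^{N+1} → S_0 that sends (y, z) = ((y_0,…,y_N), (z_0,…,z_N)) to f = (f_1, f_2), where f_1 is the unique CHFIF passing through the points (x_i, y_i) and f_2 is the unique AFIF passing through the points (x_i, z_i), i = 0,…,N, is a linear isomorphism; in particular, the dimension of the vector space S_0 equals 2(N+1). -/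
open Set

/-- The space `S₀` of pairs `f = (f₁, f₂)` where `f₁` is a CHFIF and `f₂` an AFIF
for some interpolation data over the fixed partition and parameters; members are
extended by `0` outside `I = [x 0, x N]`. -/
def S0set {N : ℕ} (x : Fin (N + 1) → ℝ) (α β γ : Fin N → ℝ) : Set (ℝ → ℝ × ℝ) :=
  {f | ContinuousOn f (Icc (x 0) (x (Fin.last N))) ∧
       (∀ u ∉ Icc (x 0) (x (Fin.last N)), f u = 0) ∧
       ∃ t : Fin N → (ℝ × ℝ) × (ℝ × ℝ), FixEq x α β γ t f}

namespace S4

variable {N : ℕ}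

section AB

noncomputable def LInv (x : Fin (N + 1) → ℝ) (n : Fin N) (v : ℝ) : ℝ :=
  (v - (x (Fin.last N) * x n.castSucc - x 0 * x n.succ) / (x (Fin.last N) - x 0)) /
    ((x n.succ - x n.castSucc) / (x (Fin.last N) - x 0))

lemma hd0 (hN : 1 ≤ N) (x : Fin (N + 1) → ℝ) (hx : StrictMono x) :
    x 0 < x (Fin.last N) := by
  apply hx
  rw [Fin.lt_iff_val_lt_val]
  simp [Fin.val_last]
  omega

variable (x : Fin (N + 1) → ℝ)

variable (hx : StrictMono x)
include hx

lemma hsub (n : Fin N) : x n.castSucc < x n.succ := hx (Fin.castSucc_lt_succ (i := n))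

lemma ha_pos (hN : 1 ≤ N) (n : Fin N) :
    0 < (x n.succ - x n.castSucc) / (x (Fin.last N) - x 0) :=
  div_pos (sub_pos.2 (hsub x hx n)) (sub_pos.2 (hd0 hN x hx))

lemma LMap_left (hN : 1 ≤ N) (n : Fin N) : LMap x n (x 0) = x n.castSucc := by
  have h := sub_pos.2 (hd0 hN x hx)
  unfold LMap
  field_simp
  ring

lemma LMap_right (hN : 1 ≤ N) (n : Fin N) : LMap x n (x (Fin.last N)) = x n.succ := by
  have h := sub_pos.2 (hd0 hN x hx)
  unfold LMap
  field_simp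
  ring

lemma LInv_LMap (hN : 1 ≤ N) (n : Fin N) (u : ℝ) : LInv x n (LMap x n u) = u := by
  have h1 : x (Fin.last N) - x 0 ≠ 0 := ne_of_gt (sub_pos.2 (hd0 hN x hx))
  have h2 : x n.succ - x n.castSucc ≠ 0 := ne_of_gt (sub_pos.2 (hsub x hx n))
  unfold LInv LMap
  field_simp
  ring

lemma LMap_LInv (hN : 1 ≤ N) (n : Fin N) (v : ℝ) : LMap x n (LInv x n v) = v := by
  have h1 : x (Fin.last N) - x 0 ≠ 0 := ne_of_gt (sub_pos.2 (hd0 hN x hx))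
  have h2 : x n.succ - x n.castSucc ≠ 0 := ne_of_gt (sub_pos.2 (hsub x hx n))
  unfold LInv LMap
  field_simp
  ring

lemma LMap_mono (hN : 1 ≤ N) (n : Fin N) {u v : ℝ} (h : u ≤ v) :
    LMap x n u ≤ LMap x n v := by
  have ha := ha_pos x hx hN n
  unfold LMap
  have := mul_le_mul_of_nonneg_left h ha.le
  linarith

lemma LMap_mem (hN : 1 ≤ N) (n : Fin N) {u : ℝ}
    (hu : u ∈ Icc (x 0) (x (Fin.last N))) :
    LMap x n u ∈ Icc (x n.castSucc) (x n.succ) := by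
  constructor
  · rw [← LMap_left x hx hN n]; exact LMap_mono x hx hN n hu.1
  · rw [← LMap_right x hx hN n]; exact LMap_mono x hx hN n hu.2

lemma In_subset (n : Fin N) :
    Icc (x n.castSucc) (x n.succ) ⊆ Icc (x 0) (x (Fin.last N)) :=
  Icc_subset_Icc (hx.monotone (Fin.zero_le _)) (hx.monotone (Fin.le_last _))

lemma LInv_mem (hN : 1 ≤ N) (n : Fin N) {v : ℝ}
    (hv : v ∈ Icc (x n.castSucc) (x n.succ)) :
    LInv x n v ∈ Icc (x 0) (x (Fin.last N)) := by
  have ha := ha_pos x hx hN n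
  have h1 : LInv x n (x n.castSucc) = x 0 := by
    rw [← LMap_left x hx hN n, LInv_LMap x hx hN]
  have h2 : LInv x n (x n.succ) = x (Fin.last N) := by
    rw [← LMap_right x hx hN n, LInv_LMap x hx hN]
  have hmono : ∀ {a b : ℝ}, a ≤ b → LInv x n a ≤ LInv x n b := by
    intro a b hab
    unfold LInv
    exact div_le_div_of_nonneg_right (by linarith) ha.le
  exact ⟨h1 ▸ hmono hv.1, h2 ▸ hmono hv.2⟩

omit hx in
lemma cover (hN : 1 ≤ N) {v : ℝ} (hv : v ∈ Icc (x 0) (x (Fin.last N))) :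
    ∃ n : Fin N, v ∈ Icc (x n.castSucc) (x n.succ) := by
  classical
  have hn0 : ((⟨0, hN⟩ : Fin N)).castSucc = (0 : Fin (N + 1)) := by
    apply Fin.ext; simp
  set S : Finset (Fin N) := Finset.univ.filter (fun n : Fin N => x n.castSucc ≤ v) with hS
  have hne : S.Nonempty := ⟨⟨0, hN⟩, by simp [hS, hn0, hv.1]⟩
  set n := S.max' hne with hn
  have hnmem : x n.castSucc ≤ v := by
    have := S.max'_mem hne
    simp [hS] at this
    exact this
  refine ⟨n, hnmem, ?_⟩
  by_contra h
  push_neg at h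
  by_cases hlast : n.succ = Fin.last N
  · exact absurd hv.2 (by rw [← hlast]; exact not_le.2 h)
  · obtain ⟨m, hm⟩ := Fin.exists_castSucc_eq.2 hlast
    have hmS : m ∈ S := by simp [hS, hm, h.le]
    have hle : m ≤ n := S.le_max' m hmS
    have : n < m := by
      rw [Fin.lt_iff_val_lt_val]
      have : m.castSucc.val = n.succ.val := by rw [hm]
      simp [Fin.val_succ] at this
      omega
    exact absurd hle (not_le.2 this)

lemma exists_pre (hN : 1 ≤ N) {v : ℝ} (hv : v ∈ Icc (x 0) (x (Fin.last N))) :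
    ∃ n : Fin N, ∃ u ∈ Icc (x 0) (x (Fin.last N)), LMap x n u = v := by
  obtain ⟨n, hn⟩ := cover x hN hv
  exact ⟨n, LInv x n v, LInv_mem x hx hN n hn, LMap_LInv x hx hN n v⟩


def Fap (α β γ : Fin N → ℝ) (t : Fin N → (ℝ × ℝ) × (ℝ × ℝ)) (n : Fin N) (u : ℝ)
    (p : ℝ × ℝ) : ℝ × ℝ :=
  (α n * p.1 + β n * p.2 + ((t n).1.1 * u + (t n).1.2),
   γ n * p.2 + ((t n).2.1 * u + (t n).2.2))

noncomputable def tmap (x : Fin (N + 1) → ℝ) (α β γ : Fin N → ℝ)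
    (y z : Fin (N + 1) → ℝ) (n : Fin N) : (ℝ × ℝ) × (ℝ × ℝ) :=
  (((( y n.succ - α n * y (Fin.last N) - β n * z (Fin.last N)) -
      (y n.castSucc - α n * y 0 - β n * z 0)) / (x (Fin.last N) - x 0),
    ((y n.castSucc - α n * y 0 - β n * z 0) * x (Fin.last N) -
      (y n.succ - α n * y (Fin.last N) - β n * z (Fin.last N)) * x 0) / (x (Fin.last N) - x 0)),
   (((z n.succ - γ n * z (Fin.last N)) - (z n.castSucc - γ n * z 0)) / (x (Fin.last N) - x 0),
    ((z n.castSucc - γ n * z 0) * x (Fin.last N) -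
      (z n.succ - γ n * z (Fin.last N)) * x 0) / (x (Fin.last N) - x 0)))

variable (x : Fin (N + 1) → ℝ) (α β γ : Fin N → ℝ) (y z : Fin (N + 1) → ℝ)

omit hx in
lemma tmap_evalA (hd : x 0 < x (Fin.last N)) (n : Fin N) :
    Fap α β γ (tmap x α β γ y z) n (x 0) (y 0, z 0) = (y n.castSucc, z n.castSucc) := by
  have h1 : x (Fin.last N) - x 0 ≠ 0 := ne_of_gt (sub_pos.2 hd)
  rw [Prod.ext_iff]
  constructor <;> (dsimp only [Fap, tmap]; field_simp; ring)

omit hx in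
lemma tmap_evalB (hd : x 0 < x (Fin.last N)) (n : Fin N) :
    Fap α β γ (tmap x α β γ y z) n (x (Fin.last N)) (y (Fin.last N), z (Fin.last N)) =
      (y n.succ, z n.succ) := by
  have h1 : x (Fin.last N) - x 0 ≠ 0 := ne_of_gt (sub_pos.2 hd)
  rw [Prod.ext_iff]
  constructor <;> (dsimp only [Fap, tmap]; field_simp; ring)


end AB

section Psi

variable {x : Fin (N + 1) → ℝ} {α β γ : Fin N → ℝ}

noncomputable def idx (hN : 1 ≤ N) (x : Fin (N + 1) → ℝ) (v : ℝ) : Fin N := by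
  classical
  exact if h : ∃ n : Fin N, v ∈ Icc (x n.castSucc) (x n.succ) then h.choose else ⟨0, hN⟩

lemma idx_mem (hN : 1 ≤ N) {v : ℝ} (hv : v ∈ Icc (x 0) (x (Fin.last N))) :
    v ∈ Icc (x (idx hN x v).castSucc) (x (idx hN x v).succ) := by
  have h := cover x hN hv
  unfold idx
  rw [dif_pos h]
  exact h.choose_spec

noncomputable def Psi (hN : 1 ≤ N) (x : Fin (N + 1) → ℝ) (α β γ : Fin N → ℝ)
    (t : Fin N → (ℝ × ℝ) × (ℝ × ℝ)) (g : ℝ → ℝ × ℝ) (v : ℝ) : ℝ × ℝ :=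
  if _h : v ∈ Icc (x 0) (x (Fin.last N)) then
    Fap α β γ t (idx hN x v) (LInv x (idx hN x v) v) (g (LInv x (idx hN x v) v)) else 0

lemma agree_aux (hN : 1 ≤ N) (hx : StrictMono x) (y z : Fin (N + 1) → ℝ) (g : ℝ → ℝ × ℝ)
    (hgB : g (x (Fin.last N)) = (y (Fin.last N), z (Fin.last N)))
    (hgA : g (x 0) = (y 0, z 0))
    {v : ℝ} {n m : Fin N} (hnm : n < m)
    (hn : v ∈ Icc (x n.castSucc) (x n.succ)) (hm : v ∈ Icc (x m.castSucc) (x m.succ)) :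
    Fap α β γ (tmap x α β γ y z) n (LInv x n v) (g (LInv x n v)) =
      Fap α β γ (tmap x α β γ y z) m (LInv x m v) (g (LInv x m v)) := by
  have hd := hd0 hN x hx
  have hsm : n.succ ≤ m.castSucc := by
    rw [Fin.le_def]
    simpa using hnm
  have h3 : x n.succ ≤ x m.castSucc := hx.monotone hsm
  have hv1 : v = x n.succ := le_antisymm hn.2 (h3.trans hm.1)
  have hv2 : v = x m.castSucc := le_antisymm (hn.2.trans h3) hm.1
  have heq : n.succ = m.castSucc := hx.injective (hv1 ▸ hv2)
  have e1 : LInv x n v = x (Fin.last N) := by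
    rw [hv1, ← LMap_right x hx hN n, LInv_LMap x hx hN]
  have e2 : LInv x m v = x 0 := by
    rw [hv2, ← LMap_left x hx hN m, LInv_LMap x hx hN]
  rw [e1, e2, hgA, hgB, tmap_evalA x α β γ y z hd m, tmap_evalB x α β γ y z hd n, heq]

lemma Psi_eq (hN : 1 ≤ N) (hx : StrictMono x) (y z : Fin (N + 1) → ℝ) (g : ℝ → ℝ × ℝ)
    (hgA : g (x 0) = (y 0, z 0))
    (hgB : g (x (Fin.last N)) = (y (Fin.last N), z (Fin.last N)))
    {v : ℝ} {n : Fin N} (hn : v ∈ Icc (x n.castSucc) (x n.succ)) :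
    Psi hN x α β γ (tmap x α β γ y z) g v =
      Fap α β γ (tmap x α β γ y z) n (LInv x n v) (g (LInv x n v)) := by
  have hv : v ∈ Icc (x 0) (x (Fin.last N)) := In_subset x hx n hn
  unfold Psi
  rw [dif_pos hv]
  have hm := idx_mem hN hv
  rcases lt_trichotomy (idx hN x v) n with h | h | h
  · exact agree_aux hN hx y z g hgB hgA h hm hn
  · rw [h]
  · exact (agree_aux hN hx y z g hgB hgA h hn hm).symm

lemma Psi_A (hN : 1 ≤ N) (hx : StrictMono x) (y z : Fin (N + 1) → ℝ) (g : ℝ → ℝ × ℝ)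
    (hgA : g (x 0) = (y 0, z 0))
    (hgB : g (x (Fin.last N)) = (y (Fin.last N), z (Fin.last N))) :
    Psi hN x α β γ (tmap x α β γ y z) g (x 0) = (y 0, z 0) := by
  have hd := hd0 hN x hx
  have hcs : ((⟨0, hN⟩ : Fin N)).castSucc = (0 : Fin (N + 1)) := Fin.ext (by simp)
  have hn : x 0 ∈ Icc (x ((⟨0, hN⟩ : Fin N)).castSucc) (x ((⟨0, hN⟩ : Fin N)).succ) := by
    rw [hcs]
    exact ⟨le_refl _, hx.monotone (Fin.zero_le _)⟩
  rw [Psi_eq hN hx y z g hgA hgB hn]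
  have e1 : LMap x ⟨0, hN⟩ (x 0) = x 0 := by rw [LMap_left x hx hN, hcs]
  have e2 : LInv x ⟨0, hN⟩ (x 0) = x 0 := by
    conv_lhs => rw [← e1, LInv_LMap x hx hN]
  rw [e2, hgA, tmap_evalA x α β γ y z hd, hcs]

lemma Psi_B (hN : 1 ≤ N) (hx : StrictMono x) (y z : Fin (N + 1) → ℝ) (g : ℝ → ℝ × ℝ)
    (hgA : g (x 0) = (y 0, z 0))
    (hgB : g (x (Fin.last N)) = (y (Fin.last N), z (Fin.last N))) :
    Psi hN x α β γ (tmap x α β γ y z) g (x (Fin.last N)) =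
      (y (Fin.last N), z (Fin.last N)) := by
  have hd := hd0 hN x hx
  have hlt : N - 1 < N := by omega
  have hsc : ((⟨N - 1, hlt⟩ : Fin N)).succ = Fin.last N := Fin.ext (by simp [Fin.val_last]; omega)
  have hn : x (Fin.last N) ∈ Icc (x ((⟨N - 1, hlt⟩ : Fin N)).castSucc)
      (x ((⟨N - 1, hlt⟩ : Fin N)).succ) := by
    rw [hsc]
    exact ⟨hx.monotone (Fin.le_last _), le_refl _⟩
  rw [Psi_eq hN hx y z g hgA hgB hn]
  have e1 : LMap x ⟨N - 1, hlt⟩ (x (Fin.last N)) = x (Fin.last N) := by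
    rw [LMap_right x hx hN, hsc]
  have e2 : LInv x ⟨N - 1, hlt⟩ (x (Fin.last N)) = x (Fin.last N) := by
    conv_lhs => rw [← e1, LInv_LMap x hx hN]
  rw [e2, hgB, tmap_evalB x α β γ y z hd, hsc]

lemma Psi_cont (hN : 1 ≤ N) (hx : StrictMono x) (y z : Fin (N + 1) → ℝ) (g : ℝ → ℝ × ℝ)
    (hg : ContinuousOn g (Icc (x 0) (x (Fin.last N))))
    (hgA : g (x 0) = (y 0, z 0))
    (hgB : g (x (Fin.last N)) = (y (Fin.last N), z (Fin.last N))) :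
    ContinuousOn (Psi hN x α β γ (tmap x α β γ y z) g) (Icc (x 0) (x (Fin.last N))) := by
  intro v hv
  have hsub : Icc (x 0) (x (Fin.last N)) ⊆
      ⋃ n ∈ (Finset.univ : Finset (Fin N)), Icc (x n.castSucc) (x n.succ) := by
    intro w hw
    obtain ⟨n, hn⟩ := cover x hN hw
    exact mem_biUnion (Finset.mem_univ n) hn
  refine ContinuousWithinAt.mono ?_ hsub
  have key : ∀ s : Finset (Fin N),
      ContinuousWithinAt (Psi hN x α β γ (tmap x α β γ y z) g)
        (⋃ n ∈ s, Icc (x n.castSucc) (x n.succ)) v := by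
    intro s
    induction s using Finset.induction_on with
    | empty =>
      simp only [Finset.notMem_empty, iUnion_of_empty, iUnion_empty]
      rw [ContinuousWithinAt, nhdsWithin_empty]
      exact Filter.tendsto_bot
    | @insert i s _ ih =>
      rw [Finset.set_biUnion_insert]
      refine ContinuousWithinAt.union ?_ ih
      by_cases hvn : v ∈ Icc (x i.castSucc) (x i.succ)
      · have hL : ContinuousOn (LInv x i) (Icc (x i.castSucc) (x i.succ)) :=
          Continuous.continuousOn (by unfold LInv; fun_prop)
        have hgL : ContinuousOn (fun w => g (LInv x i w)) (Icc (x i.castSucc) (x i.succ)) :=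
          hg.comp hL (fun w hw => LInv_mem x hx hN i hw)
        have hb : ContinuousOn
            (fun w => Fap α β γ (tmap x α β γ y z) i (LInv x i w) (g (LInv x i w)))
            (Icc (x i.castSucc) (x i.succ)) := by
          unfold Fap
          exact ContinuousOn.prodMk
            (((continuousOn_const.mul hgL.fst).add (continuousOn_const.mul hgL.snd)).add
              ((continuousOn_const.mul hL).add continuousOn_const))
            ((continuousOn_const.mul hgL.snd).add
              ((continuousOn_const.mul hL).add continuousOn_const))
        exact (hb v hvn).congr (fun w hw => Psi_eq hN hx y z g hgA hgB hw)
          (Psi_eq hN hx y z g hgA hgB hvn)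
      · exact continuousWithinAt_of_notMem_closure
          (by rwa [IsClosed.closure_eq isClosed_Icc])
  exact key Finset.univ

end Psi


def FixEq' {N : ℕ} (x : Fin (N + 1) → ℝ) (α β γ : Fin N → ℝ)
    (t : Fin N → (ℝ × ℝ) × (ℝ × ℝ)) (f : ℝ → ℝ × ℝ) : Prop :=
  ∀ n : Fin N, ∀ u ∈ Icc (x 0) (x (Fin.last N)), f (LMap x n u) = Fap α β γ t n u (f u)

lemma core (hN : 1 ≤ N) (x : Fin (N + 1) → ℝ) (hx : StrictMono x)
    (α β γ : Fin N → ℝ) (hγ : ∀ n, |γ n| < 1)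
    (hαβ : ∀ n, |α n| + |β n| < 1) (y z : Fin (N + 1) → ℝ) :
    ∃ f : ℝ → ℝ × ℝ, ContinuousOn f (Icc (x 0) (x (Fin.last N))) ∧
      (∀ u ∉ Icc (x 0) (x (Fin.last N)), f u = 0) ∧
      FixEq' x α β γ (tmap x α β γ y z) f ∧ (∀ i, f (x i) = (y i, z i)) := by
  classical
  have hd := hd0 hN x hx
  have hAmem : x 0 ∈ Icc (x 0) (x (Fin.last N)) := left_mem_Icc.2 hd.le
  have hBmem : x (Fin.last N) ∈ Icc (x 0) (x (Fin.last N)) := right_mem_Icc.2 hd.le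
  set T := tmap x α β γ y z with hT
  set P0 : ℝ × ℝ := (y 0, z 0) with hP0
  set PN : ℝ × ℝ := (y (Fin.last N), z (Fin.last N)) with hPN
  set SS : Set C(↥(Icc (x 0) (x (Fin.last N))), ℝ × ℝ) :=
    {g | g ⟨x 0, hAmem⟩ = P0 ∧ g ⟨x (Fin.last N), hBmem⟩ = PN} with hSS
  have hclosed : IsClosed SS := by
    have : SS = {g : C(↥(Icc (x 0) (x (Fin.last N))), ℝ × ℝ) | g ⟨x 0, hAmem⟩ = P0} ∩
        {g | g ⟨x (Fin.last N), hBmem⟩ = PN} := rfl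
    rw [this]
    exact (isClosed_eq (continuous_eval_const _) continuous_const).inter
      (isClosed_eq (continuous_eval_const _) continuous_const)
  haveI : CompleteSpace ↥SS := hclosed.completeSpace_coe
  have hg0 : Continuous (fun v : ↥(Icc (x 0) (x (Fin.last N))) =>
      P0 + ((v.1 - x 0) / (x (Fin.last N) - x 0)) • (PN - P0)) := by fun_prop
  have hSSne : SS.Nonempty := by
    refine ⟨ContinuousMap.mk _ hg0, ?_, ?_⟩
    · simp
    · simp [div_self (ne_of_gt (sub_pos.2 hd))]
  haveI : Nonempty ↥SS := hSSne.to_subtype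
  -- extension by zero
  set extF : C(↥(Icc (x 0) (x (Fin.last N))), ℝ × ℝ) → ℝ → ℝ × ℝ :=
    fun g v => if h : v ∈ Icc (x 0) (x (Fin.last N)) then g ⟨v, h⟩ else 0 with hextF
  have hrestrict : ∀ g : C(↥(Icc (x 0) (x (Fin.last N))), ℝ × ℝ),
      (Icc (x 0) (x (Fin.last N))).domRestrict (extF g) = g := by
    intro g
    funext v
    simp only [Set.domRestrict, hextF, dif_pos v.2]
  have hextCont : ∀ g : C(↥(Icc (x 0) (x (Fin.last N))), ℝ × ℝ),
      ContinuousOn (extF g) (Icc (x 0) (x (Fin.last N))) := by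
    intro g
    rw [continuousOn_iff_continuous_restrict, hrestrict]
    exact g.continuous
  have hextA : ∀ g : ↥SS, extF g.1 (x 0) = (y 0, z 0) := by
    intro g
    simp only [hextF, dif_pos hAmem]
    exact g.2.1
  have hextB : ∀ g : ↥SS, extF g.1 (x (Fin.last N)) = (y (Fin.last N), z (Fin.last N)) := by
    intro g
    simp only [hextF, dif_pos hBmem]
    exact g.2.2
  -- the operator
  have hPhiCont : ∀ g : ↥SS, Continuous ((Icc (x 0) (x (Fin.last N))).domRestrict
      (Psi hN x α β γ T (extF g.1))) := by
    intro g
    rw [← continuousOn_iff_continuous_restrict]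
    exact Psi_cont hN hx y z (extF g.1) (hextCont g.1) (hextA g) (hextB g)
  set Phi : ↥SS → ↥SS := fun g =>
    ⟨ContinuousMap.mk ((Icc (x 0) (x (Fin.last N))).domRestrict (Psi hN x α β γ T (extF g.1)))
      (hPhiCont g),
     by exact Psi_A hN hx y z (extF g.1) (hextA g) (hextB g),
     by exact Psi_B hN hx y z (extF g.1) (hextA g) (hextB g)⟩ with hPhi
  -- contraction
  set c : ℝ := Finset.univ.sup' ⟨⟨0, hN⟩, Finset.mem_univ _⟩
    (fun n => max (|α n| + |β n|) (|γ n|)) with hc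
  have hsup : ∀ n : Fin N, max (|α n| + |β n|) (|γ n|) ≤ c :=
    fun n => Finset.le_sup' (fun n => max (|α n| + |β n|) (|γ n|)) (Finset.mem_univ n)
  have hcb : ∀ n : Fin N, |α n| + |β n| ≤ c ∧ |γ n| ≤ c := fun n =>
    ⟨le_trans (le_max_left _ _) (hsup n), le_trans (le_max_right _ _) (hsup n)⟩
  have hc0 : 0 ≤ c := le_trans (abs_nonneg (γ ⟨0, hN⟩)) (hcb _).2
  have hc1 : c < 1 := by
    rw [hc]
    exact (Finset.sup'_lt_iff _).2 fun n _ => max_lt (hαβ n) (hγ n)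
  have hlip : ∀ g h : ↥SS, dist (Phi g) (Phi h) ≤ c * dist g h := by
    intro g h
    rw [Subtype.dist_eq]
    rw [ContinuousMap.dist_le (mul_nonneg hc0 dist_nonneg)]
    intro v
    have hv := v.2
    simp only [hPhi, ContinuousMap.coe_mk, Set.domRestrict]
    unfold Psi
    rw [dif_pos hv, dif_pos hv]
    set n := idx hN x v.1 with hn
    set u := LInv x n v.1 with hu
    have hum : u ∈ Icc (x 0) (x (Fin.last N)) := LInv_mem x hx hN n (idx_mem hN hv)
    have e1 : extF g.1 u = g.1 ⟨u, hum⟩ := dif_pos hum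
    have e2 : extF h.1 u = h.1 ⟨u, hum⟩ := dif_pos hum
    rw [e1, e2]
    set p := g.1 ⟨u, hum⟩ with hp
    set q := h.1 ⟨u, hum⟩ with hq
    have hDpq : dist p q ≤ dist g.1 h.1 := ContinuousMap.dist_apply_le_dist _
    have hD1 : |p.1 - q.1| ≤ dist g.1 h.1 := by
      rw [← Real.dist_eq]
      exact le_trans (by rw [Prod.dist_eq]; exact le_max_left _ _) hDpq
    have hD2 : |p.2 - q.2| ≤ dist g.1 h.1 := by
      rw [← Real.dist_eq]
      exact le_trans (by rw [Prod.dist_eq]; exact le_max_right _ _) hDpq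
    rw [Prod.dist_eq]
    apply max_le
    · dsimp only [Fap]
      rw [Real.dist_eq]
      have e3 : α n * p.1 + β n * p.2 + ((T n).1.1 * u + (T n).1.2) -
          (α n * q.1 + β n * q.2 + ((T n).1.1 * u + (T n).1.2)) =
          α n * (p.1 - q.1) + β n * (p.2 - q.2) := by ring
      rw [e3]
      calc |α n * (p.1 - q.1) + β n * (p.2 - q.2)|
          ≤ |α n * (p.1 - q.1)| + |β n * (p.2 - q.2)| := abs_add_le _ _
        _ = |α n| * |p.1 - q.1| + |β n| * |p.2 - q.2| := by rw [abs_mul, abs_mul]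
        _ ≤ |α n| * dist g.1 h.1 + |β n| * dist g.1 h.1 :=
            add_le_add (mul_le_mul_of_nonneg_left hD1 (abs_nonneg _))
              (mul_le_mul_of_nonneg_left hD2 (abs_nonneg _))
        _ = (|α n| + |β n|) * dist g.1 h.1 := by ring
        _ ≤ c * dist g.1 h.1 := mul_le_mul_of_nonneg_right (hcb n).1 dist_nonneg
    · dsimp only [Fap]
      rw [Real.dist_eq]
      have e3 : γ n * p.2 + ((T n).2.1 * u + (T n).2.2) -
          (γ n * q.2 + ((T n).2.1 * u + (T n).2.2)) = γ n * (p.2 - q.2) := by ring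
      rw [e3, abs_mul]
      calc |γ n| * |p.2 - q.2| ≤ |γ n| * dist g.1 h.1 :=
            mul_le_mul_of_nonneg_left hD2 (abs_nonneg _)
        _ ≤ c * dist g.1 h.1 := mul_le_mul_of_nonneg_right (hcb n).2 dist_nonneg
  have hcontr : ContractingWith ⟨c, hc0⟩ Phi := by
    constructor
    · refine NNReal.coe_lt_one.1 ?_
      exact hc1
    · exact LipschitzWith.of_dist_le_mul hlip
  set fp := ContractingWith.fixedPoint Phi hcontr with hfp
  have heq : Phi fp = fp := hcontr.fixedPoint_isFixedPt
  refine ⟨extF fp.1, hextCont fp.1, ?_, ?_, ?_⟩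
  · intro u hu
    simp only [hextF, dif_neg hu]
  · intro n u hu
    have hL : LMap x n u ∈ Icc (x n.castSucc) (x n.succ) := LMap_mem x hx hN n hu
    have hL' : LMap x n u ∈ Icc (x 0) (x (Fin.last N)) := In_subset x hx n hL
    have e0 : extF fp.1 (LMap x n u) = fp.1 ⟨LMap x n u, hL'⟩ := dif_pos hL'
    have e2 : fp.1 ⟨LMap x n u, hL'⟩ = Psi hN x α β γ T (extF fp.1) (LMap x n u) := by
      conv_lhs => rw [← heq]
      rfl
    rw [e0, e2, Psi_eq hN hx y z (extF fp.1) (hextA fp) (hextB fp) hL, LInv_LMap x hx hN]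
  · intro i
    induction i using Fin.cases with
    | zero => exact hextA fp
    | succ n =>
      have hfixn : extF fp.1 (LMap x n (x (Fin.last N))) =
          Fap α β γ T n (x (Fin.last N)) (extF fp.1 (x (Fin.last N))) := by
        have hL : LMap x n (x (Fin.last N)) ∈ Icc (x n.castSucc) (x n.succ) :=
          LMap_mem x hx hN n hBmem
        have hL' : LMap x n (x (Fin.last N)) ∈ Icc (x 0) (x (Fin.last N)) :=
          In_subset x hx n hL
        have e0 : extF fp.1 (LMap x n (x (Fin.last N))) = fp.1 ⟨_, hL'⟩ := dif_pos hL'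
        have e2 : fp.1 ⟨LMap x n (x (Fin.last N)), hL'⟩ =
            Psi hN x α β γ T (extF fp.1) (LMap x n (x (Fin.last N))) := by
          conv_lhs => rw [← heq]
          rfl
        rw [e0, e2, Psi_eq hN hx y z (extF fp.1) (hextA fp) (hextB fp) hL, LInv_LMap x hx hN]
      rw [LMap_right x hx hN] at hfixn
      rw [hfixn, hextB fp, hT]
      exact tmap_evalB x α β γ y z hd n


lemma t_unique (hN : 1 ≤ N) (x : Fin (N + 1) → ℝ) (hx : StrictMono x)
    (α β γ : Fin N → ℝ) (t t' : Fin N → (ℝ × ℝ) × (ℝ × ℝ)) (f g : ℝ → ℝ × ℝ)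
    (hf : FixEq' x α β γ t f) (hg : FixEq' x α β γ t' g)
    (hnode : ∀ i, f (x i) = g (x i)) : t = t' := by
  have hd := hd0 hN x hx
  have hAmem : x 0 ∈ Icc (x 0) (x (Fin.last N)) := left_mem_Icc.2 hd.le
  have hBmem : x (Fin.last N) ∈ Icc (x 0) (x (Fin.last N)) := right_mem_Icc.2 hd.le
  have hne : x 0 - x (Fin.last N) ≠ 0 := sub_ne_zero.2 (ne_of_lt hd)
  funext n
  have hA := hf n (x 0) hAmem
  rw [LMap_left x hx hN] at hA
  have hB := hf n (x (Fin.last N)) hBmem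
  rw [LMap_right x hx hN] at hB
  have hA' := hg n (x 0) hAmem
  rw [LMap_left x hx hN] at hA'
  have hB' := hg n (x (Fin.last N)) hBmem
  rw [LMap_right x hx hN] at hB'
  have eA : Fap α β γ t n (x 0) (g (x 0)) = Fap α β γ t' n (x 0) (g (x 0)) := by
    rw [← hA', ← hnode n.castSucc, hA, hnode 0]
  have eB : Fap α β γ t n (x (Fin.last N)) (g (x (Fin.last N))) =
      Fap α β γ t' n (x (Fin.last N)) (g (x (Fin.last N))) := by
    rw [← hB', ← hnode n.succ, hB, hnode (Fin.last N)]
  have eA1 := congrArg Prod.fst eA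
  have eA2 := congrArg Prod.snd eA
  have eB1 := congrArg Prod.fst eB
  have eB2 := congrArg Prod.snd eB
  dsimp only [Fap] at eA1 eA2 eB1 eB2
  have q1 : (t n).1.1 * x 0 + (t n).1.2 = (t' n).1.1 * x 0 + (t' n).1.2 := by linarith
  have q2 : (t n).1.1 * x (Fin.last N) + (t n).1.2 =
      (t' n).1.1 * x (Fin.last N) + (t' n).1.2 := by linarith
  have q3 : (t n).2.1 * x 0 + (t n).2.2 = (t' n).2.1 * x 0 + (t' n).2.2 := by linarith
  have q4 : (t n).2.1 * x (Fin.last N) + (t n).2.2 =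
      (t' n).2.1 * x (Fin.last N) + (t' n).2.2 := by linarith
  have h11 : (t n).1.1 = (t' n).1.1 := by
    have hh : (t n).1.1 * (x 0 - x (Fin.last N)) = (t' n).1.1 * (x 0 - x (Fin.last N)) := by
      linear_combination q1 - q2
    exact mul_right_cancel₀ hne hh
  have h12 : (t n).1.2 = (t' n).1.2 := by rw [h11] at q1; linarith
  have h21 : (t n).2.1 = (t' n).2.1 := by
    have hh : (t n).2.1 * (x 0 - x (Fin.last N)) = (t' n).2.1 * (x 0 - x (Fin.last N)) := by
      linear_combination q3 - q4
    exact mul_right_cancel₀ hne hh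
  have h22 : (t n).2.2 = (t' n).2.2 := by rw [h21] at q3; linarith
  exact Prod.ext (Prod.ext h11 h12) (Prod.ext h21 h22)

lemma uniq (hN : 1 ≤ N) (x : Fin (N + 1) → ℝ) (hx : StrictMono x)
    (α β γ : Fin N → ℝ) (hα : ∀ n, |α n| < 1) (hγ : ∀ n, |γ n| < 1)
    (t : Fin N → (ℝ × ℝ) × (ℝ × ℝ)) (f g : ℝ → ℝ × ℝ)
    (hf : FixEq' x α β γ t f) (hg : FixEq' x α β γ t g)
    (hfb : ∃ M : ℝ, ∀ u ∈ Icc (x 0) (x (Fin.last N)), ‖f u‖ ≤ M)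
    (hgb : ∃ M : ℝ, ∀ u ∈ Icc (x 0) (x (Fin.last N)), ‖g u‖ ≤ M) :
    ∀ v ∈ Icc (x 0) (x (Fin.last N)), f v = g v := by
  classical
  obtain ⟨Mf, hMf⟩ := hfb
  obtain ⟨Mg, hMg⟩ := hgb
  set M := Mf + Mg with hM
  have hbound : ∀ u ∈ Icc (x 0) (x (Fin.last N)),
      |(f u).1 - (g u).1| ≤ M ∧ |(f u).2 - (g u).2| ≤ M := by
    intro u hu
    have h1 : |(f u).1| ≤ Mf := le_trans (norm_fst_le (f u)) (hMf u hu)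
    have h2 : |(g u).1| ≤ Mg := le_trans (norm_fst_le (g u)) (hMg u hu)
    have h3 : |(f u).2| ≤ Mf := le_trans (norm_snd_le (f u)) (hMf u hu)
    have h4 : |(g u).2| ≤ Mg := le_trans (norm_snd_le (g u)) (hMg u hu)
    constructor
    · calc |(f u).1 - (g u).1| ≤ |(f u).1| + |(g u).1| := abs_sub _ _
        _ ≤ M := by rw [hM]; linarith
    · calc |(f u).2 - (g u).2| ≤ |(f u).2| + |(g u).2| := abs_sub _ _
        _ ≤ M := by rw [hM]; linarith
  set cγ : ℝ := Finset.univ.sup' ⟨⟨0, hN⟩, Finset.mem_univ _⟩ (fun n => |γ n|) with hcγ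
  have hγsup : ∀ n : Fin N, |γ n| ≤ cγ := fun n => Finset.le_sup' (fun n => |γ n|) (Finset.mem_univ n)
  have hcγ0 : 0 ≤ cγ := le_trans (abs_nonneg _) (hγsup ⟨0, hN⟩)
  set cα : ℝ := Finset.univ.sup' ⟨⟨0, hN⟩, Finset.mem_univ _⟩ (fun n => |α n|) with hcα
  have hαsup : ∀ n : Fin N, |α n| ≤ cα := fun n => Finset.le_sup' (fun n => |α n|) (Finset.mem_univ n)
  have hcα0 : 0 ≤ cα := le_trans (abs_nonneg _) (hαsup ⟨0, hN⟩)
  have st1 : ∀ k : ℕ, ∀ v ∈ Icc (x 0) (x (Fin.last N)),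
      |(f v).2 - (g v).2| ≤ cγ ^ k * M := by
    intro k
    induction k with
    | zero => intro v hv; rw [pow_zero, one_mul]; exact (hbound v hv).2
    | succ k ih =>
      intro v hv
      obtain ⟨n, u, hu, hLu⟩ := exists_pre x hx hN hv
      rw [← hLu, hf n u hu, hg n u hu]
      dsimp only [Fap]
      have e : γ n * (f u).2 + ((t n).2.1 * u + (t n).2.2) -
          (γ n * (g u).2 + ((t n).2.1 * u + (t n).2.2)) = γ n * ((f u).2 - (g u).2) := by ring
      rw [e, abs_mul]
      calc |γ n| * |(f u).2 - (g u).2| ≤ cγ * (cγ ^ k * M) :=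
            mul_le_mul (hγsup n) (ih u hu) (abs_nonneg _) hcγ0
        _ = cγ ^ (k + 1) * M := by ring
  have hcγ1 : cγ < 1 := by
    rw [hcγ]
    exact (Finset.sup'_lt_iff _).2 fun n _ => hγ n
  have hz2 : ∀ v ∈ Icc (x 0) (x (Fin.last N)), (f v).2 = (g v).2 := by
    intro v hv
    have htend : Filter.Tendsto (fun k : ℕ => cγ ^ k * M) Filter.atTop (nhds 0) := by
      simpa using (tendsto_pow_atTop_nhds_zero_of_lt_one hcγ0 hcγ1).mul_const M
    have hle : |(f v).2 - (g v).2| ≤ 0 := ge_of_tendsto' htend (fun k => st1 k v hv)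
    have := abs_nonpos_iff.1 hle
    linarith [sub_eq_zero.1 this, le_refl ((g v).2)]
  have st2 : ∀ k : ℕ, ∀ v ∈ Icc (x 0) (x (Fin.last N)),
      |(f v).1 - (g v).1| ≤ cα ^ k * M := by
    intro k
    induction k with
    | zero => intro v hv; rw [pow_zero, one_mul]; exact (hbound v hv).1
    | succ k ih =>
      intro v hv
      obtain ⟨n, u, hu, hLu⟩ := exists_pre x hx hN hv
      rw [← hLu, hf n u hu, hg n u hu]
      dsimp only [Fap]
      have e : α n * (f u).1 + β n * (f u).2 + ((t n).1.1 * u + (t n).1.2) -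
          (α n * (g u).1 + β n * (g u).2 + ((t n).1.1 * u + (t n).1.2)) =
          α n * ((f u).1 - (g u).1) := by
        rw [hz2 u hu]; ring
      rw [e, abs_mul]
      calc |α n| * |(f u).1 - (g u).1| ≤ cα * (cα ^ k * M) :=
            mul_le_mul (hαsup n) (ih u hu) (abs_nonneg _) hcα0
        _ = cα ^ (k + 1) * M := by ring
  have hcα1 : cα < 1 := by
    rw [hcα]
    exact (Finset.sup'_lt_iff _).2 fun n _ => hα n
  have hz1 : ∀ v ∈ Icc (x 0) (x (Fin.last N)), (f v).1 = (g v).1 := by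
    intro v hv
    have htend : Filter.Tendsto (fun k : ℕ => cα ^ k * M) Filter.atTop (nhds 0) := by
      simpa using (tendsto_pow_atTop_nhds_zero_of_lt_one hcα0 hcα1).mul_const M
    have hle : |(f v).1 - (g v).1| ≤ 0 := ge_of_tendsto' htend (fun k => st2 k v hv)
    have := abs_nonpos_iff.1 hle
    linarith [sub_eq_zero.1 this, le_refl ((g v).1)]
  intro v hv
  exact Prod.ext (hz1 v hv) (hz2 v hv)


lemma fix_iff (x : Fin (N + 1) → ℝ) (α β γ : Fin N → ℝ)
    (t : Fin N → (ℝ × ℝ) × (ℝ × ℝ)) (f : ℝ → ℝ × ℝ) :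
    FixEq' x α β γ t f ↔
      (∀ n : Fin N, ∀ u ∈ Icc (x 0) (x (Fin.last N)),
        f (LMap x n u) =
          (α n * (f u).1 + β n * (f u).2 + ((t n).1.1 * u + (t n).1.2),
           γ n * (f u).2 + ((t n).2.1 * u + (t n).2.2))) := Iff.rfl

end S4

/-- The map `θ : ℝ^{N+1} × ℝ^{N+1} → S₀` sending `(y, z)` to `f = (f₁, f₂)`, with
`f₁` the unique CHFIF through `(x i, y i)` and `f₂` the unique AFIF through
`(x i, z i)`, is a linear isomorphism; in particular `dim S₀ = 2(N+1)`. -/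
theorem stmt4 {N : ℕ} (hN : 1 ≤ N) (x : Fin (N + 1) → ℝ) (hx : StrictMono x)
    (α β γ : Fin N → ℝ) (hα : ∀ n, |α n| < 1) (hγ : ∀ n, |γ n| < 1)
    (hβγ : ∀ n, |β n| + |γ n| < 1) :
    ∃ θ : ((Fin (N + 1) → ℝ) × (Fin (N + 1) → ℝ)) → (ℝ → ℝ × ℝ),
      (∀ (a : ℝ) (v w : (Fin (N + 1) → ℝ) × (Fin (N + 1) → ℝ)),
        θ (a • v + w) = a • θ v + θ w) ∧
      Function.Injective θ ∧
      Set.range θ = S0set x α β γ ∧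
      (∀ (y z : Fin (N + 1) → ℝ) (i : Fin (N + 1)), θ (y, z) (x i) = (y i, z i)) ∧
      ∃ b : Fin (2 * (N + 1)) → (ℝ → ℝ × ℝ),
        (∀ j, b j ∈ S0set x α β γ) ∧ LinearIndependent ℝ b ∧
        ∀ f ∈ S0set x α β γ, f ∈ Submodule.span ℝ (Set.range b) := by
  classical
  have hDne : (Finset.univ : Finset (Fin N)).Nonempty := ⟨⟨0, hN⟩, Finset.mem_univ _⟩
  set S : ℝ := Finset.univ.sup' hDne (fun n => |β n| / (1 - |α n|)) with hS
  set K : ℝ := 1 + S with hK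
  have hS0 : 0 ≤ S := by
    refine le_trans ?_ (Finset.le_sup' (fun n => |β n| / (1 - |α n|)) (Finset.mem_univ ⟨0, hN⟩))
    exact div_nonneg (abs_nonneg _) (by linarith [hα ⟨0, hN⟩, abs_nonneg (α ⟨0, hN⟩)])
  have hK1 : 1 ≤ K := by rw [hK]; linarith
  have hK0 : 0 < K := by linarith
  have hKne : K ≠ 0 := ne_of_gt hK0
  have hαβK : ∀ n, |α n| + |β n / K| < 1 := by
    intro n
    have ha1 : 0 < 1 - |α n| := by linarith [hα n]
    have h2 : |β n| / (1 - |α n|) ≤ K - 1 := by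
      have hle := Finset.le_sup' (fun n => |β n| / (1 - |α n|)) (Finset.mem_univ n)
      rw [hK]
      linarith [hle]
    have h3 : |β n| ≤ (K - 1) * (1 - |α n|) := by rwa [div_le_iff₀ ha1] at h2
    have key : |β n| < K * (1 - |α n|) := by nlinarith
    have h4 : |β n| / K < 1 - |α n| := by rw [div_lt_iff₀ hK0]; nlinarith
    rw [abs_div, abs_of_pos hK0]
    linarith
  choose F hc1 hc2 hc3 hc4 using fun (y z : Fin (N + 1) → ℝ) =>
    S4.core hN x hx α (fun n => β n / K) γ hγ hαβK y z
  set θ : ((Fin (N + 1) → ℝ) × (Fin (N + 1) → ℝ)) → (ℝ → ℝ × ℝ) :=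
    fun v u => ((F v.1 (K • v.2) u).1, (F v.1 (K • v.2) u).2 / K) with hθ
  set tw : ((Fin (N + 1) → ℝ) × (Fin (N + 1) → ℝ)) → Fin N → (ℝ × ℝ) × (ℝ × ℝ) :=
    fun v n => ((S4.tmap x α (fun n => β n / K) γ v.1 (K • v.2) n).1,
      ((S4.tmap x α (fun n => β n / K) γ v.1 (K • v.2) n).2.1 / K,
       (S4.tmap x α (fun n => β n / K) γ v.1 (K • v.2) n).2.2 / K)) with htw
  have hθfix : ∀ v, S4.FixEq' x α β γ (tw v) (θ v) := by
    intro v n u hu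
    have h3 := hc3 v.1 (K • v.2) n u hu
    have e1 := congrArg Prod.fst h3
    have e2 := congrArg Prod.snd h3
    dsimp only [S4.Fap] at e1 e2
    apply Prod.ext
    · show (F v.1 (K • v.2) (LMap x n u)).1 = _
      rw [e1]
      simp only [htw, S4.Fap]
      try ring
    · show (F v.1 (K • v.2) (LMap x n u)).2 / K = _
      rw [e2]
      simp only [htw, S4.Fap]
      simp only [hθ]
      try ring
  have hbdd : ∀ f : ℝ → ℝ × ℝ, ContinuousOn f (Icc (x 0) (x (Fin.last N))) →
      ∃ M : ℝ, ∀ u ∈ Icc (x 0) (x (Fin.last N)), ‖f u‖ ≤ M := fun f hf =>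
    IsCompact.exists_bound_of_continuousOn isCompact_Icc hf
  have hθcont : ∀ v, ContinuousOn (θ v) (Icc (x 0) (x (Fin.last N))) := by
    intro v
    exact ContinuousOn.prodMk (hc1 v.1 (K • v.2)).fst ((hc1 v.1 (K • v.2)).snd.div_const K)
  have hθzero : ∀ v, ∀ u ∉ Icc (x 0) (x (Fin.last N)), θ v u = 0 := by
    intro v u hu
    show ((F v.1 (K • v.2) u).1, (F v.1 (K • v.2) u).2 / K) = 0
    rw [hc2 v.1 (K • v.2) u hu]
    simp
  have hθnode : ∀ v (i : Fin (N + 1)), θ v (x i) = (v.1 i, v.2 i) := by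
    intro v i
    show ((F v.1 (K • v.2) (x i)).1, (F v.1 (K • v.2) (x i)).2 / K) = _
    rw [hc4 v.1 (K • v.2) i]
    simp [Pi.smul_apply, smul_eq_mul, mul_div_cancel_left₀ _ hKne]
  have hθmem : ∀ v, θ v ∈ S0set x α β γ := fun v =>
    ⟨hθcont v, hθzero v, tw v, hθfix v⟩
  have hkey : ∀ f g, f ∈ S0set x α β γ → g ∈ S0set x α β γ →
      (∀ i, f (x i) = g (x i)) → f = g := by
    rintro f g ⟨hfc, hf0, tf, hft⟩ ⟨hgc, hg0, tg, hgt⟩ hnode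
    have hft' : S4.FixEq' x α β γ tf f := hft
    have hgt' : S4.FixEq' x α β γ tg g := hgt
    have hteq : tf = tg := S4.t_unique hN x hx α β γ tf tg f g hft' hgt' hnode
    funext u
    by_cases hu : u ∈ Icc (x 0) (x (Fin.last N))
    · exact S4.uniq hN x hx α β γ hα hγ tf f g hft' (hteq ▸ hgt')
        (hbdd f hfc) (hbdd g hgc) u hu
    · rw [hf0 u hu, hg0 u hu]
  have hlin : ∀ (a : ℝ) (v w : (Fin (N + 1) → ℝ) × (Fin (N + 1) → ℝ)),
      θ (a • v + w) = a • θ v + θ w := by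
    intro a v w
    apply hkey _ _ (hθmem _)
    · refine ⟨((hθcont v).const_smul a).add (hθcont w), ?_, ?_⟩
      · intro u hu
        show a • θ v u + θ w u = 0
        rw [hθzero v u hu, hθzero w u hu]
        simp
      · refine ⟨fun n => ((a * (tw v n).1.1 + (tw w n).1.1, a * (tw v n).1.2 + (tw w n).1.2),
          (a * (tw v n).2.1 + (tw w n).2.1, a * (tw v n).2.2 + (tw w n).2.2)), ?_⟩
        intro n u hu
        have e1 := hθfix v n u hu
        have e2 := hθfix w n u hu
        show a • θ v (LMap x n u) + θ w (LMap x n u) = _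
        rw [e1, e2]
        dsimp only [S4.Fap]
        show a • (_, _) + (_, _) = _
        simp only [Prod.smul_mk, Prod.mk_add_mk, smul_eq_mul, Pi.add_apply, Pi.smul_apply,
          Prod.fst_add, Prod.snd_add, Prod.smul_fst, Prod.smul_snd]
        apply Prod.ext <;> (dsimp only []; ring)
    · intro i
      rw [hθnode]
      show _ = a • θ v (x i) + θ w (x i)
      rw [hθnode v i, hθnode w i]
      simp only [Prod.smul_mk, Prod.mk_add_mk, smul_eq_mul, Prod.fst_add, Prod.snd_add,
        Prod.smul_fst, Prod.smul_snd, Pi.add_apply, Pi.smul_apply]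
  have hinj : Function.Injective θ := by
    intro v w h
    have hnode : ∀ i, (v.1 i, v.2 i) = (w.1 i, w.2 i) := by
      intro i
      rw [← hθnode v i, ← hθnode w i, h]
    have h1 : ∀ i, v.1 i = w.1 i := fun i => congrArg Prod.fst (hnode i)
    have h2 : ∀ i, v.2 i = w.2 i := fun i => congrArg Prod.snd (hnode i)
    exact Prod.ext (funext h1) (funext h2)
  have hrange : Set.range θ = S0set x α β γ := by
    ext f
    constructor
    · rintro ⟨v, rfl⟩
      exact hθmem v
    · intro hf
      refine ⟨(fun i => (f (x i)).1, fun i => (f (x i)).2), ?_⟩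
      apply hkey _ f (hθmem _) hf
      intro i
      rw [hθnode]
  have hzero : θ 0 = 0 := by
    have h := hlin 1 0 0
    simp only [one_smul, smul_zero, add_zero] at h
    have h2 := sub_eq_of_eq_add' h
    exact h2.symm.trans (sub_self _)
  set θL : ((Fin (N + 1) → ℝ) × (Fin (N + 1) → ℝ)) →ₗ[ℝ] (ℝ → ℝ × ℝ) :=
    { toFun := θ,
      map_add' := fun v w => by
        have h := hlin 1 v w
        rwa [one_smul, one_smul] at h,
      map_smul' := fun a v => by
        have h := hlin a v 0
        rw [add_zero, hzero, add_zero] at h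
        simpa using h } with hθL
  have hdim : Module.finrank ℝ ((Fin (N + 1) → ℝ) × (Fin (N + 1) → ℝ)) = 2 * (N + 1) := by
    rw [Module.finrank_prod, Module.finrank_pi, Fintype.card_fin]
    ring
  set bD : Module.Basis (Fin (2 * (N + 1))) ℝ ((Fin (N + 1) → ℝ) × (Fin (N + 1) → ℝ)) :=
    Module.finBasisOfFinrankEq ℝ _ hdim with hbD
  refine ⟨θ, hlin, hinj, hrange, fun y z i => hθnode (y, z) i,
    fun j => θ (bD j), fun j => hθmem _, ?_, ?_⟩
  · have h := bD.linearIndependent.map' θL (LinearMap.ker_eq_bot.2 hinj)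
    exact h
  · intro f hf
    rw [← hrange] at hf
    obtain ⟨v, rfl⟩ := hf
    have hv : v ∈ Submodule.span ℝ (Set.range bD) := by
      rw [bD.span_eq]
      trivial
    have hm : θL v ∈ Submodule.map θL (Submodule.span ℝ (Set.range bD)) :=
      Submodule.mem_map_of_mem hv
    rw [Submodule.map_span] at hm
    rw [← Set.range_comp] at hm
    exact hm
end

section
/- Assume β_n ≠ 0 for every n = 1,…,N. If (0, f_2) ∈ S_0, i.e., some member of S_0 has identically zero first component, then f_2 is a linear polynomial on I. Consequently, the kernel of the projection P : S_0 → S_0^1, P(f_1, f_2) = f_1, has dimension 2. -/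
open Set

lemma lmap_mem {N : ℕ} (x : Fin (N + 1) → ℝ) (hx : StrictMono x) (n : Fin N)
    {u : ℝ} (hu : u ∈ Icc (x 0) (x (Fin.last N))) :
    LMap x n u ∈ Icc (x 0) (x (Fin.last N)) := by
  obtain ⟨hu1, hu2⟩ := hu
  have hn : x n.castSucc < x n.succ := hx Fin.castSucc_lt_succ
  have h0 : x 0 ≤ x n.castSucc := hx.monotone (Fin.zero_le _)
  have hl : x n.succ ≤ x (Fin.last N) := hx.monotone (Fin.le_last _)
  have hD : (0:ℝ) < x (Fin.last N) - x 0 := by linarith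
  unfold LMap
  constructor
  · rw [div_mul_eq_mul_div, ← add_div, le_div_iff₀ hD]
    nlinarith [mul_nonneg (sub_nonneg.2 hn.le) (sub_nonneg.2 hu1),
               mul_nonneg (sub_nonneg.2 h0) hD.le]
  · rw [div_mul_eq_mul_div, ← add_div, div_le_iff₀ hD]
    nlinarith [mul_nonneg (sub_nonneg.2 hn.le) (sub_nonneg.2 hu2),
               mul_nonneg (sub_nonneg.2 hl) hD.le]

noncomputable def basisFun {N : ℕ} (x : Fin (N + 1) → ℝ) (c d : ℝ) : ℝ → ℝ × ℝ :=
  fun u => if u ∈ Icc (x 0) (x (Fin.last N)) then ((0 : ℝ), c * u + d) else 0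

lemma basisFun_fst {N : ℕ} (x : Fin (N + 1) → ℝ) (c d : ℝ) (u : ℝ) :
    (basisFun x c d u).1 = 0 := by
  unfold basisFun; split <;> simp

lemma basisFun_mem {N : ℕ} (x : Fin (N + 1) → ℝ) (hx : StrictMono x)
    (α β γ : Fin N → ℝ) (c d : ℝ) : basisFun x c d ∈ S0set x α β γ := by
  refine ⟨?_, fun u hu => if_neg hu, ?_⟩
  · exact (Continuous.continuousOn (by fun_prop)).congr (fun u hu => if_pos hu)
  · refine ⟨fun n => ((-(β n) * c, -(β n) * d),
      (c * ((x n.succ - x n.castSucc) / (x (Fin.last N) - x 0)) - γ n * c,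
       c * ((x (Fin.last N) * x n.castSucc - x 0 * x n.succ) / (x (Fin.last N) - x 0))
         + d - γ n * d)), ?_⟩
    intro n u hu
    have h1 := lmap_mem x hx n hu
    simp only [basisFun, if_pos hu, if_pos h1]
    simp only [LMap, Prod.mk.injEq]
    constructor <;> ring

lemma ker_linear {N : ℕ} (hN : 1 ≤ N) (x : Fin (N + 1) → ℝ)
    (α β γ : Fin N → ℝ) (hβ : ∀ n, β n ≠ 0) (f : ℝ → ℝ × ℝ)
    (hf : f ∈ S0set x α β γ) (hf1 : ∀ u : ℝ, (f u).1 = 0) :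
    ∃ c d : ℝ, ∀ u ∈ Icc (x 0) (x (Fin.last N)), (f u).2 = c * u + d := by
  obtain ⟨-, -, t, hfix⟩ := hf
  set n : Fin N := ⟨0, hN⟩
  refine ⟨-(t n).1.1 / β n, -(t n).1.2 / β n, fun u hu => ?_⟩
  have h := congrArg Prod.fst (hfix n u hu)
  simp only [hf1] at h
  have hb := hβ n
  rw [div_mul_eq_mul_div, ← add_div, eq_div_iff hb]
  linear_combination -h

/-- If `β_n ≠ 0` for every `n` and `(0, f₂) ∈ S₀` (zero first component), then `f₂`
is a linear polynomial on `I`; consequently the kernel of the projection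
`P : S₀ → S₀¹`, `P (f₁, f₂) = f₁`, has dimension `2`. -/
theorem stmt5 {N : ℕ} (hN : 1 ≤ N) (x : Fin (N + 1) → ℝ) (hx : StrictMono x)
    (α β γ : Fin N → ℝ) (hα : ∀ n, |α n| < 1) (hγ : ∀ n, |γ n| < 1)
    (hβγ : ∀ n, |β n| + |γ n| < 1) (hβ : ∀ n, β n ≠ 0) :
    (∀ f ∈ S0set x α β γ, (∀ u : ℝ, (f u).1 = 0) →
      ∃ c d : ℝ, ∀ u ∈ Icc (x 0) (x (Fin.last N)), (f u).2 = c * u + d) ∧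
    (∃ b : Fin 2 → (ℝ → ℝ × ℝ),
      (∀ j, b j ∈ S0set x α β γ ∧ ∀ u : ℝ, (b j u).1 = 0) ∧
      LinearIndependent ℝ b ∧
      ∀ f ∈ S0set x α β γ, (∀ u : ℝ, (f u).1 = 0) →
        f ∈ Submodule.span ℝ (Set.range b)) := by
  constructor
  · exact fun f hf h1 => ker_linear hN x α β γ hβ f hf h1
  · refine ⟨![basisFun x 1 0, basisFun x 0 1], ?_, ?_, ?_⟩
    · intro j
      fin_cases j <;>
        exact ⟨basisFun_mem x hx α β γ _ _, fun u => basisFun_fst x _ _ u⟩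
    · have hlt : x 0 < x (Fin.last N) := by
        apply hx
        rw [Fin.lt_def]
        simp only [Fin.val_zero, Fin.val_last]
        omega
      rw [LinearIndependent.pair_iff]
      intro s r h
      have h0 := congrArg Prod.snd (congrFun h (x 0))
      have h1 := congrArg Prod.snd (congrFun h (x (Fin.last N)))
      have hm0 : x 0 ∈ Icc (x 0) (x (Fin.last N)) := ⟨le_refl _, hlt.le⟩
      have hm1 : x (Fin.last N) ∈ Icc (x 0) (x (Fin.last N)) := ⟨hlt.le, le_refl _⟩
      simp only [Pi.add_apply, Pi.smul_apply, basisFun, if_pos hm0, if_pos hm1,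
        Prod.smul_mk, smul_eq_mul, Prod.snd_add, Prod.fst_add, Pi.zero_apply,
        Prod.snd_zero] at h0 h1
      have h2 : s * (x (Fin.last N) - x 0) = 0 := by linear_combination h1 - h0
      have hs : s = 0 := by
        rcases mul_eq_zero.1 h2 with h' | h'
        · exact h'
        · linarith
      have hr : r = 0 := by linear_combination h0 - x 0 * hs
      exact ⟨hs, hr⟩
    · intro f hf h1
      obtain ⟨c, d, hcd⟩ := ker_linear hN x α β γ hβ f hf h1
      obtain ⟨-, hz, -⟩ := hf
      have hfeq : f = c • basisFun x 1 0 + d • basisFun x 0 1 := by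
        funext u
        by_cases hu : u ∈ Icc (x 0) (x (Fin.last N))
        · have : f u = ((0 : ℝ), c * u + d) := by
            rw [Prod.ext_iff]; exact ⟨h1 u, hcd u hu⟩
          simp only [this, Pi.add_apply, Pi.smul_apply, basisFun, if_pos hu,
            Prod.smul_mk, smul_eq_mul, Prod.mk_add_mk, Prod.mk.injEq]
          constructor <;> ring
        · simp only [hz u hu, Pi.add_apply, Pi.smul_apply, basisFun, if_neg hu,
            smul_zero, add_zero]
      rw [hfeq]
      refine Submodule.add_mem _ (Submodule.smul_mem _ _ ?_)
        (Submodule.smul_mem _ _ ?_)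
      · exact Submodule.subset_span ⟨0, rfl⟩
      · exact Submodule.subset_span ⟨1, rfl⟩
end

section
/- Assume β_n ≠ 0 for every n = 1,…,N. Then the space of CHFIFs S_0^1 is a vector space of dimension 2N. -/
open Set

/-- The space `S₀¹` of CHFIFs: first components of members of `S₀`. -/
def S01set {N : ℕ} (x : Fin (N + 1) → ℝ) (α β γ : Fin N → ℝ) : Set (ℝ → ℝ) :=
  {g | ∃ f ∈ S0set x α β γ, g = fun u => (f u).1}

namespace CH

variable {N : ℕ} (x : Fin (N + 1) → ℝ)

lemma zero_lt_last (hN : 1 ≤ N) : (0 : Fin (N + 1)) < Fin.last N := by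
  rw [Fin.lt_def]; simp; omega

lemma x0_lt_xN (hN : 1 ≤ N) (hx : StrictMono x) : x 0 < x (Fin.last N) :=
  hx (zero_lt_last hN)

lemma dpos (hN : 1 ≤ N) (hx : StrictMono x) : 0 < x (Fin.last N) - x 0 :=
  sub_pos.2 (x0_lt_xN x hN hx)

lemma dne (hN : 1 ≤ N) (hx : StrictMono x) : x (Fin.last N) - x 0 ≠ 0 :=
  (dpos x hN hx).ne'

lemma piece_lt (hx : StrictMono x) (n : Fin N) : x n.castSucc < x n.succ :=
  hx (Fin.castSucc_lt_succ (i := n))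

lemma piece_ne (hx : StrictMono x) (n : Fin N) : x n.succ - x n.castSucc ≠ 0 :=
  (sub_pos.2 (piece_lt x hx n)).ne'

lemma piece_subset (hx : StrictMono x) (n : Fin N) :
    Icc (x n.castSucc) (x n.succ) ⊆ Icc (x 0) (x (Fin.last N)) :=
  Icc_subset_Icc (hx.monotone (Fin.zero_le _)) (hx.monotone (Fin.le_last _))

lemma lmap_left (hN : 1 ≤ N) (hx : StrictMono x) (n : Fin N) :
    LMap x n (x 0) = x n.castSucc := by
  have h := dne x hN hx
  unfold LMap; field_simp; ring

lemma lmap_right (hN : 1 ≤ N) (hx : StrictMono x) (n : Fin N) :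
    LMap x n (x (Fin.last N)) = x n.succ := by
  have h := dne x hN hx
  unfold LMap; field_simp; ring

lemma lmap_strictMono (hN : 1 ≤ N) (hx : StrictMono x) (n : Fin N) :
    StrictMono (LMap x n) := by
  intro u v huv
  have ha : 0 < (x n.succ - x n.castSucc) / (x (Fin.last N) - x 0) :=
    div_pos (sub_pos.2 (piece_lt x hx n)) (dpos x hN hx)
  unfold LMap; nlinarith

lemma lmap_mem (hN : 1 ≤ N) (hx : StrictMono x) (n : Fin N) {u : ℝ}
    (hu : u ∈ Icc (x 0) (x (Fin.last N))) :
    LMap x n u ∈ Icc (x n.castSucc) (x n.succ) := by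
  constructor
  · rw [← lmap_left x hN hx n]
    exact (lmap_strictMono x hN hx n).monotone hu.1
  · rw [← lmap_right x hN hx n]
    exact (lmap_strictMono x hN hx n).monotone hu.2

lemma lmap_mem_I (hN : 1 ≤ N) (hx : StrictMono x) (n : Fin N) {u : ℝ}
    (hu : u ∈ Icc (x 0) (x (Fin.last N))) :
    LMap x n u ∈ Icc (x 0) (x (Fin.last N)) :=
  piece_subset x hx n (lmap_mem x hN hx n hu)

noncomputable def Linv (n : Fin N) (v : ℝ) : ℝ :=
  x 0 + (v - x n.castSucc) * ((x (Fin.last N) - x 0) / (x n.succ - x n.castSucc))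

lemma continuous_linv (n : Fin N) : Continuous (Linv x n) := by
  unfold Linv; fun_prop

lemma lmap_linv (hN : 1 ≤ N) (hx : StrictMono x) (n : Fin N) (v : ℝ) :
    LMap x n (Linv x n v) = v := by
  have h1 := dne x hN hx
  have h2 := piece_ne x hx n
  unfold LMap Linv; field_simp; ring

lemma linv_lmap (hN : 1 ≤ N) (hx : StrictMono x) (n : Fin N) (u : ℝ) :
    Linv x n (LMap x n u) = u := by
  have h1 := dne x hN hx
  have h2 := piece_ne x hx n
  unfold LMap Linv; field_simp; ring

lemma linv_mem (hN : 1 ≤ N) (hx : StrictMono x) (n : Fin N) {v : ℝ}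
    (hv : v ∈ Icc (x n.castSucc) (x n.succ)) :
    Linv x n v ∈ Icc (x 0) (x (Fin.last N)) := by
  constructor
  · by_contra h
    push_neg at h
    have := lmap_strictMono x hN hx n h
    rw [lmap_linv x hN hx, lmap_left x hN hx] at this
    exact absurd hv.1 (not_le.2 this)
  · by_contra h
    push_neg at h
    have := lmap_strictMono x hN hx n h
    rw [lmap_linv x hN hx, lmap_right x hN hx] at this
    exact absurd hv.2 (not_le.2 this)

/-- glue the piece functions `P n` along the partition. -/
noncomputable def glue (P : Fin N → ℝ → ℝ) (v : ℝ) : ℝ :=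
  by classical exact (if h : ∃ n : Fin N, v ≤ x n.succ then
    P (Fin.find (fun n : Fin N => v ≤ x n.succ) h) v else 0)

lemma glue_eq (hx : StrictMono x) {P : Fin N → ℝ → ℝ}
    (hmatch : ∀ m k : Fin N, (m : ℕ) + 1 = (k : ℕ) → P m (x m.succ) = P k (x m.succ))
    {n : Fin N} {v : ℝ} (hv : v ∈ Icc (x n.castSucc) (x n.succ)) :
    glue x P v = P n v := by
  have hsome : ∃ i : Fin N, v ≤ x i.succ := ⟨n, hv.2⟩
  obtain ⟨m, hm, hmdef⟩ : ∃ m, (v ≤ x m.succ ∧ ∀ j, v ≤ x j.succ → m ≤ j) ∧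
      Fin.find (fun n : Fin N => v ≤ x n.succ) hsome = m :=
    ⟨_, ⟨Fin.find_spec hsome, fun j hj => not_lt.1 fun hlt => Fin.find_min hsome hlt hj⟩, rfl⟩
  have hglue : glue x P v = P m v := by
    unfold glue
    rw [dif_pos hsome]
    exact congrArg (P · v) hmdef
  rw [hglue]
  have hmn : m ≤ n := hm.2 n hv.2
  rcases eq_or_lt_of_le hmn with h | h
  · rw [h]
  · have hle : (m.succ : Fin (N + 1)) ≤ n.castSucc := by
      rw [Fin.le_def]; simp only [Fin.val_succ, Fin.coe_castSucc]
      rw [Fin.lt_def] at h; omega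
    have h1 : x m.succ ≤ x n.castSucc := hx.monotone hle
    have hveq : v = x m.succ := le_antisymm hm.1 (h1.trans hv.1)
    have hxeq : (m.succ : Fin (N + 1)) = n.castSucc := hx.injective (le_antisymm h1 (hv.1.trans hm.1))
    have hidx : (m : ℕ) + 1 = (n : ℕ) := by
      have := congrArg Fin.val hxeq; simpa using this
    rw [hveq, hmatch m n hidx]

lemma exists_piece (hN : 1 ≤ N) (hx : StrictMono x) {v : ℝ}
    (hv : v ∈ Icc (x 0) (x (Fin.last N))) :
    ∃ n : Fin N, v ∈ Icc (x n.castSucc) (x n.succ) := by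
  have hsome : ∃ i : Fin N, v ≤ x i.succ := by
    refine ⟨⟨N - 1, by omega⟩, ?_⟩
    have : ((⟨N - 1, by omega⟩ : Fin N).succ : Fin (N + 1)) = Fin.last N := by
      apply Fin.ext; simp [Fin.val_succ]; omega
    rw [this]; exact hv.2
  obtain ⟨m, hm⟩ : ∃ m, (v ≤ x m.succ ∧ ∀ j, v ≤ x j.succ → m ≤ j) :=
    ⟨_, Fin.find_spec hsome, fun j hj => not_lt.1 fun hlt => Fin.find_min hsome hlt hj⟩
  refine ⟨m, ?_, hm.1⟩
  rcases Nat.eq_zero_or_pos (m : ℕ) with h0 | h0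
  · have : (m.castSucc : Fin (N + 1)) = 0 := by apply Fin.ext; simpa using h0
    rw [this]; exact hv.1
  · by_contra hcon
    push_neg at hcon
    have hlt : v < x m.castSucc := hcon
    set m' : Fin N := ⟨(m : ℕ) - 1, by omega⟩ with hm'
    have hsucc : (m'.succ : Fin (N + 1)) = m.castSucc := by
      apply Fin.ext; simp [hm', Fin.val_succ]; omega
    have : m ≤ m' := hm.2 m' (by rw [hsucc]; exact hlt.le)
    rw [Fin.le_def] at this
    simp [hm'] at this; omega

lemma glue_continuousOn (hN : 1 ≤ N) (hx : StrictMono x) {P : Fin N → ℝ → ℝ}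
    (hmatch : ∀ m k : Fin N, (m : ℕ) + 1 = (k : ℕ) → P m (x m.succ) = P k (x m.succ))
    (hP : ∀ n, Continuous (P n)) :
    ContinuousOn (glue x P) (Icc (x 0) (x (Fin.last N))) := by
  have hsub : Icc (x 0) (x (Fin.last N)) ⊆ ⋃ n : Fin N, Icc (x n.castSucc) (x n.succ) := by
    intro v hv
    obtain ⟨n, hn⟩ := exists_piece x hN hx hv
    exact mem_iUnion.2 ⟨n, hn⟩
  refine ContinuousOn.mono ?_ hsub
  refine LocallyFinite.continuousOn_iUnion (locallyFinite_of_finite _)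
    (fun n => isClosed_Icc) (fun n => ?_)
  exact ((hP n).continuousOn).congr (fun v hv => glue_eq x hx hmatch hv)

noncomputable def clamp (v : ℝ) : ℝ := max (x 0) (min (x (Fin.last N)) v)

lemma continuous_clamp : Continuous (clamp x) := by
  unfold clamp; fun_prop

lemma clamp_mem (hN : 1 ≤ N) (hx : StrictMono x) (v : ℝ) :
    clamp x v ∈ Icc (x 0) (x (Fin.last N)) := by
  unfold clamp
  constructor
  · exact le_max_left _ _
  · exact max_le (x0_lt_xN x hN hx).le (min_le_left _ _)

lemma clamp_eq {v : ℝ} (hv : v ∈ Icc (x 0) (x (Fin.last N))) : clamp x v = v := by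
  unfold clamp
  rw [min_eq_right hv.2, max_eq_right hv.1]

/-- Bundle `g ∘ clamp` as a bounded continuous function. -/
noncomputable def clampBCF (hN : 1 ≤ N) (hx : StrictMono x) (g : ℝ → ℝ)
    (hg : ContinuousOn g (Icc (x 0) (x (Fin.last N)))) :
    BoundedContinuousFunction ℝ ℝ := by
  refine ⟨⟨fun v => g (clamp x v), hg.comp_continuous (continuous_clamp x)
    (fun v => clamp_mem x hN hx v)⟩, ?_⟩
  obtain ⟨C, hC⟩ := Metric.isBounded_iff.1
    ((isCompact_Icc.image_of_continuousOn hg).isBounded)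
  exact ⟨C, fun a b => hC (mem_image_of_mem g (clamp_mem x hN hx a))
    (mem_image_of_mem g (clamp_mem x hN hx b))⟩

lemma clampBCF_apply (hN : 1 ≤ N) (hx : StrictMono x) (g : ℝ → ℝ)
    (hg : ContinuousOn g (Icc (x 0) (x (Fin.last N)))) (v : ℝ) :
    clampBCF x hN hx g hg v = g (clamp x v) := rfl

/-- the affine function through `(x 0, A)` and `(x (last), B)`. -/
noncomputable def lin (A B u : ℝ) : ℝ :=
  A + (B - A) * ((u - x 0) / (x (Fin.last N) - x 0))

lemma continuous_lin (A B : ℝ) : Continuous (lin x A B) := by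
  unfold lin; fun_prop

lemma lin_x0 (A B : ℝ) : lin x A B (x 0) = A := by
  unfold lin; simp

lemma lin_xN (hN : 1 ≤ N) (hx : StrictMono x) (A B : ℝ) : lin x A B (x (Fin.last N)) = B := by
  have h := dne x hN hx
  unfold lin; field_simp; ring

set_option maxHeartbeats 1000000 in
lemma exists_fif (hN : 1 ≤ N) (hx : StrictMono x) (c : Fin N → ℝ) (r : ℝ)
    (hr1 : r < 1) (hr0 : 0 ≤ r) (hc : ∀ n, |c n| ≤ r)
    (R : Fin N → ℝ → ℝ) (hR : ∀ n, Continuous (R n)) (A B : ℝ)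
    (hmatch : ∀ m k : Fin N, (m : ℕ) + 1 = (k : ℕ) →
      c m * B + R m (x (Fin.last N)) = c k * A + R k (x 0))
    (hA : c ⟨0, hN⟩ * A + R ⟨0, hN⟩ (x 0) = A)
    (hB : c ⟨N - 1, by omega⟩ * B + R ⟨N - 1, by omega⟩ (x (Fin.last N)) = B) :
    ∃ f : ℝ → ℝ, Continuous f ∧ (∃ M, ∀ v, |f v| ≤ M) ∧
      f (x 0) = A ∧ f (x (Fin.last N)) = B ∧
      ∀ n : Fin N, ∀ u ∈ Icc (x 0) (x (Fin.last N)), f (LMap x n u) = c n * f u + R n u := by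
  classical
  set S : Set (BoundedContinuousFunction ℝ ℝ) :=
    {f | f (x 0) = A ∧ f (x (Fin.last N)) = B} with hS
  have hSclosed : IsClosed S := by
    apply IsClosed.inter
    · exact isClosed_eq (by continuity) continuous_const
    · exact isClosed_eq (by continuity) continuous_const
  haveI : CompleteSpace S := hSclosed.completeSpace_coe
  haveI : Nonempty S := by
    refine ⟨⟨clampBCF x hN hx (lin x A B) (continuous_lin x A B).continuousOn, ?_, ?_⟩⟩
    · rw [clampBCF_apply, clamp_eq x (left_mem_Icc.2 (x0_lt_xN x hN hx).le), lin_x0]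
    · rw [clampBCF_apply, clamp_eq x (right_mem_Icc.2 (x0_lt_xN x hN hx).le),
        lin_xN x hN hx]
  -- piece functions
  set P : (ℝ → ℝ) → Fin N → ℝ → ℝ :=
    fun f n v => c n * f (Linv x n v) + R n (Linv x n v) with hP
  have hPcont : ∀ (f : BoundedContinuousFunction ℝ ℝ) (n : Fin N), Continuous (P f n) := by
    intro f n
    exact (continuous_const.mul (f.continuous.comp (continuous_linv x n))).add
      ((hR n).comp (continuous_linv x n))
  have hlinv_right : ∀ n : Fin N, Linv x n (x n.succ) = x (Fin.last N) := by
    intro n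
    conv_lhs => rw [← lmap_right x hN hx n]
    exact linv_lmap x hN hx n _
  have hlinv_left : ∀ n : Fin N, Linv x n (x n.castSucc) = x 0 := by
    intro n
    conv_lhs => rw [← lmap_left x hN hx n]
    exact linv_lmap x hN hx n _
  have hPmatch : ∀ f : S, ∀ m k : Fin N, (m : ℕ) + 1 = (k : ℕ) →
      P (f : BoundedContinuousFunction ℝ ℝ) m (x m.succ) = P (f : _) k (x m.succ) := by
    intro f m k hmk
    have hcs : (x m.succ : ℝ) = x k.castSucc := by
      congr 1; apply Fin.ext; simpa using hmk
    simp only [hP]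
    rw [hlinv_right m]
    conv_lhs => rw [f.2.2]
    rw [hcs, hlinv_left k, f.2.1]
    exact hmatch m k hmk
  -- the operator
  have hmemI0 : x 0 ∈ Icc (x 0) (x (Fin.last N)) := left_mem_Icc.2 (x0_lt_xN x hN hx).le
  have hmemIN : x (Fin.last N) ∈ Icc (x 0) (x (Fin.last N)) :=
    right_mem_Icc.2 (x0_lt_xN x hN hx).le
  have hn0cs : ((⟨0, hN⟩ : Fin N).castSucc : Fin (N + 1)) = 0 := by apply Fin.ext; simp
  have hnlsucc : ((⟨N - 1, by omega⟩ : Fin N).succ : Fin (N + 1)) = Fin.last N := by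
    apply Fin.ext; simp [Fin.val_succ]; omega
  have hmem0 : x 0 ∈ Icc (x ((⟨0, hN⟩ : Fin N).castSucc)) (x ((⟨0, hN⟩ : Fin N).succ)) := by
    rw [hn0cs]
    exact ⟨le_refl _, (piece_lt x hx _).le.trans' (by rw [hn0cs])⟩
  have hmemN : x (Fin.last N) ∈
      Icc (x ((⟨N - 1, by omega⟩ : Fin N).castSucc)) (x ((⟨N - 1, by omega⟩ : Fin N).succ)) := by
    rw [hnlsucc]
    exact ⟨(hx.monotone (Fin.le_last _)), le_refl _⟩
  have e0 : Linv x (⟨0, hN⟩ : Fin N) (x 0) = x 0 := by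
    have h := hlinv_left (⟨0, hN⟩ : Fin N); rwa [hn0cs] at h
  have eN : Linv x (⟨N - 1, by omega⟩ : Fin N) (x (Fin.last N)) = x (Fin.last N) := by
    have h := hlinv_right (⟨N - 1, by omega⟩ : Fin N); rwa [hnlsucc] at h
  set Φ : S → S := fun f =>
    ⟨clampBCF x hN hx (glue x (P f.1))
        (glue_continuousOn x hN hx (hPmatch f) (hPcont f.1)),
      by
        rw [clampBCF_apply, clamp_eq x hmemI0,
          glue_eq x hx (hPmatch f) hmem0]
        simp only [hP]
        rw [e0, f.2.1]
        exact hA,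
      by
        rw [clampBCF_apply, clamp_eq x hmemIN,
          glue_eq x hx (hPmatch f) hmemN]
        simp only [hP]
        rw [eN, f.2.2]
        exact hB⟩
    with hΦ
  have hΦap : ∀ (f : S) (v : ℝ), (Φ f : BoundedContinuousFunction ℝ ℝ) v
      = glue x (P f.1) (clamp x v) := fun f v => rfl
  have hcontr : ContractingWith (⟨r, hr0⟩ : NNReal) Φ := by
    constructor
    · exact_mod_cast hr1
    · refine LipschitzWith.of_dist_le_mul ?_
      intro f g
      show dist (Φ f) (Φ g) ≤ r * dist f g
      refine (BoundedContinuousFunction.dist_le (mul_nonneg hr0 dist_nonneg)).2 ?_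
      intro v
      obtain ⟨n, hn⟩ := exists_piece x hN hx (clamp_mem x hN hx v)
      rw [hΦap, hΦap, glue_eq x hx (hPmatch f) hn, glue_eq x hx (hPmatch g) hn]
      simp only [hP]
      set w := Linv x n (clamp x v)
      rw [Real.dist_eq]
      have : c n * f.1 w + R n w - (c n * g.1 w + R n w) = c n * (f.1 w - g.1 w) := by ring
      rw [this, abs_mul]
      have h1 : |f.1 w - g.1 w| ≤ dist f g := by
        rw [← Real.dist_eq, Subtype.dist_eq f g]
        exact BoundedContinuousFunction.dist_coe_le_dist w
      exact mul_le_mul (hc n) h1 (abs_nonneg _) hr0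
  set f0 := ContractingWith.fixedPoint Φ hcontr with hf0
  have hfix : Φ f0 = f0 := hcontr.fixedPoint_isFixedPt
  refine ⟨f0.1, f0.1.continuous, ⟨‖f0.1‖, fun v => by
    rw [← Real.norm_eq_abs]; exact f0.1.norm_coe_le_norm v⟩, f0.2.1, f0.2.2, ?_⟩
  intro n u hu
  have h1 : (Φ f0 : BoundedContinuousFunction ℝ ℝ) (LMap x n u) = f0.1 (LMap x n u) := by
    rw [hfix]
  rw [hΦap, clamp_eq x (lmap_mem_I x hN hx n hu),
    glue_eq x hx (hPmatch f0) (lmap_mem x hN hx n hu)] at h1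
  simp only [hP] at h1
  rw [linv_lmap x hN hx n u] at h1
  exact h1.symm

lemma fif_unique (hN : 1 ≤ N) (hx : StrictMono x) (c : Fin N → ℝ) (r : ℝ)
    (hr1 : r < 1) (hr0 : 0 ≤ r) (hc : ∀ n, |c n| ≤ r)
    (R : Fin N → ℝ → ℝ) {f g : ℝ → ℝ} (M : ℝ)
    (hM : ∀ v ∈ Icc (x 0) (x (Fin.last N)), |f v - g v| ≤ M)
    (hf : ∀ n : Fin N, ∀ u ∈ Icc (x 0) (x (Fin.last N)), f (LMap x n u) = c n * f u + R n u)
    (hg : ∀ n : Fin N, ∀ u ∈ Icc (x 0) (x (Fin.last N)), g (LMap x n u) = c n * g u + R n u) :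
    ∀ v ∈ Icc (x 0) (x (Fin.last N)), f v = g v := by
  set I : Set ℝ := Icc (x 0) (x (Fin.last N)) with hI
  set D : ℝ → ℝ := fun v => |f v - g v| with hD
  set s : ℝ := sSup (D '' I) with hs
  have hne : (D '' I).Nonempty :=
    ⟨D (x 0), mem_image_of_mem D (left_mem_Icc.2 (x0_lt_xN x hN hx).le)⟩
  have hbdd : BddAbove (D '' I) := by
    refine ⟨M, ?_⟩
    rintro y ⟨v, hv, rfl⟩
    exact hM v hv
  have hsnonneg : 0 ≤ s := le_csSup hbdd
    (mem_image_of_mem D (left_mem_Icc.2 (x0_lt_xN x hN hx).le)) |>.trans' (abs_nonneg _)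
  have hkey : ∀ v ∈ I, D v ≤ r * s := by
    intro v hv
    obtain ⟨n, hn⟩ := exists_piece x hN hx hv
    set u := Linv x n v with hu
    have humem : u ∈ I := linv_mem x hN hx n hn
    have hvu : v = LMap x n u := (lmap_linv x hN hx n v).symm
    have : D v = |c n| * D u := by
      rw [hD]
      simp only
      rw [hvu, hf n u humem, hg n u humem, ← abs_mul]
      congr 1; ring
    rw [this]
    have hDu : D u ≤ s := le_csSup hbdd (mem_image_of_mem D humem)
    calc |c n| * D u ≤ r * D u := mul_le_mul_of_nonneg_right (hc n) (abs_nonneg _)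
      _ ≤ r * s := mul_le_mul_of_nonneg_left hDu hr0
  have hsle : s ≤ r * s := by
    apply csSup_le hne
    rintro y ⟨v, hv, rfl⟩
    exact hkey v hv
  have hs0 : s ≤ 0 := by nlinarith
  intro v hv
  have h1 : D v ≤ s := le_csSup hbdd (mem_image_of_mem D hv)
  have h2 : 0 ≤ D v := abs_nonneg _
  have : D v = 0 := le_antisymm (h1.trans hs0) h2
  exact sub_eq_zero.1 (abs_eq_zero.1 this)

noncomputable def rsup (hN : 1 ≤ N) (c : Fin N → ℝ) : ℝ :=
  Finset.univ.sup' ⟨⟨0, hN⟩, Finset.mem_univ _⟩ fun n => |c n|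

lemma le_rsup (hN : 1 ≤ N) (c : Fin N → ℝ) (n : Fin N) : |c n| ≤ rsup hN c := by
  unfold rsup; exact Finset.le_sup' (fun n => |c n|) (Finset.mem_univ n)

lemma rsup_lt_one (hN : 1 ≤ N) {c : Fin N → ℝ} (h : ∀ n, |c n| < 1) : rsup hN c < 1 := by
  unfold rsup; exact (Finset.sup'_lt_iff _).2 fun n _ => h n

lemma rsup_nonneg (hN : 1 ≤ N) (c : Fin N → ℝ) : 0 ≤ rsup hN c :=
  (abs_nonneg _).trans (le_rsup hN c ⟨0, hN⟩)

noncomputable def qfun (γ : Fin N → ℝ) (z : Fin (N + 1) → ℝ) (n : Fin N) (u : ℝ) : ℝ :=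
  lin x (z n.castSucc - γ n * z 0) (z n.succ - γ n * z (Fin.last N)) u

noncomputable def pfun (α β : Fin N → ℝ) (y z : Fin (N + 1) → ℝ) (n : Fin N) (u : ℝ) : ℝ :=
  lin x (y n.castSucc - α n * y 0 - β n * z 0)
    (y n.succ - α n * y (Fin.last N) - β n * z (Fin.last N)) u

def SatFIF (c : Fin N → ℝ) (R : Fin N → ℝ → ℝ) (A B : ℝ) (f : ℝ → ℝ) : Prop :=
  Continuous f ∧ (∃ M, ∀ v, |f v| ≤ M) ∧ f (x 0) = A ∧ f (x (Fin.last N)) = B ∧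
    ∀ n : Fin N, ∀ u ∈ Icc (x 0) (x (Fin.last N)), f (LMap x n u) = c n * f u + R n u

lemma cs0 (hN : 1 ≤ N) : ((⟨0, hN⟩ : Fin N).castSucc : Fin (N + 1)) = 0 := by
  apply Fin.ext; simp

lemma succN (hN : 1 ≤ N) : ((⟨N - 1, by omega⟩ : Fin N).succ : Fin (N + 1)) = Fin.last N := by
  apply Fin.ext; simp [Fin.val_succ]; omega

lemma exists_f2 (hN : 1 ≤ N) (hx : StrictMono x) (γ : Fin N → ℝ) (hγ : ∀ n, |γ n| < 1)
    (z : Fin (N + 1) → ℝ) :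
    ∃ f, SatFIF x γ (qfun x γ z) (z 0) (z (Fin.last N)) f := by
  apply exists_fif x hN hx γ (rsup hN γ) (rsup_lt_one hN hγ) (rsup_nonneg hN γ)
    (le_rsup hN γ) _ (fun n => continuous_lin x _ _)
  · intro m k hmk
    rw [lin_x0, lin_xN x hN hx]
    have hcs : (m.succ : Fin (N + 1)) = k.castSucc := by apply Fin.ext; simpa using hmk
    rw [hcs]; ring
  · rw [lin_x0, cs0 hN]; ring
  · rw [lin_xN x hN hx, succN hN]; ring

noncomputable def F2 (hN : 1 ≤ N) (hx : StrictMono x) (γ : Fin N → ℝ)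
    (hγ : ∀ n, |γ n| < 1) (z : Fin (N + 1) → ℝ) : ℝ → ℝ :=
  (exists_f2 x hN hx γ hγ z).choose

lemma F2_spec (hN : 1 ≤ N) (hx : StrictMono x) (γ : Fin N → ℝ)
    (hγ : ∀ n, |γ n| < 1) (z : Fin (N + 1) → ℝ) :
    SatFIF x γ (qfun x γ z) (z 0) (z (Fin.last N)) (F2 x hN hx γ hγ z) :=
  (exists_f2 x hN hx γ hγ z).choose_spec

lemma exists_f1 (hN : 1 ≤ N) (hx : StrictMono x) (α β γ : Fin N → ℝ)
    (hα : ∀ n, |α n| < 1) (hγ : ∀ n, |γ n| < 1) (y z : Fin (N + 1) → ℝ) :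
    ∃ f, SatFIF x α
      (fun n u => β n * F2 x hN hx γ hγ z u + pfun x α β y z n u)
      (y 0) (y (Fin.last N)) f := by
  obtain ⟨hcont, hbd, hz0, hzN, heq⟩ := F2_spec x hN hx γ hγ z
  apply exists_fif x hN hx α (rsup hN α) (rsup_lt_one hN hα) (rsup_nonneg hN α)
    (le_rsup hN α) _ (fun n => (continuous_const.mul hcont).add (continuous_lin x _ _))
  · intro m k hmk
    simp only [Pi.add_apply, Pi.mul_apply]
    rw [lin_x0, lin_xN x hN hx, hz0, hzN]
    have hcs : (m.succ : Fin (N + 1)) = k.castSucc := by apply Fin.ext; simpa using hmk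
    rw [hcs]; ring
  · simp only [Pi.add_apply, Pi.mul_apply]
    rw [lin_x0, cs0 hN, hz0]; ring
  · simp only [Pi.add_apply, Pi.mul_apply]
    rw [lin_xN x hN hx, succN hN, hzN]; ring

noncomputable def F1 (hN : 1 ≤ N) (hx : StrictMono x) (α β γ : Fin N → ℝ)
    (hα : ∀ n, |α n| < 1) (hγ : ∀ n, |γ n| < 1) (y z : Fin (N + 1) → ℝ) : ℝ → ℝ :=
  (exists_f1 x hN hx α β γ hα hγ y z).choose

lemma F1_spec (hN : 1 ≤ N) (hx : StrictMono x) (α β γ : Fin N → ℝ)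
    (hα : ∀ n, |α n| < 1) (hγ : ∀ n, |γ n| < 1) (y z : Fin (N + 1) → ℝ) :
    SatFIF x α (fun n u => β n * F2 x hN hx γ hγ z u + pfun x α β y z n u)
      (y 0) (y (Fin.last N)) (F1 x hN hx α β γ hα hγ y z) :=
  (exists_f1 x hN hx α β γ hα hγ y z).choose_spec

lemma F1_eq (hN : 1 ≤ N) (hx : StrictMono x) (α β γ : Fin N → ℝ)
    (hα : ∀ n, |α n| < 1) (hγ : ∀ n, |γ n| < 1) (y z : Fin (N + 1) → ℝ) :
    ∀ n : Fin N, ∀ u ∈ Icc (x 0) (x (Fin.last N)),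
      F1 x hN hx α β γ hα hγ y z (LMap x n u)
        = α n * F1 x hN hx α β γ hα hγ y z u
          + (β n * F2 x hN hx γ hγ z u + pfun x α β y z n u) :=
  fun n u hu => (F1_spec x hN hx α β γ hα hγ y z).2.2.2.2 n u hu

lemma memI0 (hN : 1 ≤ N) (hx : StrictMono x) : x 0 ∈ Icc (x 0) (x (Fin.last N)) :=
  left_mem_Icc.2 (x0_lt_xN x hN hx).le

lemma memIN (hN : 1 ≤ N) (hx : StrictMono x) :
    x (Fin.last N) ∈ Icc (x 0) (x (Fin.last N)) :=
  right_mem_Icc.2 (x0_lt_xN x hN hx).le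

lemma memIi (hx : StrictMono x) (i : Fin (N + 1)) : x i ∈ Icc (x 0) (x (Fin.last N)) :=
  ⟨hx.monotone (Fin.zero_le _), hx.monotone (Fin.le_last _)⟩

lemma F2_interp (hN : 1 ≤ N) (hx : StrictMono x) (γ : Fin N → ℝ)
    (hγ : ∀ n, |γ n| < 1) (z : Fin (N + 1) → ℝ) (i : Fin (N + 1)) :
    F2 x hN hx γ hγ z (x i) = z i := by
  obtain ⟨hcont, hbd, hz0, hzN, heq⟩ := F2_spec x hN hx γ hγ z
  rcases Nat.eq_zero_or_pos (i : ℕ) with h0 | h0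
  · have hi : i = 0 := by apply Fin.ext; simpa using h0
    rw [hi]; exact hz0
  · set n : Fin N := ⟨(i : ℕ) - 1, by omega⟩ with hn
    have hsucc : (n.succ : Fin (N + 1)) = i := by
      apply Fin.ext; simp [hn, Fin.val_succ]; omega
    have h := heq n (x (Fin.last N)) (memIN x hN hx)
    rw [lmap_right x hN hx, hzN] at h
    rw [← hsucc, h]
    unfold qfun
    rw [lin_xN x hN hx]; ring

lemma F1_interp (hN : 1 ≤ N) (hx : StrictMono x) (α β γ : Fin N → ℝ)
    (hα : ∀ n, |α n| < 1) (hγ : ∀ n, |γ n| < 1) (y z : Fin (N + 1) → ℝ) (i : Fin (N + 1)) :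
    F1 x hN hx α β γ hα hγ y z (x i) = y i := by
  obtain ⟨hcont2, hbd2, hz0, hzN, heq2⟩ := F2_spec x hN hx γ hγ z
  obtain ⟨hcont, hbd, hy0, hyN, heq⟩ := F1_spec x hN hx α β γ hα hγ y z
  rcases Nat.eq_zero_or_pos (i : ℕ) with h0 | h0
  · have hi : i = 0 := by apply Fin.ext; simpa using h0
    rw [hi]; exact hy0
  · set n : Fin N := ⟨(i : ℕ) - 1, by omega⟩ with hn
    have hsucc : (n.succ : Fin (N + 1)) = i := by
      apply Fin.ext; simp [hn, Fin.val_succ]; omega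
    have h := F1_eq x hN hx α β γ hα hγ y z n (x (Fin.last N)) (memIN x hN hx)
    rw [lmap_right x hN hx, hyN, hzN] at h
    rw [← hsucc, h]
    unfold pfun
    rw [lin_xN x hN hx]; ring

lemma abs_sub_le_sum {A B M1 M2 : ℝ} (h1 : |A| ≤ M1) (h2 : |B| ≤ M2) : |A - B| ≤ M1 + M2 := by
  have h3 : |A - B| ≤ |A| + |B| := by
    simpa [sub_eq_add_neg] using abs_add_le A (-B)
  linarith

lemma qfun_add (γ : Fin N → ℝ) (z z' : Fin (N + 1) → ℝ) (n : Fin N) (u : ℝ) :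
    qfun x γ (z + z') n u = qfun x γ z n u + qfun x γ z' n u := by
  unfold qfun lin; simp only [Pi.add_apply]; ring

lemma qfun_smul (γ : Fin N → ℝ) (a : ℝ) (z : Fin (N + 1) → ℝ) (n : Fin N) (u : ℝ) :
    qfun x γ (a • z) n u = a * qfun x γ z n u := by
  unfold qfun lin; simp only [Pi.smul_apply, smul_eq_mul]; ring

lemma pfun_add (α β : Fin N → ℝ) (y y' z z' : Fin (N + 1) → ℝ) (n : Fin N) (u : ℝ) :
    pfun x α β (y + y') (z + z') n u = pfun x α β y z n u + pfun x α β y' z' n u := by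
  unfold pfun lin; simp only [Pi.add_apply]; ring

lemma pfun_smul (α β : Fin N → ℝ) (a : ℝ) (y z : Fin (N + 1) → ℝ) (n : Fin N) (u : ℝ) :
    pfun x α β (a • y) (a • z) n u = a * pfun x α β y z n u := by
  unfold pfun lin; simp only [Pi.smul_apply, smul_eq_mul]; ring

lemma F2_add (hN : 1 ≤ N) (hx : StrictMono x) (γ : Fin N → ℝ)
    (hγ : ∀ n, |γ n| < 1) (z z' : Fin (N + 1) → ℝ) :
    ∀ v ∈ Icc (x 0) (x (Fin.last N)),
      F2 x hN hx γ hγ (z + z') v = F2 x hN hx γ hγ z v + F2 x hN hx γ hγ z' v := by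
  obtain ⟨hc1, ⟨M1, hM1⟩, hz01, hzN1, heq1⟩ := F2_spec x hN hx γ hγ (z + z')
  obtain ⟨hc2, ⟨M2, hM2⟩, hz02, hzN2, heq2⟩ := F2_spec x hN hx γ hγ z
  obtain ⟨hc3, ⟨M3, hM3⟩, hz03, hzN3, heq3⟩ := F2_spec x hN hx γ hγ z'
  apply fif_unique x hN hx γ (rsup hN γ) (rsup_lt_one hN hγ) (rsup_nonneg hN γ)
    (le_rsup hN γ) (qfun x γ (z + z')) (M1 + (M2 + M3))
  · intro v _
    refine abs_sub_le_sum (hM1 v) ?_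
    exact (abs_add_le _ _).trans (add_le_add (hM2 v) (hM3 v))
  · exact heq1
  · intro n u hu
    rw [heq2 n u hu, heq3 n u hu, qfun_add]; ring

lemma F2_smul (hN : 1 ≤ N) (hx : StrictMono x) (γ : Fin N → ℝ)
    (hγ : ∀ n, |γ n| < 1) (a : ℝ) (z : Fin (N + 1) → ℝ) :
    ∀ v ∈ Icc (x 0) (x (Fin.last N)),
      F2 x hN hx γ hγ (a • z) v = a * F2 x hN hx γ hγ z v := by
  obtain ⟨hc1, ⟨M1, hM1⟩, hz01, hzN1, heq1⟩ := F2_spec x hN hx γ hγ (a • z)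
  obtain ⟨hc2, ⟨M2, hM2⟩, hz02, hzN2, heq2⟩ := F2_spec x hN hx γ hγ z
  apply fif_unique x hN hx γ (rsup hN γ) (rsup_lt_one hN hγ) (rsup_nonneg hN γ)
    (le_rsup hN γ) (qfun x γ (a • z)) (M1 + |a| * M2)
  · intro v _
    refine abs_sub_le_sum (hM1 v) ?_
    rw [abs_mul]
    exact mul_le_mul_of_nonneg_left (hM2 v) (abs_nonneg a)
  · exact heq1
  · intro n u hu
    rw [heq2 n u hu, qfun_smul]; ring

lemma F1_add (hN : 1 ≤ N) (hx : StrictMono x) (α β γ : Fin N → ℝ)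
    (hα : ∀ n, |α n| < 1) (hγ : ∀ n, |γ n| < 1) (y y' z z' : Fin (N + 1) → ℝ) :
    ∀ v ∈ Icc (x 0) (x (Fin.last N)),
      F1 x hN hx α β γ hα hγ (y + y') (z + z') v
        = F1 x hN hx α β γ hα hγ y z v + F1 x hN hx α β γ hα hγ y' z' v := by
  obtain ⟨hc1, ⟨M1, hM1⟩, h01, hN1, heq1⟩ := F1_spec x hN hx α β γ hα hγ (y + y') (z + z')
  obtain ⟨hc2, ⟨M2, hM2⟩, h02, hN2, heq2⟩ := F1_spec x hN hx α β γ hα hγ y z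
  obtain ⟨hc3, ⟨M3, hM3⟩, h03, hN3, heq3⟩ := F1_spec x hN hx α β γ hα hγ y' z'
  apply fif_unique x hN hx α (rsup hN α) (rsup_lt_one hN hα) (rsup_nonneg hN α)
    (le_rsup hN α)
    (fun n u => β n * F2 x hN hx γ hγ (z + z') u + pfun x α β (y + y') (z + z') n u)
    (M1 + (M2 + M3))
  · intro v _
    refine abs_sub_le_sum (hM1 v) ?_
    exact (abs_add_le _ _).trans (add_le_add (hM2 v) (hM3 v))
  · exact heq1
  · intro n u hu
    rw [F1_eq x hN hx α β γ hα hγ y z n u hu, F1_eq x hN hx α β γ hα hγ y' z' n u hu]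
    show _ = α n * (F1 x hN hx α β γ hα hγ y z u + F1 x hN hx α β γ hα hγ y' z' u)
      + (β n * F2 x hN hx γ hγ (z + z') u + pfun x α β (y + y') (z + z') n u)
    rw [F2_add x hN hx γ hγ z z' u hu, pfun_add]; ring

lemma F1_smul (hN : 1 ≤ N) (hx : StrictMono x) (α β γ : Fin N → ℝ)
    (hα : ∀ n, |α n| < 1) (hγ : ∀ n, |γ n| < 1) (a : ℝ) (y z : Fin (N + 1) → ℝ) :
    ∀ v ∈ Icc (x 0) (x (Fin.last N)),
      F1 x hN hx α β γ hα hγ (a • y) (a • z) v = a * F1 x hN hx α β γ hα hγ y z v := by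
  obtain ⟨hc1, ⟨M1, hM1⟩, h01, hN1, heq1⟩ := F1_spec x hN hx α β γ hα hγ (a • y) (a • z)
  obtain ⟨hc2, ⟨M2, hM2⟩, h02, hN2, heq2⟩ := F1_spec x hN hx α β γ hα hγ y z
  apply fif_unique x hN hx α (rsup hN α) (rsup_lt_one hN hα) (rsup_nonneg hN α)
    (le_rsup hN α)
    (fun n u => β n * F2 x hN hx γ hγ (a • z) u + pfun x α β (a • y) (a • z) n u)
    (M1 + |a| * M2)
  · intro v _
    refine abs_sub_le_sum (hM1 v) ?_
    rw [abs_mul]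
    exact mul_le_mul_of_nonneg_left (hM2 v) (abs_nonneg a)
  · exact heq1
  · intro n u hu
    rw [F1_eq x hN hx α β γ hα hγ y z n u hu]
    show _ = α n * (a * F1 x hN hx α β γ hα hγ y z u)
      + (β n * F2 x hN hx γ hγ (a • z) u + pfun x α β (a • y) (a • z) n u)
    rw [F2_smul x hN hx γ hγ a z u hu, pfun_smul]; ring

noncomputable def linSlope (A B : ℝ) : ℝ := (B - A) / (x (Fin.last N) - x 0)

lemma lin_slope (A B u : ℝ) :
    lin x A B u = linSlope x A B * u + (A - linSlope x A B * x 0) := by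
  unfold lin linSlope; ring

lemma affine_eq_lin (hN : 1 ≤ N) (hx : StrictMono x) {s b A B : ℝ}
    (h0 : s * x 0 + b = A) (h1 : s * x (Fin.last N) + b = B) :
    ∀ u, s * u + b = lin x A B u := by
  intro u
  have hd := dne x hN hx
  unfold lin
  rw [← h0, ← h1]
  field_simp
  ring

noncomputable def memF (hN : 1 ≤ N) (hx : StrictMono x) (α β γ : Fin N → ℝ)
    (hα : ∀ n, |α n| < 1) (hγ : ∀ n, |γ n| < 1) (y z : Fin (N + 1) → ℝ) : ℝ → ℝ × ℝ :=
  fun u => if u ∈ Icc (x 0) (x (Fin.last N)) then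
    (F1 x hN hx α β γ hα hγ y z u, F2 x hN hx γ hγ z u) else 0

noncomputable def G (hN : 1 ≤ N) (hx : StrictMono x) (α β γ : Fin N → ℝ)
    (hα : ∀ n, |α n| < 1) (hγ : ∀ n, |γ n| < 1) (y z : Fin (N + 1) → ℝ) : ℝ → ℝ :=
  fun u => if u ∈ Icc (x 0) (x (Fin.last N)) then F1 x hN hx α β γ hα hγ y z u else 0

lemma G_eq_fst (hN : 1 ≤ N) (hx : StrictMono x) (α β γ : Fin N → ℝ)
    (hα : ∀ n, |α n| < 1) (hγ : ∀ n, |γ n| < 1) (y z : Fin (N + 1) → ℝ) :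
    G x hN hx α β γ hα hγ y z = fun u => (memF x hN hx α β γ hα hγ y z u).1 := by
  funext u
  unfold G memF
  split_ifs <;> simp

noncomputable def tdata (α β γ : Fin N → ℝ) (y z : Fin (N + 1) → ℝ) :
    Fin N → (ℝ × ℝ) × (ℝ × ℝ) :=
  fun n =>
    ((linSlope x (y n.castSucc - α n * y 0 - β n * z 0)
        (y n.succ - α n * y (Fin.last N) - β n * z (Fin.last N)),
      (y n.castSucc - α n * y 0 - β n * z 0) -
        linSlope x (y n.castSucc - α n * y 0 - β n * z 0)
          (y n.succ - α n * y (Fin.last N) - β n * z (Fin.last N)) * x 0),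
     (linSlope x (z n.castSucc - γ n * z 0) (z n.succ - γ n * z (Fin.last N)),
      (z n.castSucc - γ n * z 0) -
        linSlope x (z n.castSucc - γ n * z 0) (z n.succ - γ n * z (Fin.last N)) * x 0))

lemma tdata_p (α β γ : Fin N → ℝ) (y z : Fin (N + 1) → ℝ) (n : Fin N) (u : ℝ) :
    (tdata x α β γ y z n).1.1 * u + (tdata x α β γ y z n).1.2 = pfun x α β y z n u := by
  unfold tdata pfun
  rw [lin_slope]

lemma tdata_q (α β γ : Fin N → ℝ) (y z : Fin (N + 1) → ℝ) (n : Fin N) (u : ℝ) :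
    (tdata x α β γ y z n).2.1 * u + (tdata x α β γ y z n).2.2 = qfun x γ z n u := by
  unfold tdata qfun
  rw [lin_slope]

lemma memF_mem (hN : 1 ≤ N) (hx : StrictMono x) (α β γ : Fin N → ℝ)
    (hα : ∀ n, |α n| < 1) (hγ : ∀ n, |γ n| < 1) (y z : Fin (N + 1) → ℝ) :
    memF x hN hx α β γ hα hγ y z ∈ S0set x α β γ := by
  obtain ⟨hc1, _, _, _, _⟩ := F1_spec x hN hx α β γ hα hγ y z
  obtain ⟨hc2, _, _, _, heq2⟩ := F2_spec x hN hx γ hγ z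
  refine ⟨?_, ?_, ⟨tdata x α β γ y z, ?_⟩⟩
  · refine ContinuousOn.congr ((hc1.prodMk hc2).continuousOn) ?_
    intro u hu
    unfold memF
    rw [if_pos hu]
  · intro u hu
    unfold memF
    rw [if_neg hu]
  · intro n u hu
    have hL := lmap_mem_I x hN hx n hu
    unfold memF
    rw [if_pos hL, if_pos hu]
    rw [Prod.mk.injEq]
    constructor
    · rw [F1_eq x hN hx α β γ hα hγ y z n u hu, tdata_p]
      ring
    · rw [heq2 n u hu, tdata_q]

lemma surj (hN : 1 ≤ N) (hx : StrictMono x) (α β γ : Fin N → ℝ)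
    (hα : ∀ n, |α n| < 1) (hγ : ∀ n, |γ n| < 1) {f : ℝ → ℝ × ℝ}
    (hf : f ∈ S0set x α β γ) (y z : Fin (N + 1) → ℝ)
    (hy : ∀ i, (f (x i)).1 = y i) (hz : ∀ i, (f (x i)).2 = z i) :
    ∀ u, (f u).1 = G x hN hx α β γ hα hγ y z u := by
  obtain ⟨hcont, hzero, t, hfix⟩ := hf
  obtain ⟨Mf, hMf⟩ := isCompact_Icc.exists_bound_of_continuousOn hcont
  have hq : ∀ n : Fin N, ∀ u : ℝ, (t n).2.1 * u + (t n).2.2 = qfun x γ z n u := by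
    intro n
    have e0 := hfix n (x 0) (memI0 x hN hx)
    rw [lmap_left x hN hx] at e0
    have e1 := hfix n (x (Fin.last N)) (memIN x hN hx)
    rw [lmap_right x hN hx] at e1
    have h0 := (Prod.ext_iff.1 e0).2
    have h1 := (Prod.ext_iff.1 e1).2
    simp only [] at h0 h1
    rw [hz n.castSucc, hz 0] at h0
    rw [hz n.succ, hz (Fin.last N)] at h1
    intro u
    unfold qfun
    apply affine_eq_lin x hN hx <;> linarith
  have hzI : ∀ v ∈ Icc (x 0) (x (Fin.last N)), (f v).2 = F2 x hN hx γ hγ z v := by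
    obtain ⟨hc2, ⟨M2, hM2⟩, hz02, hzN2, heq2⟩ := F2_spec x hN hx γ hγ z
    apply fif_unique x hN hx γ (rsup hN γ) (rsup_lt_one hN hγ) (rsup_nonneg hN γ)
      (le_rsup hN γ) (qfun x γ z) (Mf + M2)
    · intro v hv
      refine abs_sub_le_sum ?_ (hM2 v)
      have : |(f v).2| ≤ ‖f v‖ := by rw [← Real.norm_eq_abs]; exact norm_snd_le _
      exact this.trans (hMf v hv)
    · intro n u hu
      have e := hfix n u hu
      have h2 := (Prod.ext_iff.1 e).2
      simp only [] at h2
      rw [hq n u] at h2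
      exact h2
    · exact heq2
  have hp : ∀ n : Fin N, ∀ u : ℝ, (t n).1.1 * u + (t n).1.2 = pfun x α β y z n u := by
    intro n
    have e0 := hfix n (x 0) (memI0 x hN hx)
    rw [lmap_left x hN hx] at e0
    have e1 := hfix n (x (Fin.last N)) (memIN x hN hx)
    rw [lmap_right x hN hx] at e1
    have h0 := (Prod.ext_iff.1 e0).1
    have h1 := (Prod.ext_iff.1 e1).1
    simp only [] at h0 h1
    rw [hy n.castSucc, hy 0] at h0
    rw [hz 0] at h0
    rw [hy n.succ, hy (Fin.last N), hz (Fin.last N)] at h1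
    intro u
    unfold pfun
    apply affine_eq_lin x hN hx <;> linarith
  have hyI : ∀ v ∈ Icc (x 0) (x (Fin.last N)), (f v).1 = F1 x hN hx α β γ hα hγ y z v := by
    obtain ⟨hc1, ⟨M1, hM1⟩, h01, hN1, heq1⟩ := F1_spec x hN hx α β γ hα hγ y z
    apply fif_unique x hN hx α (rsup hN α) (rsup_lt_one hN hα) (rsup_nonneg hN α)
      (le_rsup hN α) (fun n u => β n * F2 x hN hx γ hγ z u + pfun x α β y z n u) (Mf + M1)
    · intro v hv
      refine abs_sub_le_sum ?_ (hM1 v)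
      have : |(f v).1| ≤ ‖f v‖ := by rw [← Real.norm_eq_abs]; exact norm_fst_le _
      exact this.trans (hMf v hv)
    · intro n u hu
      have e := hfix n u hu
      have h1 := (Prod.ext_iff.1 e).1
      simp only [] at h1
      rw [hp n u, hzI u hu] at h1
      rw [h1]; ring
    · exact F1_eq x hN hx α β γ hα hγ y z
  intro u
  by_cases hu : u ∈ Icc (x 0) (x (Fin.last N))
  · unfold G
    rw [if_pos hu]
    exact hyI u hu
  · unfold G
    rw [if_neg hu, hzero u hu]
    rfl

lemma F2_affine (hN : 1 ≤ N) (hx : StrictMono x) (γ : Fin N → ℝ)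
    (hγ : ∀ n, |γ n| < 1) (z : Fin (N + 1) → ℝ)
    (hzaff : ∀ i, z i = lin x (z 0) (z (Fin.last N)) (x i)) :
    ∀ v ∈ Icc (x 0) (x (Fin.last N)),
      F2 x hN hx γ hγ z v = lin x (z 0) (z (Fin.last N)) v := by
  obtain ⟨hc2, ⟨M2, hM2⟩, hz02, hzN2, heq2⟩ := F2_spec x hN hx γ hγ z
  obtain ⟨ML, hML⟩ := isCompact_Icc.exists_bound_of_continuousOn
    (continuous_lin x (z 0) (z (Fin.last N))).continuousOn
  apply fif_unique x hN hx γ (rsup hN γ) (rsup_lt_one hN hγ) (rsup_nonneg hN γ)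
    (le_rsup hN γ) (qfun x γ z) (M2 + ML)
  · intro v hv
    refine abs_sub_le_sum (hM2 v) ?_
    rw [← Real.norm_eq_abs]
    exact hML v hv
  · exact heq2
  · intro n u hu
    have hd := dne x hN hx
    have hpn := piece_ne x hx n
    unfold qfun
    rw [hzaff n.castSucc, hzaff n.succ]
    unfold lin LMap
    field_simp
    ring

lemma kernel (hN : 1 ≤ N) (hx : StrictMono x) (α β γ : Fin N → ℝ)
    (hα : ∀ n, |α n| < 1) (hγ : ∀ n, |γ n| < 1) (z : Fin (N + 1) → ℝ)
    (hzaff : ∀ i, z i = lin x (z 0) (z (Fin.last N)) (x i)) :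
    ∀ v ∈ Icc (x 0) (x (Fin.last N)), F1 x hN hx α β γ hα hγ 0 z v = 0 := by
  obtain ⟨hc1, ⟨M1, hM1⟩, h01, hN1, heq1⟩ := F1_spec x hN hx α β γ hα hγ 0 z
  apply fif_unique x hN hx α (rsup hN α) (rsup_lt_one hN hα) (rsup_nonneg hN α)
    (le_rsup hN α) (fun n u => β n * F2 x hN hx γ hγ z u + pfun x α β 0 z n u) (M1 + 0)
  · intro v hv
    simpa using hM1 v
  · exact heq1
  · intro n u hu
    have h2 := F2_affine x hN hx γ hγ z hzaff u hu
    have hpf : pfun x α β 0 z n u = -(β n * lin x (z 0) (z (Fin.last N)) u) := by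
      unfold pfun lin
      simp only [Pi.zero_apply]
      ring
    show (0 : ℝ) = α n * 0 + (β n * F2 x hN hx γ hγ z u + pfun x α β 0 z n u)
    rw [h2, hpf]; ring

lemma kernel_rev (hN : 1 ≤ N) (hx : StrictMono x) (α β γ : Fin N → ℝ)
    (hα : ∀ n, |α n| < 1) (hγ : ∀ n, |γ n| < 1) (hβ : ∀ n, β n ≠ 0)
    (y z : Fin (N + 1) → ℝ)
    (h : ∀ u ∈ Icc (x 0) (x (Fin.last N)), F1 x hN hx α β γ hα hγ y z u = 0) :
    (∀ i, y i = 0) ∧ ∀ i, z i = lin x (z 0) (z (Fin.last N)) (x i) := by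
  have hy : ∀ i, y i = 0 := by
    intro i
    rw [← F1_interp x hN hx α β γ hα hγ y z i]
    exact h (x i) (memIi x hx i)
  refine ⟨hy, ?_⟩
  set n0 : Fin N := ⟨0, hN⟩ with hn0
  have hF2 : ∀ u ∈ Icc (x 0) (x (Fin.last N)),
      F2 x hN hx γ hγ z u = lin x (z 0) (z (Fin.last N)) u := by
    intro u hu
    have h1 := F1_eq x hN hx α β γ hα hγ y z n0 u hu
    rw [h (LMap x n0 u) (lmap_mem_I x hN hx n0 hu), h u hu] at h1
    have hpf : pfun x α β y z n0 u = -(β n0 * lin x (z 0) (z (Fin.last N)) u) := by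
      unfold pfun lin
      rw [hy n0.castSucc, hy n0.succ, hy 0, hy (Fin.last N)]
      ring
    rw [hpf] at h1
    have h2 : β n0 * (F2 x hN hx γ hγ z u - lin x (z 0) (z (Fin.last N)) u) = 0 := by
      linarith [h1]
    rcases mul_eq_zero.1 h2 with h3 | h3
    · exact absurd h3 (hβ n0)
    · linarith [h3]
  intro i
  rw [← F2_interp x hN hx γ hγ z i]
  exact hF2 (x i) (memIi x hx i)

lemma G_add (hN : 1 ≤ N) (hx : StrictMono x) (α β γ : Fin N → ℝ)
    (hα : ∀ n, |α n| < 1) (hγ : ∀ n, |γ n| < 1) (y y' z z' : Fin (N + 1) → ℝ) :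
    G x hN hx α β γ hα hγ (y + y') (z + z')
      = G x hN hx α β γ hα hγ y z + G x hN hx α β γ hα hγ y' z' := by
  funext u
  unfold G
  by_cases hu : u ∈ Icc (x 0) (x (Fin.last N))
  · rw [Pi.add_apply, if_pos hu, if_pos hu, if_pos hu]
    exact F1_add x hN hx α β γ hα hγ y y' z z' u hu
  · rw [Pi.add_apply, if_neg hu, if_neg hu, if_neg hu]
    ring

lemma G_smul (hN : 1 ≤ N) (hx : StrictMono x) (α β γ : Fin N → ℝ)
    (hα : ∀ n, |α n| < 1) (hγ : ∀ n, |γ n| < 1) (a : ℝ) (y z : Fin (N + 1) → ℝ) :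
    G x hN hx α β γ hα hγ (a • y) (a • z) = a • G x hN hx α β γ hα hγ y z := by
  funext u
  unfold G
  by_cases hu : u ∈ Icc (x 0) (x (Fin.last N))
  · rw [Pi.smul_apply, if_pos hu, if_pos hu, smul_eq_mul]
    exact F1_smul x hN hx α β γ hα hγ a y z u hu
  · rw [Pi.smul_apply, if_neg hu, if_neg hu, smul_eq_mul]
    ring

lemma G_zero (hN : 1 ≤ N) (hx : StrictMono x) (α β γ : Fin N → ℝ)
    (hα : ∀ n, |α n| < 1) (hγ : ∀ n, |γ n| < 1) :
    G x hN hx α β γ hα hγ 0 0 = 0 := by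
  funext u
  unfold G
  by_cases hu : u ∈ Icc (x 0) (x (Fin.last N))
  · rw [if_pos hu]
    have := kernel x hN hx α β γ hα hγ 0 (fun i => by
      simp only [Pi.zero_apply]
      unfold lin; ring) u hu
    simpa using this
  · rw [if_neg hu]; rfl

lemma G_sum (hN : 1 ≤ N) (hx : StrictMono x) (α β γ : Fin N → ℝ)
    (hα : ∀ n, |α n| < 1) (hγ : ∀ n, |γ n| < 1) {ι : Type*} (s : Finset ι)
    (Y Z : ι → Fin (N + 1) → ℝ) :
    G x hN hx α β γ hα hγ (∑ j ∈ s, Y j) (∑ j ∈ s, Z j)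
      = ∑ j ∈ s, G x hN hx α β γ hα hγ (Y j) (Z j) := by
  induction s using Finset.cons_induction with
  | empty => simpa using G_zero x hN hx α β γ hα hγ
  | cons a s ha ih =>
      rw [Finset.sum_cons, Finset.sum_cons, Finset.sum_cons,
        G_add x hN hx α β γ hα hγ, ih]

end CH


/-- If `β_n ≠ 0` for every `n`, the space of CHFIFs `S₀¹` is a vector space of
dimension `2N`. -/
theorem stmt6 {N : ℕ} (hN : 1 ≤ N) (x : Fin (N + 1) → ℝ) (hx : StrictMono x)
    (α β γ : Fin N → ℝ) (hα : ∀ n, |α n| < 1) (hγ : ∀ n, |γ n| < 1)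
    (hβγ : ∀ n, |β n| + |γ n| < 1) (hβ : ∀ n, β n ≠ 0) :
    ((0 : ℝ → ℝ) ∈ S01set x α β γ) ∧
    (∀ g h : ℝ → ℝ, g ∈ S01set x α β γ → h ∈ S01set x α β γ →
      g + h ∈ S01set x α β γ) ∧
    (∀ (a : ℝ) (g : ℝ → ℝ), g ∈ S01set x α β γ → a • g ∈ S01set x α β γ) ∧
    (∃ b : Fin (2 * N) → (ℝ → ℝ),
      (∀ j, b j ∈ S01set x α β γ) ∧ LinearIndependent ℝ b ∧
      ∀ g ∈ S01set x α β γ, g ∈ Submodule.span ℝ (Set.range b)) := by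
  classical
  refine ⟨?_, ?_, ?_, ?_⟩
  · -- 0 ∈ S01set
    refine ⟨fun _ => 0, ⟨continuousOn_const, fun u _ => rfl, ⟨fun _ => 0, ?_⟩⟩, ?_⟩
    · intro n u hu
      simp [Prod.ext_iff]
    · funext u; rfl
  · -- closed under addition
    rintro g h ⟨f, ⟨hfc, hf0, tf, hft⟩, rfl⟩ ⟨f', ⟨hf'c, hf'0, tf', hf't⟩, rfl⟩
    refine ⟨fun u => f u + f' u, ⟨hfc.add hf'c, ?_, ⟨tf + tf', ?_⟩⟩, ?_⟩
    · intro u hu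
      show f u + f' u = 0
      rw [hf0 u hu, hf'0 u hu]; simp
    · intro n u hu
      show f (LMap x n u) + f' (LMap x n u) = _
      rw [hft n u hu, hf't n u hu]
      simp only [Pi.add_apply, Prod.mk_add_mk, Prod.mk.injEq, Prod.fst_add, Prod.snd_add]
      constructor <;> ring
    · funext u
      simp [Prod.fst_add]
  · -- closed under scalar multiplication
    rintro a g ⟨f, ⟨hfc, hf0, tf, hft⟩, rfl⟩
    refine ⟨fun u => a • f u, ⟨hfc.const_smul a, ?_, ⟨a • tf, ?_⟩⟩, ?_⟩
    · intro u hu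
      show a • f u = 0
      rw [hf0 u hu]; simp
    · intro n u hu
      show a • f (LMap x n u) = _
      rw [hft n u hu]
      simp only [Pi.smul_apply, Prod.smul_mk, Prod.mk.injEq, Prod.smul_fst, Prod.smul_snd,
        smul_eq_mul]
      constructor <;> ring
    · funext u
      simp [Prod.smul_fst]
  · -- the basis
    set dY : Fin (2 * N) → Fin (N + 1) → ℝ :=
      fun j => if h : (j : ℕ) < N + 1 then Pi.single ⟨(j : ℕ), h⟩ 1 else 0 with hdY
    set dZ : Fin (2 * N) → Fin (N + 1) → ℝ :=
      fun j => if h : (j : ℕ) < N + 1 then 0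
        else Pi.single ⟨(j : ℕ) - N, by have := j.isLt; omega⟩ 1 with hdZ
    have hdY0 : ∀ (j : Fin (2 * N)) (i : Fin (N + 1)), (j : ℕ) ≠ (i : ℕ) → dY j i = 0 := by
      intro j i hne
      simp only [hdY]
      split_ifs with hj
      · refine Pi.single_eq_of_ne ?_ 1
        intro hcon
        exact hne (congrArg Fin.val hcon).symm
      · rfl
    have hdYone : ∀ (j : Fin (2 * N)) (i : Fin (N + 1)), (j : ℕ) = (i : ℕ) → dY j i = 1 := by
      intro j i hji
      simp only [hdY]
      rw [dif_pos (show (j : ℕ) < N + 1 by have := i.isLt; omega)]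
      have h2 : (⟨(j : ℕ), show (j : ℕ) < N + 1 by have := i.isLt; omega⟩ : Fin (N + 1)) = i :=
        Fin.ext hji
      rw [h2]
      exact Pi.single_eq_same i 1
    have hdZzero : ∀ (j : Fin (2 * N)) (i : Fin (N + 1)),
        ((j : ℕ) < N + 1 ∨ (j : ℕ) - N ≠ (i : ℕ)) → dZ j i = 0 := by
      intro j i hcase
      simp only [hdZ]
      split_ifs with hj
      · rfl
      · rcases hcase with h | h
        · exact absurd h hj
        · refine Pi.single_eq_of_ne ?_ 1
          intro hcon
          exact h (congrArg Fin.val hcon).symm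
    have hdZone : ∀ (j : Fin (2 * N)) (i : Fin (N + 1)), ¬((j : ℕ) < N + 1) →
        (j : ℕ) - N = (i : ℕ) → dZ j i = 1 := by
      intro j i hj hji
      simp only [hdZ]
      rw [dif_neg hj]
      have h2 : (⟨(j : ℕ) - N, by have := j.isLt; omega⟩ : Fin (N + 1)) = i := Fin.ext hji
      rw [h2]
      exact Pi.single_eq_same i 1
    refine ⟨fun j => CH.G x hN hx α β γ hα hγ (dY j) (dZ j), fun j =>
      ⟨CH.memF x hN hx α β γ hα hγ (dY j) (dZ j),
        CH.memF_mem x hN hx α β γ hα hγ (dY j) (dZ j),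
        CH.G_eq_fst x hN hx α β γ hα hγ (dY j) (dZ j)⟩, ?_, ?_⟩
    · -- linear independence
      rw [Fintype.linearIndependent_iff]
      intro c hc
      have hsum : CH.G x hN hx α β γ hα hγ (∑ j, c j • dY j) (∑ j, c j • dZ j)
          = ∑ j, c j • CH.G x hN hx α β γ hα hγ (dY j) (dZ j) := by
        rw [CH.G_sum x hN hx α β γ hα hγ]
        exact Finset.sum_congr rfl fun j _ => CH.G_smul x hN hx α β γ hα hγ (c j) _ _
      have hGYZ : CH.G x hN hx α β γ hα hγ (∑ j, c j • dY j) (∑ j, c j • dZ j) = 0 := by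
        rw [hsum]; exact hc
      have hF1 : ∀ u ∈ Icc (x 0) (x (Fin.last N)),
          CH.F1 x hN hx α β γ hα hγ (∑ j, c j • dY j) (∑ j, c j • dZ j) u = 0 := by
        intro u hu
        have h := congrFun hGYZ u
        unfold CH.G at h
        rw [if_pos hu] at h
        exact h
      obtain ⟨hY0, hZaff⟩ := CH.kernel_rev x hN hx α β γ hα hγ hβ _ _ hF1
      have hZat : ∀ i : Fin (N + 1), ((i : ℕ) = 0 ∨ (i : ℕ) = N) →
          (∑ j, c j • dZ j) i = 0 := by
        intro i hi
        rw [Finset.sum_apply]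
        apply Finset.sum_eq_zero
        intro j _
        rw [Pi.smul_apply, smul_eq_mul]
        rcases Nat.lt_or_ge (j : ℕ) (N + 1) with hj | hj
        · rw [hdZzero j i (Or.inl hj)]; ring
        · rw [hdZzero j i (Or.inr (by have := j.isLt; omega))]; ring
      have hZ : ∀ i, (∑ j, c j • dZ j) i = 0 := by
        intro i
        rw [hZaff i, hZat 0 (Or.inl (by simp)), hZat (Fin.last N) (Or.inr (by simp))]
        unfold CH.lin; ring
      intro j
      by_cases hj : (j : ℕ) < N + 1
      · have h1 : (∑ k, c k • dY k) ⟨(j : ℕ), hj⟩ = c j := by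
          rw [Finset.sum_apply]
          rw [Finset.sum_eq_single j]
          · rw [Pi.smul_apply, smul_eq_mul, hdYone j ⟨(j : ℕ), hj⟩ rfl]; ring
          · intro k _ hkj
            rw [Pi.smul_apply, smul_eq_mul,
              hdY0 k ⟨(j : ℕ), hj⟩ (fun hv => hkj (Fin.ext hv))]
            ring
          · intro hj'; exact absurd (Finset.mem_univ j) hj'
        rw [← h1]; exact hY0 _
      · have hjN : (j : ℕ) - N < N + 1 := by have := j.isLt; omega
        have h1 : (∑ k, c k • dZ k) ⟨(j : ℕ) - N, hjN⟩ = c j := by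
          rw [Finset.sum_apply, Finset.sum_eq_single j]
          · rw [Pi.smul_apply, smul_eq_mul, hdZone j ⟨(j : ℕ) - N, hjN⟩ hj rfl]; ring
          · intro k _ hkj
            rcases Nat.lt_or_ge (k : ℕ) (N + 1) with hk | hk
            · rw [Pi.smul_apply, smul_eq_mul, hdZzero k _ (Or.inl hk)]; ring
            · rw [Pi.smul_apply, smul_eq_mul, hdZzero k _ (Or.inr (by
                show ¬((k : ℕ) - N = (j : ℕ) - N)
                intro hv
                apply hkj
                apply Fin.ext
                omega))]
              ring
          · intro hj'; exact absurd (Finset.mem_univ j) hj'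
        rw [← h1]; exact hZ _
    · -- spanning
      rintro g ⟨f, hfS, rfl⟩
      set y : Fin (N + 1) → ℝ := fun i => (f (x i)).1 with hy
      set z : Fin (N + 1) → ℝ := fun i => (f (x i)).2 with hz
      have hgG : (fun u => (f u).1) = CH.G x hN hx α β γ hα hγ y z :=
        funext (CH.surj x hN hx α β γ hα hγ hfS y z (fun i => rfl) (fun i => rfl))
      set zaff : Fin (N + 1) → ℝ := fun i => CH.lin x (z 0) (z (Fin.last N)) (x i) with hzaffd
      set z' : Fin (N + 1) → ℝ := fun i => z i - zaff i with hz'd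
      have hza0 : zaff 0 = z 0 := CH.lin_x0 x _ _
      have hzaN : zaff (Fin.last N) = z (Fin.last N) := CH.lin_xN x hN hx _ _
      have hysplit : y + 0 = y := by funext i; simp
      have hzsplit : z' + zaff = z := by funext i; simp [hz'd]
      have hGsplit : CH.G x hN hx α β γ hα hγ y z
          = CH.G x hN hx α β γ hα hγ y z' + CH.G x hN hx α β γ hα hγ 0 zaff := by
        rw [← CH.G_add x hN hx α β γ hα hγ y 0 z' zaff, hysplit, hzsplit]
      have hker : CH.G x hN hx α β γ hα hγ 0 zaff = 0 := by
        funext u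
        unfold CH.G
        split_ifs with hu
        · refine CH.kernel x hN hx α β γ hα hγ zaff ?_ u hu
          intro i
          rw [hza0, hzaN]
        · rfl
      set co : Fin (2 * N) → ℝ := fun j =>
        if hj : (j : ℕ) < N + 1 then y ⟨(j : ℕ), hj⟩
        else z' ⟨(j : ℕ) - N, by have := j.isLt; omega⟩ with hco
      have hyd : y = ∑ j, co j • dY j := by
        funext i
        have hilt : (i : ℕ) < 2 * N := by have := i.isLt; omega
        have hs : (∑ j, co j • dY j) i = co ⟨(i : ℕ), hilt⟩ • dY ⟨(i : ℕ), hilt⟩ i := by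
          rw [Finset.sum_apply]
          apply Finset.sum_eq_single
          · intro k _ hk
            rw [Pi.smul_apply, smul_eq_mul, hdY0 k i (fun hv => hk (Fin.ext hv))]
            ring
          · intro h; exact absurd (Finset.mem_univ _) h
        rw [hs, smul_eq_mul, hdYone _ i rfl, mul_one]
        simp only [hco]
        rw [dif_pos (show (i : ℕ) < N + 1 from i.isLt), Fin.eta]
      have hzd : z' = ∑ j, co j • dZ j := by
        funext i
        by_cases hi0 : (i : ℕ) = 0
        · have hiz : i = 0 := Fin.ext hi0
          have hL : z' i = 0 := by
            simp only [hz'd]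
            rw [hiz, hza0]; ring
          have hR : (∑ j, co j • dZ j) i = 0 := by
            rw [Finset.sum_apply]
            apply Finset.sum_eq_zero
            intro j _
            rw [Pi.smul_apply, smul_eq_mul]
            rcases Nat.lt_or_ge (j : ℕ) (N + 1) with hj | hj
            · rw [hdZzero j i (Or.inl hj)]; ring
            · rw [hdZzero j i (Or.inr (by have := j.isLt; omega))]; ring
          rw [hL, hR]
        · by_cases hiN : (i : ℕ) = N
          · have hiz : i = Fin.last N := Fin.ext (by simpa using hiN)
            have hL : z' i = 0 := by
              simp only [hz'd]
              rw [hiz, hzaN]; ring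
            have hR : (∑ j, co j • dZ j) i = 0 := by
              rw [Finset.sum_apply]
              apply Finset.sum_eq_zero
              intro j _
              rw [Pi.smul_apply, smul_eq_mul]
              rcases Nat.lt_or_ge (j : ℕ) (N + 1) with hj | hj
              · rw [hdZzero j i (Or.inl hj)]; ring
              · rw [hdZzero j i (Or.inr (by have := j.isLt; omega))]; ring
            rw [hL, hR]
          · have hilt : N + (i : ℕ) < 2 * N := by have := i.isLt; omega
            have hnlt : ¬((((⟨N + (i : ℕ), hilt⟩ : Fin (2 * N)) : ℕ)) < N + 1) := by
              show ¬(N + (i : ℕ) < N + 1); omega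
            have hs : (∑ j, co j • dZ j) i
                = co ⟨N + (i : ℕ), hilt⟩ • dZ ⟨N + (i : ℕ), hilt⟩ i := by
              rw [Finset.sum_apply]
              apply Finset.sum_eq_single
              · intro k _ hk
                rcases Nat.lt_or_ge (k : ℕ) (N + 1) with hkl | hkl
                · rw [Pi.smul_apply, smul_eq_mul, hdZzero k i (Or.inl hkl)]; ring
                · rw [Pi.smul_apply, smul_eq_mul, hdZzero k i (Or.inr (by
                    intro hv
                    apply hk
                    apply Fin.ext
                    show (k : ℕ) = N + (i : ℕ)
                    omega))]
                  ring
              · intro h; exact absurd (Finset.mem_univ _) h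
            rw [hs, smul_eq_mul, hdZone _ i hnlt (by show N + (i : ℕ) - N = (i : ℕ); omega),
              mul_one]
            simp only [hco]
            rw [dif_neg hnlt]
            congr 1
            apply Fin.ext
            show (i : ℕ) = N + (i : ℕ) - N
            omega
      have hfin : (fun u => (f u).1)
          = ∑ j, co j • CH.G x hN hx α β γ hα hγ (dY j) (dZ j) := by
        rw [hgG, hGsplit, hker, add_zero, hyd, hzd,
          CH.G_sum x hN hx α β γ hα hγ]
        exact Finset.sum_congr rfl fun j _ => CH.G_smul x hN hx α β γ hα hγ (co j) _ _
      rw [hfin]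
      apply Submodule.sum_mem
      intro j _
      exact Submodule.smul_mem _ _ (Submodule.subset_span ⟨j, rfl⟩)
end
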